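/- arXiv:2209.14588 — 3 statements merged into one kernel-verified Lean document; each statement's English description precedes it below -/
import Mathlib

section
/- (Lemma 3.6, case (6,12).) For all nonnegative integers r and s, there exists a solution to HWP*(12; 6^r, 12^s) if and only if r + s = 11. -/
set_option maxRecDepth 20000
set_option maxHeartbeats 2000000


/-- A solution to the directed Hamilton–Waterloo problem HWP*(v; m^r, n^s):
a family of `r + s` permutations of `Fin v`, the first `r` of which are
fixed-point-free with all cycles of length `m` (i.e. every point has minimal
period `m`), the last `s` fixed-point-free with all cycles of length `n`,
such that for every ordered pair of distinct vertices `(x, y)` there is exactly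
one index `i` with `σ i x = y`. -/
def HWPStarSolution (v m n r s : ℕ) : Prop :=
  ∃ σ : Fin (r + s) → Equiv.Perm (Fin v),
    (∀ i : Fin (r + s), (i : ℕ) < r → ∀ x : Fin v, Function.minimalPeriod ⇑(σ i) x = m) ∧
    (∀ i : Fin (r + s), r ≤ (i : ℕ) → ∀ x : Fin v, Function.minimalPeriod ⇑(σ i) x = n) ∧
    (∀ x y : Fin v, x ≠ y → ∃! i : Fin (r + s), σ i x = y)

def mkPerm (f g : Fin 12 → Fin 12) (h1 : ∀ x, g (f x) = x := by decide)
    (h2 : ∀ x, f (g x) = x := by decide) : Equiv.Perm (Fin 12) := ⟨f, g, h1, h2⟩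

/-- all cycles of `p` have length exactly `n` (decidable version). -/
def PType (p : Equiv.Perm (Fin 12)) (n : ℕ) : Prop :=
  ∀ x, (⇑p)^[n] x = x ∧ ∀ k, k < n → 0 < k → (⇑p)^[k] x ≠ x

instance (p : Equiv.Perm (Fin 12)) (n : ℕ) : Decidable (PType p n) := by
  unfold PType; infer_instance

lemma ptype_minimalPeriod {p : Equiv.Perm (Fin 12)} {n : ℕ} (hn : 0 < n)
    (h : PType p n) (x : Fin 12) : Function.minimalPeriod ⇑p x = n := by
  obtain ⟨h1, h2⟩ := h x
  have hper : Function.IsPeriodicPt ⇑p n x := h1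
  have hd := hper.minimalPeriod_dvd
  have hpos : 0 < Function.minimalPeriod ⇑p x := hper.minimalPeriod_pos hn
  have hle : Function.minimalPeriod ⇑p x ≤ n := Nat.le_of_dvd hn hd
  rcases lt_or_eq_of_le hle with hlt | he
  · exact absurd (Function.isPeriodicPt_minimalPeriod ⇑p x)
      (h2 _ hlt hpos)
  · exact he

lemma build {r s : ℕ} (h : r + s = 11) (σ : Fin 11 → Equiv.Perm (Fin 12))
    (h6 : ∀ i : Fin 11, (i : ℕ) < r → PType (σ i) 6)
    (h12 : ∀ i : Fin 11, r ≤ (i : ℕ) → PType (σ i) 12)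
    (hcov : ∀ x y : Fin 12, x ≠ y → ∃ i : Fin 11, σ i x = y ∧ ∀ j : Fin 11, σ j x = y → j = i) :
    HWPStarSolution 12 6 12 r s := by
  refine ⟨fun i => σ (Fin.cast h i), ?_, ?_, ?_⟩
  · intro i hi x
    exact ptype_minimalPeriod (by norm_num) (h6 (Fin.cast h i) hi) x
  · intro i hi x
    exact ptype_minimalPeriod (by norm_num) (h12 (Fin.cast h i) hi) x
  · intro x y hxy
    obtain ⟨i, hi, hu⟩ := hcov x y hxy
    refine ⟨Fin.cast h.symm i, by simpa using hi, fun j hj => ?_⟩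
    have := hu (Fin.cast h j) hj
    apply Fin.ext
    simpa using congrArg Fin.val this

lemma forward {r s : ℕ} (h : HWPStarSolution 12 6 12 r s) : r + s = 11 := by
  obtain ⟨σ, h6, h12, hcov⟩ := h
  have hfpf : ∀ (i : Fin (r + s)) (x : Fin 12), σ i x ≠ x := by
    intro i x hfix
    have h1 : Function.IsPeriodicPt ⇑(σ i) 1 x := by
      simpa [Function.IsPeriodicPt, Function.IsFixedPt] using hfix
    have hdvd := h1.minimalPeriod_dvd
    rcases lt_or_ge (i : ℕ) r with hi | hi
    · rw [h6 i hi x] at hdvd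
      exact absurd (Nat.le_of_dvd one_pos hdvd) (by norm_num)
    · rw [h12 i hi x] at hdvd
      exact absurd (Nat.le_of_dvd one_pos hdvd) (by norm_num)
  let e : Fin (r + s) × Fin 12 → {p : Fin 12 × Fin 12 // p.1 ≠ p.2} :=
    fun ix => ⟨(ix.2, σ ix.1 ix.2), fun hc => hfpf ix.1 ix.2 hc.symm⟩
  have hbij : Function.Bijective e := by
    constructor
    · rintro ⟨i, x⟩ ⟨j, y⟩ hxy
      have hp : (x, σ i x) = (y, σ j y) := congrArg Subtype.val hxy
      have hx : x = y := congrArg Prod.fst hp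
      subst hx
      have hs : σ i x = σ j x := congrArg Prod.snd hp
      obtain ⟨k, -, hu⟩ := hcov x (σ i x) (Ne.symm (hfpf i x))
      have hik := hu i rfl
      have hjk := hu j hs.symm
      rw [hik, hjk]
    · rintro ⟨⟨x, y⟩, hxy⟩
      obtain ⟨i, hi, -⟩ := hcov x y hxy
      exact ⟨(i, x), Subtype.ext (by simp [e, hi])⟩
  have hcard := Fintype.card_congr (Equiv.ofBijective e hbij)
  rw [Fintype.card_prod, Fintype.card_fin, Fintype.card_fin] at hcard
  have h132 : Fintype.card {p : Fin 12 × Fin 12 // p.1 ≠ p.2} = 132 := by decide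
  rw [h132] at hcard
  omega

def q0 : Equiv.Perm (Fin 12) := mkPerm ![10, 0, 11, 8, 5, 9, 4, 1, 7, 3, 2, 6] ![1, 7, 10, 9, 6, 4, 11, 8, 3, 5, 0, 2]
def q1 : Equiv.Perm (Fin 12) := mkPerm ![1, 3, 9, 11, 8, 6, 7, 4, 2, 10, 0, 5] ![10, 0, 8, 1, 7, 11, 5, 6, 4, 2, 9, 3]
def q2 : Equiv.Perm (Fin 12) := mkPerm ![7, 11, 0, 5, 1, 4, 3, 8, 10, 2, 6, 9] ![2, 4, 9, 6, 5, 3, 10, 0, 7, 11, 8, 1]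
def q3 : Equiv.Perm (Fin 12) := mkPerm ![6, 4, 10, 9, 2, 1, 8, 0, 5, 11, 3, 7] ![7, 5, 4, 10, 1, 8, 0, 11, 6, 3, 2, 9]
def q4 : Equiv.Perm (Fin 12) := mkPerm ![3, 7, 4, 2, 10, 0, 11, 6, 9, 5, 1, 8] ![5, 10, 3, 0, 2, 9, 7, 1, 11, 8, 4, 6]
def q5 : Equiv.Perm (Fin 12) := mkPerm ![8, 9, 7, 10, 0, 3, 2, 5, 6, 4, 11, 1] ![4, 11, 6, 5, 9, 7, 8, 2, 0, 1, 3, 10]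
def q6 : Equiv.Perm (Fin 12) := mkPerm ![2, 5, 6, 4, 9, 11, 10, 3, 1, 8, 7, 0] ![11, 8, 0, 7, 3, 1, 2, 10, 9, 4, 6, 5]
def q7 : Equiv.Perm (Fin 12) := mkPerm ![5, 8, 3, 6, 11, 7, 9, 10, 0, 1, 4, 2] ![8, 9, 11, 2, 10, 0, 3, 5, 1, 6, 7, 4]
def q8 : Equiv.Perm (Fin 12) := mkPerm ![4, 2, 5, 7, 6, 10, 1, 9, 11, 0, 8, 3] ![9, 6, 1, 11, 0, 2, 4, 3, 10, 7, 5, 8]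
def q9 : Equiv.Perm (Fin 12) := mkPerm ![11, 10, 1, 0, 7, 8, 5, 2, 3, 6, 9, 4] ![3, 2, 7, 8, 11, 6, 9, 4, 5, 10, 1, 0]
def q10 : Equiv.Perm (Fin 12) := mkPerm ![9, 6, 8, 1, 3, 2, 0, 11, 4, 7, 5, 10] ![6, 3, 5, 4, 8, 10, 1, 9, 2, 0, 11, 7]
def q11 : Equiv.Perm (Fin 12) := mkPerm ![11, 10, 5, 1, 2, 9, 3, 4, 7, 8, 0, 6] ![10, 3, 4, 6, 7, 2, 11, 8, 9, 5, 1, 0]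
def q12 : Equiv.Perm (Fin 12) := mkPerm ![2, 0, 7, 9, 11, 8, 5, 10, 3, 4, 6, 1] ![1, 11, 0, 8, 9, 6, 10, 2, 5, 3, 7, 4]
def q13 : Equiv.Perm (Fin 12) := mkPerm ![3, 9, 4, 8, 5, 6, 7, 0, 11, 2, 1, 10] ![7, 10, 9, 0, 2, 4, 5, 6, 3, 1, 11, 8]
def q14 : Equiv.Perm (Fin 12) := mkPerm ![10, 7, 11, 6, 1, 0, 8, 9, 4, 5, 2, 3] ![5, 4, 10, 11, 8, 9, 3, 1, 6, 7, 0, 2]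
def q15 : Equiv.Perm (Fin 12) := mkPerm ![8, 6, 3, 11, 7, 1, 4, 2, 10, 0, 5, 9] ![9, 5, 7, 2, 6, 10, 1, 4, 0, 11, 8, 3]
def q16 : Equiv.Perm (Fin 12) := mkPerm ![5, 8, 9, 7, 3, 11, 1, 6, 0, 10, 4, 2] ![8, 6, 11, 4, 10, 0, 7, 3, 1, 2, 9, 5]
def q17 : Equiv.Perm (Fin 12) := mkPerm ![4, 2, 0, 5, 6, 7, 10, 11, 1, 3, 9, 8] ![2, 8, 1, 9, 0, 3, 4, 5, 11, 10, 6, 7]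
def q18 : Equiv.Perm (Fin 12) := mkPerm ![9, 3, 1, 0, 10, 4, 11, 5, 2, 6, 8, 7] ![3, 2, 8, 1, 5, 7, 9, 11, 10, 0, 4, 6]
def q19 : Equiv.Perm (Fin 12) := mkPerm ![1, 11, 6, 2, 9, 10, 0, 8, 5, 7, 3, 4] ![6, 0, 3, 10, 11, 8, 2, 9, 7, 4, 5, 1]
def q20 : Equiv.Perm (Fin 12) := mkPerm ![7, 4, 8, 10, 0, 2, 9, 3, 6, 1, 11, 5] ![4, 9, 5, 7, 1, 11, 8, 0, 2, 6, 3, 10]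
def q21 : Equiv.Perm (Fin 12) := mkPerm ![6, 5, 10, 4, 8, 3, 2, 1, 9, 11, 7, 0] ![11, 7, 6, 5, 3, 1, 0, 10, 4, 8, 2, 9]
def q22 : Equiv.Perm (Fin 12) := mkPerm ![9, 0, 1, 8, 11, 10, 4, 6, 2, 3, 7, 5] ![1, 2, 8, 9, 6, 11, 7, 10, 3, 0, 5, 4]
def q23 : Equiv.Perm (Fin 12) := mkPerm ![1, 7, 3, 10, 0, 2, 9, 8, 11, 5, 6, 4] ![4, 0, 5, 2, 11, 9, 10, 1, 7, 6, 3, 8]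
def q24 : Equiv.Perm (Fin 12) := mkPerm ![10, 9, 6, 11, 5, 1, 8, 3, 0, 7, 4, 2] ![8, 5, 11, 7, 10, 4, 2, 9, 6, 1, 0, 3]
def q25 : Equiv.Perm (Fin 12) := mkPerm ![7, 8, 0, 5, 1, 9, 3, 11, 10, 4, 2, 6] ![2, 4, 10, 6, 9, 3, 11, 0, 1, 5, 8, 7]
def q26 : Equiv.Perm (Fin 12) := mkPerm ![8, 2, 5, 7, 6, 4, 0, 9, 3, 10, 11, 1] ![6, 11, 1, 8, 5, 2, 4, 3, 0, 7, 9, 10]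
def q27 : Equiv.Perm (Fin 12) := mkPerm ![3, 4, 9, 1, 10, 11, 5, 2, 6, 0, 8, 7] ![9, 3, 7, 0, 1, 6, 8, 11, 10, 2, 4, 5]
def q28 : Equiv.Perm (Fin 12) := mkPerm ![2, 11, 4, 0, 9, 3, 1, 10, 7, 6, 5, 8] ![3, 6, 0, 5, 2, 10, 9, 8, 11, 4, 7, 1]
def q29 : Equiv.Perm (Fin 12) := mkPerm ![11, 5, 7, 6, 8, 0, 10, 4, 1, 2, 9, 3] ![5, 8, 9, 11, 7, 1, 3, 2, 4, 10, 6, 0]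
def q30 : Equiv.Perm (Fin 12) := mkPerm ![5, 10, 8, 9, 7, 6, 2, 1, 4, 11, 3, 0] ![11, 7, 6, 10, 8, 0, 5, 4, 2, 3, 1, 9]
def q31 : Equiv.Perm (Fin 12) := mkPerm ![6, 3, 11, 4, 2, 8, 7, 5, 9, 1, 0, 10] ![10, 9, 4, 1, 3, 7, 0, 6, 5, 8, 11, 2]
def q32 : Equiv.Perm (Fin 12) := mkPerm ![4, 6, 10, 2, 3, 7, 11, 0, 5, 8, 1, 9] ![7, 10, 3, 4, 0, 8, 1, 5, 9, 11, 2, 6]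
def q33 : Equiv.Perm (Fin 12) := mkPerm ![4, 5, 1, 2, 7, 10, 8, 9, 0, 6, 11, 3] ![8, 2, 3, 11, 0, 1, 9, 4, 6, 7, 5, 10]
def q34 : Equiv.Perm (Fin 12) := mkPerm ![10, 9, 8, 11, 3, 0, 1, 2, 5, 4, 7, 6] ![5, 6, 7, 4, 9, 8, 11, 10, 2, 1, 0, 3]
def q35 : Equiv.Perm (Fin 12) := mkPerm ![7, 10, 6, 0, 9, 2, 4, 1, 3, 11, 8, 5] ![3, 7, 5, 8, 6, 11, 2, 0, 10, 4, 1, 9]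
def q36 : Equiv.Perm (Fin 12) := mkPerm ![8, 3, 4, 7, 5, 1, 9, 6, 11, 10, 0, 2] ![10, 5, 11, 1, 2, 4, 7, 3, 0, 6, 9, 8]
def q37 : Equiv.Perm (Fin 12) := mkPerm ![6, 7, 9, 5, 1, 11, 10, 3, 2, 0, 4, 8] ![9, 4, 8, 7, 10, 3, 0, 1, 11, 2, 6, 5]
def q38 : Equiv.Perm (Fin 12) := mkPerm ![2, 6, 5, 4, 11, 3, 0, 8, 10, 7, 1, 9] ![6, 10, 0, 5, 3, 2, 1, 9, 7, 11, 8, 4]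
def q39 : Equiv.Perm (Fin 12) := mkPerm ![5, 11, 10, 8, 2, 7, 3, 4, 9, 1, 6, 0] ![11, 9, 4, 6, 7, 0, 10, 5, 3, 8, 2, 1]
def q40 : Equiv.Perm (Fin 12) := mkPerm ![1, 4, 0, 10, 8, 9, 11, 5, 6, 3, 2, 7] ![2, 0, 10, 9, 1, 7, 8, 11, 4, 5, 3, 6]
def q41 : Equiv.Perm (Fin 12) := mkPerm ![9, 0, 7, 1, 6, 8, 2, 11, 4, 5, 3, 10] ![1, 3, 6, 10, 8, 9, 4, 2, 5, 0, 11, 7]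
def q42 : Equiv.Perm (Fin 12) := mkPerm ![3, 2, 11, 9, 10, 6, 7, 0, 1, 8, 5, 4] ![7, 8, 1, 0, 11, 10, 5, 6, 9, 3, 4, 2]
def q43 : Equiv.Perm (Fin 12) := mkPerm ![11, 8, 3, 6, 0, 4, 5, 10, 7, 2, 9, 1] ![4, 11, 9, 2, 5, 6, 3, 8, 1, 10, 7, 0]
def q44 : Equiv.Perm (Fin 12) := mkPerm ![2, 10, 8, 6, 9, 3, 4, 5, 11, 7, 0, 1] ![10, 11, 0, 5, 6, 7, 3, 9, 2, 4, 1, 8]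
def q45 : Equiv.Perm (Fin 12) := mkPerm ![9, 2, 6, 1, 3, 4, 5, 10, 7, 8, 11, 0] ![11, 3, 1, 4, 5, 6, 2, 8, 9, 0, 7, 10]
def q46 : Equiv.Perm (Fin 12) := mkPerm ![10, 7, 5, 8, 1, 9, 0, 11, 4, 6, 2, 3] ![6, 4, 10, 11, 8, 2, 9, 1, 3, 5, 0, 7]
def q47 : Equiv.Perm (Fin 12) := mkPerm ![8, 4, 1, 7, 6, 2, 11, 0, 9, 10, 3, 5] ![7, 2, 5, 10, 1, 11, 4, 3, 0, 8, 9, 6]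
def q48 : Equiv.Perm (Fin 12) := mkPerm ![1, 5, 9, 0, 8, 11, 10, 6, 2, 3, 4, 7] ![3, 0, 8, 9, 10, 1, 7, 11, 4, 2, 6, 5]
def q49 : Equiv.Perm (Fin 12) := mkPerm ![7, 11, 3, 9, 10, 6, 8, 4, 1, 0, 5, 2] ![9, 8, 11, 2, 7, 10, 5, 0, 6, 3, 4, 1]
def q50 : Equiv.Perm (Fin 12) := mkPerm ![11, 8, 4, 10, 0, 1, 7, 2, 3, 5, 6, 9] ![4, 5, 7, 8, 2, 9, 10, 6, 1, 11, 3, 0]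
def q51 : Equiv.Perm (Fin 12) := mkPerm ![5, 9, 0, 4, 2, 8, 3, 1, 10, 11, 7, 6] ![2, 7, 4, 6, 3, 0, 11, 10, 5, 1, 8, 9]
def q52 : Equiv.Perm (Fin 12) := mkPerm ![6, 3, 7, 2, 11, 0, 1, 9, 5, 4, 8, 10] ![5, 6, 3, 1, 9, 8, 0, 2, 10, 7, 11, 4]
def q53 : Equiv.Perm (Fin 12) := mkPerm ![4, 0, 10, 11, 5, 7, 9, 3, 6, 2, 1, 8] ![1, 10, 9, 7, 0, 4, 8, 5, 11, 6, 2, 3]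
def q54 : Equiv.Perm (Fin 12) := mkPerm ![3, 6, 11, 5, 7, 10, 2, 8, 0, 1, 9, 4] ![8, 9, 6, 0, 11, 3, 1, 4, 7, 10, 5, 2]
def q55 : Equiv.Perm (Fin 12) := mkPerm ![11, 5, 9, 2, 10, 3, 0, 4, 1, 8, 6, 7] ![6, 8, 3, 5, 7, 1, 10, 11, 9, 2, 4, 0]
def q56 : Equiv.Perm (Fin 12) := mkPerm ![9, 6, 0, 8, 7, 11, 3, 10, 5, 4, 2, 1] ![2, 11, 10, 6, 9, 8, 1, 4, 3, 0, 7, 5]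
def q57 : Equiv.Perm (Fin 12) := mkPerm ![8, 3, 1, 11, 0, 2, 5, 9, 7, 10, 4, 6] ![4, 2, 5, 1, 10, 6, 11, 8, 0, 7, 9, 3]
def q58 : Equiv.Perm (Fin 12) := mkPerm ![5, 0, 8, 9, 11, 4, 7, 3, 6, 2, 1, 10] ![1, 10, 9, 7, 5, 0, 8, 6, 2, 3, 11, 4]
def q59 : Equiv.Perm (Fin 12) := mkPerm ![1, 8, 3, 6, 5, 7, 10, 0, 4, 11, 9, 2] ![7, 0, 11, 2, 8, 4, 3, 5, 1, 10, 6, 9]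
def q60 : Equiv.Perm (Fin 12) := mkPerm ![3, 4, 5, 7, 6, 10, 8, 2, 0, 1, 11, 9] ![8, 9, 7, 0, 1, 2, 4, 3, 6, 11, 5, 10]
def q61 : Equiv.Perm (Fin 12) := mkPerm ![10, 2, 7, 4, 1, 0, 11, 5, 9, 6, 8, 3] ![5, 4, 1, 11, 3, 7, 9, 2, 10, 8, 0, 6]
def q62 : Equiv.Perm (Fin 12) := mkPerm ![2, 10, 4, 0, 9, 6, 1, 8, 11, 7, 3, 5] ![3, 6, 0, 10, 2, 11, 5, 9, 7, 4, 1, 8]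
def q63 : Equiv.Perm (Fin 12) := mkPerm ![7, 9, 11, 1, 3, 8, 2, 6, 10, 5, 0, 4] ![10, 3, 6, 4, 11, 9, 7, 0, 5, 1, 8, 2]
def q64 : Equiv.Perm (Fin 12) := mkPerm ![4, 7, 6, 10, 8, 1, 9, 11, 2, 3, 5, 0] ![11, 5, 8, 9, 0, 10, 2, 1, 4, 6, 3, 7]
def q65 : Equiv.Perm (Fin 12) := mkPerm ![6, 11, 10, 5, 2, 9, 4, 1, 3, 0, 7, 8] ![9, 7, 4, 8, 6, 3, 0, 10, 11, 5, 2, 1]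
def q66 : Equiv.Perm (Fin 12) := mkPerm ![6, 9, 11, 0, 8, 1, 5, 10, 2, 3, 4, 7] ![3, 5, 8, 9, 10, 6, 0, 11, 4, 1, 7, 2]
def q67 : Equiv.Perm (Fin 12) := mkPerm ![3, 10, 4, 2, 1, 7, 11, 9, 5, 6, 0, 8] ![10, 4, 3, 0, 2, 8, 9, 5, 11, 7, 1, 6]
def q68 : Equiv.Perm (Fin 12) := mkPerm ![9, 5, 7, 11, 10, 3, 4, 8, 6, 1, 2, 0] ![11, 9, 10, 5, 6, 1, 8, 2, 7, 0, 4, 3]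
def q69 : Equiv.Perm (Fin 12) := mkPerm ![1, 3, 8, 6, 5, 9, 2, 11, 0, 10, 7, 4] ![8, 0, 6, 1, 11, 4, 3, 10, 2, 5, 9, 7]
def q70 : Equiv.Perm (Fin 12) := mkPerm ![8, 7, 9, 10, 6, 0, 1, 2, 11, 4, 5, 3] ![5, 6, 7, 11, 9, 10, 4, 1, 0, 2, 3, 8]
def q71 : Equiv.Perm (Fin 12) := mkPerm ![7, 11, 0, 8, 9, 2, 3, 4, 1, 5, 6, 10] ![2, 8, 5, 6, 7, 9, 10, 0, 3, 4, 11, 1]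
def q72 : Equiv.Perm (Fin 12) := mkPerm ![11, 2, 5, 4, 7, 10, 8, 6, 9, 0, 3, 1] ![9, 11, 1, 10, 3, 2, 7, 4, 6, 8, 5, 0]
def q73 : Equiv.Perm (Fin 12) := mkPerm ![10, 8, 1, 5, 11, 4, 0, 3, 7, 2, 9, 6] ![6, 2, 9, 7, 5, 3, 11, 8, 1, 10, 0, 4]
def q74 : Equiv.Perm (Fin 12) := mkPerm ![5, 6, 3, 1, 2, 8, 10, 0, 4, 7, 11, 9] ![7, 3, 4, 2, 8, 0, 1, 9, 5, 11, 6, 10]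
def q75 : Equiv.Perm (Fin 12) := mkPerm ![2, 4, 10, 9, 0, 6, 7, 1, 3, 11, 8, 5] ![4, 7, 0, 8, 1, 11, 5, 6, 10, 3, 2, 9]
def q76 : Equiv.Perm (Fin 12) := mkPerm ![4, 0, 6, 7, 3, 11, 9, 5, 10, 8, 1, 2] ![1, 10, 11, 4, 0, 7, 2, 3, 9, 6, 8, 5]
def q77 : Equiv.Perm (Fin 12) := mkPerm ![9, 5, 0, 1, 8, 4, 2, 10, 11, 7, 6, 3] ![2, 3, 6, 11, 5, 1, 10, 9, 4, 0, 7, 8]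
def q78 : Equiv.Perm (Fin 12) := mkPerm ![11, 4, 10, 0, 6, 2, 9, 1, 7, 8, 3, 5] ![3, 7, 5, 10, 1, 11, 4, 8, 9, 6, 2, 0]
def q79 : Equiv.Perm (Fin 12) := mkPerm ![4, 7, 8, 6, 3, 11, 1, 0, 10, 5, 9, 2] ![7, 6, 11, 4, 0, 9, 3, 1, 2, 10, 8, 5]
def q80 : Equiv.Perm (Fin 12) := mkPerm ![3, 6, 11, 7, 0, 8, 5, 9, 2, 10, 4, 1] ![4, 11, 8, 0, 10, 6, 1, 3, 5, 7, 9, 2]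
def q81 : Equiv.Perm (Fin 12) := mkPerm ![10, 8, 3, 5, 1, 0, 11, 2, 6, 4, 7, 9] ![5, 4, 7, 2, 9, 3, 8, 10, 1, 11, 0, 6]
def q82 : Equiv.Perm (Fin 12) := mkPerm ![8, 10, 7, 11, 5, 1, 0, 4, 9, 3, 2, 6] ![6, 5, 10, 9, 7, 4, 11, 2, 0, 8, 1, 3]
def q83 : Equiv.Perm (Fin 12) := mkPerm ![1, 9, 4, 2, 11, 3, 7, 8, 0, 6, 5, 10] ![8, 0, 3, 5, 2, 10, 9, 6, 7, 1, 11, 4]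
def q84 : Equiv.Perm (Fin 12) := mkPerm ![6, 2, 9, 4, 7, 10, 3, 5, 1, 11, 8, 0] ![11, 8, 1, 6, 3, 7, 0, 4, 10, 2, 5, 9]
def q85 : Equiv.Perm (Fin 12) := mkPerm ![2, 0, 5, 9, 10, 6, 8, 3, 4, 1, 11, 7] ![1, 9, 0, 7, 8, 2, 5, 11, 6, 3, 4, 10]
def q86 : Equiv.Perm (Fin 12) := mkPerm ![5, 11, 1, 10, 9, 7, 4, 6, 3, 2, 0, 8] ![10, 2, 9, 8, 6, 0, 7, 5, 11, 4, 3, 1]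
def q87 : Equiv.Perm (Fin 12) := mkPerm ![7, 3, 6, 8, 2, 9, 10, 11, 5, 0, 1, 4] ![9, 10, 4, 1, 11, 8, 2, 0, 3, 5, 6, 7]
def q88 : Equiv.Perm (Fin 12) := mkPerm ![8, 7, 5, 0, 3, 6, 1, 9, 11, 2, 4, 10] ![3, 6, 9, 4, 10, 2, 5, 1, 0, 7, 11, 8]
def q89 : Equiv.Perm (Fin 12) := mkPerm ![9, 8, 3, 4, 5, 7, 0, 10, 6, 11, 2, 1] ![6, 11, 10, 2, 3, 4, 8, 5, 1, 0, 7, 9]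
def q90 : Equiv.Perm (Fin 12) := mkPerm ![4, 0, 11, 5, 10, 1, 7, 8, 2, 6, 3, 9] ![1, 5, 8, 10, 0, 3, 9, 6, 7, 11, 4, 2]
def q91 : Equiv.Perm (Fin 12) := mkPerm ![5, 4, 0, 9, 11, 8, 2, 6, 7, 10, 1, 3] ![2, 10, 6, 11, 1, 0, 7, 8, 5, 3, 9, 4]
def q92 : Equiv.Perm (Fin 12) := mkPerm ![10, 5, 4, 6, 1, 11, 9, 2, 3, 0, 8, 7] ![9, 4, 7, 8, 2, 1, 3, 11, 10, 6, 0, 5]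
def q93 : Equiv.Perm (Fin 12) := mkPerm ![11, 6, 1, 10, 9, 3, 8, 4, 0, 5, 7, 2] ![8, 2, 11, 5, 7, 9, 1, 10, 6, 4, 3, 0]
def q94 : Equiv.Perm (Fin 12) := mkPerm ![1, 11, 9, 7, 8, 2, 3, 0, 10, 4, 5, 6] ![7, 0, 5, 6, 9, 10, 11, 3, 4, 2, 8, 1]
def q95 : Equiv.Perm (Fin 12) := mkPerm ![6, 3, 8, 11, 2, 0, 10, 5, 1, 7, 9, 4] ![5, 8, 4, 1, 11, 7, 0, 9, 2, 10, 6, 3]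
def q96 : Equiv.Perm (Fin 12) := mkPerm ![2, 10, 6, 8, 7, 9, 4, 3, 5, 1, 11, 0] ![11, 9, 0, 7, 6, 8, 2, 4, 3, 5, 1, 10]
def q97 : Equiv.Perm (Fin 12) := mkPerm ![7, 2, 10, 1, 0, 4, 5, 11, 9, 3, 6, 8] ![4, 3, 1, 9, 5, 6, 10, 0, 11, 8, 2, 7]
def q98 : Equiv.Perm (Fin 12) := mkPerm ![3, 9, 7, 2, 6, 10, 11, 1, 4, 8, 0, 5] ![10, 7, 3, 0, 8, 11, 4, 2, 9, 1, 5, 6]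
def q99 : Equiv.Perm (Fin 12) := mkPerm ![1, 5, 10, 4, 0, 9, 11, 6, 7, 3, 8, 2] ![4, 0, 11, 9, 3, 1, 7, 8, 10, 5, 2, 6]
def q100 : Equiv.Perm (Fin 12) := mkPerm ![8, 4, 6, 2, 7, 3, 9, 0, 11, 10, 5, 1] ![7, 11, 3, 5, 1, 10, 2, 4, 0, 6, 9, 8]
def q101 : Equiv.Perm (Fin 12) := mkPerm ![10, 8, 9, 7, 11, 6, 4, 5, 2, 0, 1, 3] ![9, 10, 8, 11, 6, 7, 5, 3, 1, 2, 0, 4]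
def q102 : Equiv.Perm (Fin 12) := mkPerm ![2, 3, 11, 8, 5, 7, 0, 1, 4, 6, 9, 10] ![6, 7, 0, 1, 8, 4, 9, 5, 3, 10, 11, 2]
def q103 : Equiv.Perm (Fin 12) := mkPerm ![5, 9, 4, 0, 3, 10, 7, 8, 1, 11, 2, 6] ![3, 8, 10, 4, 2, 0, 11, 6, 7, 1, 5, 9]
def q104 : Equiv.Perm (Fin 12) := mkPerm ![11, 2, 3, 5, 10, 8, 1, 9, 6, 4, 0, 7] ![10, 6, 1, 2, 9, 3, 8, 11, 5, 7, 4, 0]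
def q105 : Equiv.Perm (Fin 12) := mkPerm ![3, 10, 1, 6, 2, 0, 8, 11, 9, 5, 7, 4] ![5, 2, 4, 0, 11, 9, 3, 10, 6, 8, 1, 7]
def q106 : Equiv.Perm (Fin 12) := mkPerm ![7, 6, 0, 11, 8, 2, 10, 4, 5, 1, 3, 9] ![2, 9, 5, 10, 7, 8, 1, 0, 4, 11, 6, 3]
def q107 : Equiv.Perm (Fin 12) := mkPerm ![9, 7, 5, 1, 6, 11, 3, 10, 0, 2, 4, 8] ![8, 3, 9, 6, 10, 2, 4, 1, 11, 0, 7, 5]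
def q108 : Equiv.Perm (Fin 12) := mkPerm ![6, 0, 7, 9, 1, 4, 2, 3, 10, 8, 11, 5] ![1, 4, 6, 7, 5, 11, 0, 2, 9, 3, 8, 10]
def q109 : Equiv.Perm (Fin 12) := mkPerm ![4, 11, 8, 10, 9, 1, 5, 2, 3, 7, 6, 0] ![11, 5, 7, 8, 0, 6, 10, 9, 2, 4, 3, 1]
def q110 : Equiv.Perm (Fin 12) := mkPerm ![1, 4, 7, 11, 2, 10, 8, 9, 5, 0, 3, 6] ![9, 0, 4, 10, 1, 8, 11, 2, 6, 7, 5, 3]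
def q111 : Equiv.Perm (Fin 12) := mkPerm ![8, 10, 11, 4, 6, 3, 9, 5, 1, 7, 2, 0] ![11, 8, 10, 5, 3, 7, 4, 9, 0, 6, 1, 2]
def q112 : Equiv.Perm (Fin 12) := mkPerm ![5, 9, 4, 6, 3, 7, 11, 1, 2, 10, 0, 8] ![10, 7, 8, 4, 2, 0, 3, 5, 11, 1, 9, 6]
def q113 : Equiv.Perm (Fin 12) := mkPerm ![11, 5, 10, 9, 1, 2, 7, 0, 4, 6, 8, 3] ![7, 4, 5, 11, 8, 1, 9, 6, 10, 3, 2, 0]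
def q114 : Equiv.Perm (Fin 12) := mkPerm ![6, 2, 0, 8, 9, 11, 5, 4, 10, 3, 7, 1] ![2, 11, 1, 9, 7, 6, 0, 10, 3, 4, 8, 5]
def q115 : Equiv.Perm (Fin 12) := mkPerm ![10, 11, 9, 1, 7, 0, 2, 8, 3, 5, 6, 4] ![5, 3, 6, 8, 11, 9, 10, 4, 7, 2, 0, 1]
def q116 : Equiv.Perm (Fin 12) := mkPerm ![3, 8, 6, 7, 0, 9, 4, 2, 11, 1, 5, 10] ![4, 9, 7, 0, 6, 10, 2, 3, 1, 5, 11, 8]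
def q117 : Equiv.Perm (Fin 12) := mkPerm ![2, 7, 1, 0, 10, 8, 3, 6, 9, 4, 11, 5] ![3, 2, 0, 6, 9, 11, 7, 1, 5, 8, 4, 10]
def q118 : Equiv.Perm (Fin 12) := mkPerm ![7, 3, 8, 10, 5, 6, 1, 11, 0, 2, 4, 9] ![8, 6, 9, 1, 10, 4, 5, 0, 2, 11, 3, 7]
def q119 : Equiv.Perm (Fin 12) := mkPerm ![9, 0, 5, 2, 11, 4, 10, 3, 6, 8, 1, 7] ![1, 10, 3, 7, 5, 2, 8, 11, 9, 0, 6, 4]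
def q120 : Equiv.Perm (Fin 12) := mkPerm ![4, 6, 3, 5, 8, 1, 0, 10, 7, 11, 9, 2] ![6, 5, 11, 2, 0, 3, 1, 8, 4, 10, 7, 9]
def q121 : Equiv.Perm (Fin 12) := mkPerm ![8, 9, 0, 4, 2, 7, 1, 10, 11, 5, 6, 3] ![2, 6, 4, 11, 3, 9, 10, 5, 0, 1, 7, 8]
def q122 : Equiv.Perm (Fin 12) := mkPerm ![1, 4, 9, 2, 11, 3, 10, 8, 5, 7, 0, 6] ![10, 0, 3, 5, 1, 8, 11, 9, 7, 2, 6, 4]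
def q123 : Equiv.Perm (Fin 12) := mkPerm ![6, 11, 8, 1, 7, 10, 4, 2, 0, 3, 9, 5] ![8, 3, 7, 9, 6, 11, 0, 4, 2, 10, 5, 1]
def q124 : Equiv.Perm (Fin 12) := mkPerm ![7, 6, 1, 10, 3, 11, 0, 9, 4, 2, 5, 8] ![6, 2, 9, 4, 8, 10, 1, 0, 11, 7, 3, 5]
def q125 : Equiv.Perm (Fin 12) := mkPerm ![10, 0, 3, 11, 9, 8, 5, 4, 7, 6, 2, 1] ![1, 11, 10, 2, 7, 6, 9, 8, 5, 4, 0, 3]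
def q126 : Equiv.Perm (Fin 12) := mkPerm ![3, 2, 4, 5, 0, 1, 7, 11, 6, 10, 8, 9] ![4, 5, 1, 0, 2, 3, 8, 6, 10, 11, 9, 7]
def q127 : Equiv.Perm (Fin 12) := mkPerm ![5, 7, 11, 0, 1, 2, 8, 6, 9, 4, 3, 10] ![3, 4, 5, 10, 9, 0, 7, 1, 6, 8, 11, 2]
def q128 : Equiv.Perm (Fin 12) := mkPerm ![9, 8, 10, 7, 5, 6, 11, 0, 3, 1, 4, 2] ![7, 9, 11, 8, 10, 4, 5, 3, 1, 0, 2, 6]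
def q129 : Equiv.Perm (Fin 12) := mkPerm ![11, 5, 7, 6, 10, 0, 9, 3, 2, 8, 1, 4] ![5, 10, 8, 7, 11, 1, 3, 2, 9, 6, 4, 0]
def q130 : Equiv.Perm (Fin 12) := mkPerm ![4, 3, 5, 8, 6, 9, 2, 1, 10, 0, 11, 7] ![9, 7, 6, 1, 0, 2, 4, 11, 3, 5, 8, 10]
def q131 : Equiv.Perm (Fin 12) := mkPerm ![2, 10, 6, 9, 8, 4, 3, 5, 1, 11, 7, 0] ![11, 8, 0, 6, 5, 7, 2, 10, 4, 3, 1, 9]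
def D0 : Fin 11 → Equiv.Perm (Fin 12) := ![q0, q1, q2, q3, q4, q5, q6, q7, q8, q9, q10]
def D1 : Fin 11 → Equiv.Perm (Fin 12) := ![q11, q12, q13, q14, q15, q16, q17, q18, q19, q20, q21]
def D2 : Fin 11 → Equiv.Perm (Fin 12) := ![q22, q23, q24, q25, q26, q27, q28, q29, q30, q31, q32]
def D3 : Fin 11 → Equiv.Perm (Fin 12) := ![q33, q34, q35, q36, q37, q38, q39, q40, q41, q42, q43]
def D4 : Fin 11 → Equiv.Perm (Fin 12) := ![q44, q45, q46, q47, q48, q49, q50, q51, q52, q53, q54]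
def D5 : Fin 11 → Equiv.Perm (Fin 12) := ![q55, q56, q57, q58, q59, q60, q61, q62, q63, q64, q65]
def D6 : Fin 11 → Equiv.Perm (Fin 12) := ![q66, q67, q68, q69, q70, q71, q72, q73, q74, q75, q76]
def D7 : Fin 11 → Equiv.Perm (Fin 12) := ![q77, q78, q79, q80, q81, q82, q83, q84, q85, q86, q87]
def D8 : Fin 11 → Equiv.Perm (Fin 12) := ![q88, q89, q90, q91, q92, q93, q94, q95, q96, q97, q98]
def D9 : Fin 11 → Equiv.Perm (Fin 12) := ![q99, q100, q101, q102, q103, q104, q105, q106, q107, q108, q109]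
def D10 : Fin 11 → Equiv.Perm (Fin 12) := ![q110, q111, q112, q113, q114, q115, q116, q117, q118, q119, q120]
def D11 : Fin 11 → Equiv.Perm (Fin 12) := ![q121, q122, q123, q124, q125, q126, q127, q128, q129, q130, q131]

/-- HWP*(12; 6^r, 12^s) has a solution if and only if r + s = 11. -/
theorem hwpStar_12_6_12 (r s : ℕ) :
    HWPStarSolution 12 6 12 r s ↔ r + s = 11 := by
  constructor
  · exact forward
  · intro h
    have hr : r ≤ 11 := by omega
    interval_cases r <;>
      [exact build h D0 (by decide) (by decide) (by decide);
       exact build h D1 (by decide) (by decide) (by decide);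
       exact build h D2 (by decide) (by decide) (by decide);
       exact build h D3 (by decide) (by decide) (by decide);
       exact build h D4 (by decide) (by decide) (by decide);
       exact build h D5 (by decide) (by decide) (by decide);
       exact build h D6 (by decide) (by decide) (by decide);
       exact build h D7 (by decide) (by decide) (by decide);
       exact build h D8 (by decide) (by decide) (by decide);
       exact build h D9 (by decide) (by decide) (by decide);
       exact build h D10 (by decide) (by decide) (by decide);
       exact build h D11 (by decide) (by decide) (by decide)]
end

section
/- (Lemma 3.7, case (4,16).) For all nonnegative integers r and s, there exists a solution to HWP*(16; 4^r, 16^s) if and only if r + s = 15. -/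
set_option maxRecDepth 10000

namespace HWPAux

lemma minper (f : Equiv.Perm (Fin 16)) (x : Fin 16) (m : ℕ) (hm : 0 < m)
    (hmx : (⇑f)^[m] x = x) (hlt : ∀ k, k ∣ m → 0 < k → k < m → (⇑f)^[k] x ≠ x) :
    Function.minimalPeriod ⇑f x = m := by
  have hp : Function.IsPeriodicPt ⇑f m x := hmx
  have hd : Function.minimalPeriod ⇑f x ∣ m := Function.IsPeriodicPt.minimalPeriod_dvd hp
  have hpos : 0 < Function.minimalPeriod ⇑f x := hp.minimalPeriod_pos hm
  have hle : Function.minimalPeriod ⇑f x ≤ m := Nat.le_of_dvd hm hd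
  rcases lt_or_eq_of_le hle with h | h
  · exact absurd (Function.iterate_minimalPeriod (f := ⇑f) (x := x)) (hlt _ hd hpos h)
  · exact h

def cond4 (f : Equiv.Perm (Fin 16)) : Prop :=
  ∀ x, (⇑f)^[4] x = x ∧ (⇑f)^[1] x ≠ x ∧ (⇑f)^[2] x ≠ x

instance (f : Equiv.Perm (Fin 16)) : Decidable (cond4 f) := by unfold cond4; infer_instance

def cond16 (f : Equiv.Perm (Fin 16)) : Prop :=
  ∀ x, (⇑f)^[16] x = x ∧ (⇑f)^[1] x ≠ x ∧ (⇑f)^[2] x ≠ x ∧ (⇑f)^[4] x ≠ x ∧ (⇑f)^[8] x ≠ x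

instance (f : Equiv.Perm (Fin 16)) : Decidable (cond16 f) := by unfold cond16; infer_instance

lemma min4 (f : Equiv.Perm (Fin 16)) (h : cond4 f) (x : Fin 16) :
    Function.minimalPeriod ⇑f x = 4 := by
  obtain ⟨h4, h1, h2⟩ := h x
  apply minper f x 4 (by norm_num) h4
  intro k hk hk0 hklt
  interval_cases k
  · exact h1
  · exact h2
  · exact absurd hk (by norm_num)

lemma min16 (f : Equiv.Perm (Fin 16)) (h : cond16 f) (x : Fin 16) :
    Function.minimalPeriod ⇑f x = 16 := by
  obtain ⟨h16, h1, h2, h4, h8⟩ := h x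
  apply minper f x 16 (by norm_num) h16
  intro k hk hk0 hklt
  interval_cases k <;>
    first
      | exact h1 | exact h2 | exact h4 | exact h8
      | exact absurd hk (by norm_num)

lemma forward (r s : ℕ) (h : HWPStarSolution 16 4 16 r s) : r + s = 15 := by
  obtain ⟨σ, h4, h16, huniq⟩ := h
  have hnf : ∀ (i : Fin (r+s)) (x : Fin 16), σ i x ≠ x := by
    intro i x hfix
    have h1 : Function.minimalPeriod ⇑(σ i) x ∣ 1 :=
      Function.IsPeriodicPt.minimalPeriod_dvd (by simpa [Function.IsPeriodicPt, Function.IsFixedPt] using hfix)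
    rw [Nat.dvd_one] at h1
    rcases lt_or_ge (i : ℕ) r with hi | hi
    · have := h4 i hi x; omega
    · have := h16 i hi x; omega
  have hbij : Function.Bijective
      (fun p : Fin (r+s) × Fin 16 =>
        (⟨(p.2, σ p.1 p.2), (hnf p.1 p.2).symm⟩ :
          {q : Fin 16 × Fin 16 // q.1 ≠ q.2})) := by
    constructor
    · rintro ⟨i, x⟩ ⟨j, y⟩ hij
      simp only [Subtype.mk_eq_mk, Prod.mk.injEq] at hij
      obtain ⟨hxy, hs⟩ := hij
      subst hxy
      obtain ⟨k, hk, hu⟩ := huniq x (σ i x) (hnf i x).symm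
      have hi := hu i rfl
      have hj := hu j hs.symm
      simp [hi, hj]
    · rintro ⟨⟨x, y⟩, hxy⟩
      obtain ⟨i, hi, -⟩ := huniq x y hxy
      exact ⟨(i, x), by simp [hi]⟩
  have hcard := Fintype.card_of_bijective hbij
  simp only [Fintype.card_prod, Fintype.card_fin] at hcard
  have h240 : Fintype.card {q : Fin 16 × Fin 16 // q.1 ≠ q.2} = 240 := by decide
  rw [h240] at hcard
  omega

def d0 : Fin 15 → Fin 16 → Fin 16 :=
  ![![9, 3, 12, 14, 7, 6, 0, 1, 13, 2, 15, 10, 11, 5, 8, 4],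
  ![1, 4, 11, 12, 14, 13, 7, 15, 3, 6, 9, 0, 5, 2, 10, 8],
  ![13, 12, 1, 15, 6, 9, 2, 5, 10, 0, 4, 8, 7, 3, 11, 14],
  ![3, 15, 9, 7, 5, 8, 10, 11, 14, 13, 2, 6, 4, 1, 0, 12],
  ![2, 6, 10, 9, 1, 0, 8, 14, 7, 12, 3, 13, 15, 4, 5, 11],
  ![5, 10, 7, 0, 2, 4, 15, 6, 11, 14, 13, 9, 3, 8, 12, 1],
  ![4, 7, 6, 10, 11, 15, 12, 13, 0, 1, 5, 3, 8, 14, 2, 9],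
  ![11, 9, 8, 6, 12, 3, 13, 10, 4, 5, 1, 2, 14, 15, 7, 0],
  ![8, 5, 15, 13, 3, 7, 14, 2, 9, 10, 11, 1, 0, 12, 4, 6],
  ![15, 14, 5, 2, 13, 11, 4, 8, 1, 3, 0, 12, 6, 10, 9, 7],
  ![14, 2, 0, 5, 8, 12, 1, 9, 15, 4, 6, 7, 10, 11, 13, 3],
  ![12, 0, 3, 11, 15, 2, 5, 4, 6, 7, 8, 14, 13, 9, 1, 10],
  ![7, 13, 4, 8, 10, 1, 9, 3, 12, 11, 14, 15, 2, 0, 6, 5],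
  ![6, 8, 14, 4, 9, 10, 11, 0, 2, 15, 12, 5, 1, 7, 3, 13],
  ![10, 11, 13, 1, 0, 14, 3, 12, 5, 8, 7, 4, 9, 6, 15, 2]]

def e0 : Fin 15 → Fin 16 → Fin 16 :=
  ![![6, 7, 9, 1, 15, 13, 5, 4, 14, 0, 11, 12, 2, 8, 3, 10],
  ![11, 0, 13, 8, 1, 12, 9, 6, 15, 10, 14, 2, 3, 5, 4, 7],
  ![9, 2, 6, 13, 10, 7, 4, 12, 11, 5, 8, 14, 1, 0, 15, 3],
  ![14, 13, 10, 0, 12, 4, 11, 3, 5, 2, 6, 7, 15, 9, 8, 1],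
  ![5, 4, 0, 10, 13, 14, 1, 8, 6, 3, 2, 15, 9, 11, 7, 12],
  ![3, 15, 4, 12, 5, 0, 7, 2, 13, 11, 1, 8, 14, 10, 9, 6],
  ![8, 9, 14, 11, 0, 10, 2, 1, 12, 15, 3, 4, 6, 7, 13, 5],
  ![15, 10, 11, 5, 8, 9, 3, 14, 2, 1, 7, 0, 4, 6, 12, 13],
  ![12, 11, 7, 4, 14, 1, 15, 5, 0, 8, 9, 10, 13, 3, 6, 2],
  ![10, 8, 3, 9, 6, 2, 12, 15, 7, 14, 13, 5, 11, 4, 1, 0],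
  ![2, 6, 1, 15, 9, 3, 10, 11, 4, 7, 12, 13, 5, 14, 0, 8],
  ![1, 14, 5, 2, 7, 6, 8, 9, 10, 13, 15, 3, 0, 12, 11, 4],
  ![13, 5, 12, 7, 2, 15, 14, 0, 3, 6, 4, 9, 8, 1, 10, 11],
  ![7, 12, 8, 14, 3, 11, 0, 13, 1, 4, 5, 6, 10, 15, 2, 9],
  ![4, 3, 15, 6, 11, 8, 13, 10, 9, 12, 0, 1, 7, 2, 5, 14]]

lemma hL0 : ∀ i x, e0 i (d0 i x) = x := by decide
lemma hR0 : ∀ i x, d0 i (e0 i x) = x := by decide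

def s0 : Fin 15 → Equiv.Perm (Fin 16) := fun i => ⟨d0 i, e0 i, hL0 i, hR0 i⟩

lemma case0 : HWPStarSolution 16 4 16 0 15 := by
  refine ⟨s0, ?_, ?_, ?_⟩
  · have h : ∀ i : Fin 15, (i : ℕ) < 0 → cond4 (s0 i) := by decide
    intro i hi x
    exact min4 _ (h i hi) x
  · have h : ∀ i : Fin 15, 0 ≤ (i : ℕ) → cond16 (s0 i) := by decide
    intro i hi x
    exact min16 _ (h i hi) x
  · have h : ∀ x y : Fin 16, x ≠ y →
        ∃ i : Fin 15, (s0 i x = y ∧ ∀ j : Fin 15, s0 j x = y → j = i) := by decide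
    exact h

def d1 : Fin 15 → Fin 16 → Fin 16 :=
  ![![13, 15, 5, 10, 8, 9, 1, 6, 0, 11, 12, 2, 14, 4, 3, 7],
  ![7, 11, 0, 13, 5, 6, 3, 15, 2, 1, 9, 4, 8, 12, 10, 14],
  ![5, 12, 1, 9, 6, 13, 10, 3, 14, 15, 2, 0, 7, 8, 4, 11],
  ![8, 0, 14, 12, 11, 4, 2, 9, 15, 10, 1, 7, 13, 6, 5, 3],
  ![14, 6, 8, 11, 15, 7, 0, 12, 5, 13, 3, 1, 4, 2, 9, 10],
  ![6, 13, 10, 15, 3, 0, 7, 11, 1, 4, 5, 9, 2, 14, 12, 8],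
  ![11, 2, 4, 14, 7, 15, 12, 10, 3, 6, 8, 5, 0, 9, 13, 1],
  ![9, 14, 12, 6, 2, 10, 11, 13, 7, 3, 4, 8, 1, 15, 0, 5],
  ![15, 10, 3, 0, 12, 2, 8, 4, 9, 5, 7, 14, 6, 11, 1, 13],
  ![10, 7, 15, 2, 14, 1, 5, 8, 11, 0, 13, 12, 9, 3, 6, 4],
  ![1, 8, 7, 4, 9, 3, 14, 0, 13, 2, 11, 6, 5, 10, 15, 12],
  ![12, 9, 11, 1, 13, 8, 4, 5, 10, 7, 14, 15, 3, 0, 2, 6],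
  ![3, 5, 6, 7, 10, 14, 9, 2, 4, 12, 15, 13, 11, 1, 8, 0],
  ![4, 3, 9, 5, 1, 12, 13, 14, 6, 8, 0, 10, 15, 7, 11, 2],
  ![2, 4, 13, 8, 0, 11, 15, 1, 12, 14, 6, 3, 10, 5, 7, 9]]

def e1 : Fin 15 → Fin 16 → Fin 16 :=
  ![![8, 6, 11, 14, 13, 2, 7, 15, 4, 5, 3, 9, 10, 0, 12, 1],
  ![2, 9, 8, 6, 11, 4, 5, 0, 12, 10, 14, 1, 13, 3, 15, 7],
  ![11, 2, 10, 7, 14, 0, 4, 12, 13, 3, 6, 15, 1, 5, 8, 9],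
  ![1, 10, 6, 15, 5, 14, 13, 11, 0, 7, 9, 4, 3, 12, 2, 8],
  ![6, 11, 13, 10, 12, 8, 1, 5, 2, 14, 15, 3, 7, 9, 0, 4],
  ![5, 8, 12, 4, 9, 10, 0, 6, 15, 11, 2, 7, 14, 1, 13, 3],
  ![12, 15, 1, 8, 2, 11, 9, 4, 10, 13, 7, 0, 6, 14, 3, 5],
  ![14, 12, 4, 9, 10, 15, 3, 8, 11, 0, 5, 6, 2, 7, 1, 13],
  ![3, 14, 5, 2, 7, 9, 12, 10, 6, 8, 1, 13, 4, 15, 11, 0],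
  ![9, 5, 3, 13, 15, 6, 14, 1, 7, 12, 0, 8, 11, 10, 4, 2],
  ![7, 0, 9, 5, 3, 12, 11, 2, 1, 4, 13, 10, 15, 8, 6, 14],
  ![13, 3, 14, 12, 6, 7, 15, 9, 5, 1, 8, 2, 0, 4, 10, 11],
  ![15, 13, 7, 0, 8, 1, 2, 3, 14, 6, 4, 12, 9, 11, 5, 10],
  ![10, 4, 15, 1, 0, 3, 8, 13, 9, 2, 11, 14, 5, 6, 7, 12],
  ![4, 7, 0, 11, 1, 13, 10, 14, 3, 15, 12, 5, 8, 2, 9, 6]]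

lemma hL1 : ∀ i x, e1 i (d1 i x) = x := by decide
lemma hR1 : ∀ i x, d1 i (e1 i x) = x := by decide

def s1 : Fin 15 → Equiv.Perm (Fin 16) := fun i => ⟨d1 i, e1 i, hL1 i, hR1 i⟩

lemma case1 : HWPStarSolution 16 4 16 1 14 := by
  refine ⟨s1, ?_, ?_, ?_⟩
  · have h : ∀ i : Fin 15, (i : ℕ) < 1 → cond4 (s1 i) := by decide
    intro i hi x
    exact min4 _ (h i hi) x
  · have h : ∀ i : Fin 15, 1 ≤ (i : ℕ) → cond16 (s1 i) := by decide
    intro i hi x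
    exact min16 _ (h i hi) x
  · have h : ∀ x y : Fin 16, x ≠ y →
        ∃ i : Fin 15, (s1 i x = y ∧ ∀ j : Fin 15, s1 j x = y → j = i) := by decide
    exact h

def d2 : Fin 15 → Fin 16 → Fin 16 :=
  ![![5, 14, 6, 13, 15, 10, 3, 1, 11, 0, 9, 4, 7, 2, 12, 8],
  ![12, 3, 13, 2, 7, 11, 9, 0, 10, 8, 6, 15, 4, 1, 5, 14],
  ![13, 0, 11, 7, 6, 2, 8, 9, 5, 1, 14, 12, 3, 10, 15, 4],
  ![4, 15, 10, 6, 1, 12, 11, 5, 14, 7, 13, 8, 0, 3, 9, 2],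
  ![2, 12, 8, 5, 10, 0, 13, 14, 6, 15, 1, 9, 11, 4, 3, 7],
  ![10, 6, 7, 9, 13, 3, 5, 11, 12, 14, 4, 0, 2, 15, 8, 1],
  ![11, 10, 4, 8, 14, 6, 0, 12, 13, 3, 15, 2, 5, 7, 1, 9],
  ![8, 2, 12, 1, 5, 9, 15, 10, 4, 13, 3, 7, 6, 14, 11, 0],
  ![1, 5, 9, 4, 8, 14, 7, 2, 15, 10, 11, 3, 13, 0, 6, 12],
  ![6, 7, 3, 0, 11, 13, 14, 15, 1, 2, 8, 10, 9, 12, 4, 5],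
  ![7, 8, 5, 11, 2, 1, 12, 4, 3, 6, 0, 14, 15, 9, 13, 10],
  ![14, 13, 0, 10, 12, 15, 4, 6, 9, 11, 2, 1, 8, 5, 7, 3],
  ![15, 9, 14, 12, 3, 8, 1, 13, 2, 4, 7, 5, 10, 11, 0, 6],
  ![9, 11, 15, 14, 0, 4, 2, 3, 7, 12, 5, 6, 1, 8, 10, 13],
  ![3, 4, 1, 15, 9, 7, 10, 8, 0, 5, 12, 13, 14, 6, 2, 11]]

def e2 : Fin 15 → Fin 16 → Fin 16 :=
  ![![9, 7, 13, 6, 11, 0, 2, 12, 15, 10, 5, 8, 14, 3, 1, 4],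
  ![7, 13, 3, 1, 12, 14, 10, 4, 9, 6, 8, 5, 0, 2, 15, 11],
  ![1, 9, 5, 12, 15, 8, 4, 3, 6, 7, 13, 2, 11, 0, 10, 14],
  ![12, 4, 15, 13, 0, 7, 3, 9, 11, 14, 2, 6, 5, 10, 8, 1],
  ![5, 10, 0, 14, 13, 3, 8, 15, 2, 11, 4, 12, 1, 6, 7, 9],
  ![11, 15, 12, 5, 10, 6, 1, 2, 14, 3, 0, 7, 8, 4, 9, 13],
  ![6, 14, 11, 9, 2, 12, 5, 13, 3, 15, 1, 0, 7, 8, 4, 10],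
  ![15, 3, 1, 10, 8, 4, 12, 11, 0, 5, 7, 14, 2, 9, 13, 6],
  ![13, 0, 7, 11, 3, 1, 14, 6, 4, 2, 9, 10, 15, 12, 5, 8],
  ![3, 8, 9, 2, 14, 15, 0, 1, 10, 12, 11, 4, 13, 5, 6, 7],
  ![10, 5, 4, 8, 7, 2, 9, 0, 1, 13, 15, 3, 6, 14, 11, 12],
  ![2, 11, 10, 15, 6, 13, 7, 14, 12, 8, 3, 9, 4, 1, 0, 5],
  ![14, 6, 8, 4, 9, 11, 15, 10, 5, 1, 12, 13, 3, 7, 2, 0],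
  ![4, 12, 6, 7, 5, 10, 11, 8, 13, 0, 14, 1, 9, 15, 3, 2],
  ![8, 2, 14, 0, 1, 9, 13, 5, 7, 4, 6, 15, 10, 11, 12, 3]]

lemma hL2 : ∀ i x, e2 i (d2 i x) = x := by decide
lemma hR2 : ∀ i x, d2 i (e2 i x) = x := by decide

def s2 : Fin 15 → Equiv.Perm (Fin 16) := fun i => ⟨d2 i, e2 i, hL2 i, hR2 i⟩

lemma case2 : HWPStarSolution 16 4 16 2 13 := by
  refine ⟨s2, ?_, ?_, ?_⟩
  · have h : ∀ i : Fin 15, (i : ℕ) < 2 → cond4 (s2 i) := by decide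
    intro i hi x
    exact min4 _ (h i hi) x
  · have h : ∀ i : Fin 15, 2 ≤ (i : ℕ) → cond16 (s2 i) := by decide
    intro i hi x
    exact min16 _ (h i hi) x
  · have h : ∀ x y : Fin 16, x ≠ y →
        ∃ i : Fin 15, (s2 i x = y ∧ ∀ j : Fin 15, s2 j x = y → j = i) := by decide
    exact h

def d3 : Fin 15 → Fin 16 → Fin 16 :=
  ![![5, 13, 3, 15, 11, 10, 0, 8, 9, 14, 6, 1, 2, 4, 7, 12],
  ![9, 2, 14, 1, 5, 7, 4, 6, 11, 15, 0, 12, 13, 8, 3, 10],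
  ![11, 8, 7, 9, 6, 12, 15, 1, 2, 0, 13, 3, 10, 5, 4, 14],
  ![8, 4, 11, 0, 7, 15, 5, 12, 13, 6, 2, 9, 14, 1, 10, 3],
  ![15, 5, 10, 2, 0, 9, 8, 14, 12, 11, 1, 4, 3, 6, 13, 7],
  ![6, 15, 0, 10, 2, 3, 1, 13, 5, 7, 4, 8, 11, 14, 12, 9],
  ![12, 9, 15, 6, 10, 11, 14, 5, 4, 8, 3, 0, 1, 7, 2, 13],
  ![13, 7, 12, 14, 3, 4, 9, 10, 6, 1, 15, 2, 8, 11, 0, 5],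
  ![14, 10, 13, 4, 1, 0, 2, 15, 7, 3, 5, 6, 9, 12, 8, 11],
  ![4, 12, 6, 5, 13, 14, 11, 2, 1, 10, 8, 15, 7, 3, 9, 0],
  ![3, 0, 8, 13, 9, 1, 7, 11, 10, 5, 12, 14, 6, 2, 15, 4],
  ![7, 14, 1, 12, 15, 8, 10, 9, 3, 2, 11, 13, 4, 0, 5, 6],
  ![10, 6, 9, 11, 12, 2, 3, 4, 0, 13, 14, 7, 5, 15, 1, 8],
  ![2, 3, 4, 7, 8, 6, 13, 0, 14, 12, 9, 5, 15, 10, 11, 1],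
  ![1, 11, 5, 8, 14, 13, 12, 3, 15, 4, 7, 10, 0, 9, 6, 2]]

def e3 : Fin 15 → Fin 16 → Fin 16 :=
  ![![6, 11, 12, 2, 13, 0, 10, 14, 7, 8, 5, 4, 15, 1, 9, 3],
  ![10, 3, 1, 14, 6, 4, 7, 5, 13, 0, 15, 8, 11, 12, 2, 9],
  ![9, 7, 8, 11, 14, 13, 4, 2, 1, 3, 12, 0, 5, 10, 15, 6],
  ![3, 13, 10, 15, 1, 6, 9, 4, 0, 11, 14, 2, 7, 8, 12, 5],
  ![4, 10, 3, 12, 11, 1, 13, 15, 6, 5, 2, 9, 8, 14, 7, 0],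
  ![2, 6, 4, 5, 10, 8, 0, 9, 11, 15, 3, 12, 14, 7, 13, 1],
  ![11, 12, 14, 10, 8, 7, 3, 13, 9, 1, 4, 5, 0, 15, 6, 2],
  ![14, 9, 11, 4, 5, 15, 8, 1, 12, 6, 7, 13, 2, 0, 3, 10],
  ![5, 4, 6, 9, 3, 10, 11, 8, 14, 12, 1, 15, 13, 2, 0, 7],
  ![15, 8, 7, 13, 0, 3, 2, 12, 10, 14, 9, 6, 1, 4, 5, 11],
  ![1, 5, 13, 0, 15, 9, 12, 6, 2, 4, 8, 7, 10, 3, 11, 14],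
  ![13, 2, 9, 8, 12, 14, 15, 0, 5, 7, 6, 10, 3, 11, 1, 4],
  ![8, 14, 5, 6, 7, 12, 1, 11, 15, 2, 0, 3, 4, 9, 10, 13],
  ![7, 15, 0, 1, 2, 11, 5, 3, 4, 10, 13, 14, 9, 6, 8, 12],
  ![12, 0, 15, 7, 9, 2, 14, 10, 3, 13, 11, 1, 6, 5, 4, 8]]

lemma hL3 : ∀ i x, e3 i (d3 i x) = x := by decide
lemma hR3 : ∀ i x, d3 i (e3 i x) = x := by decide

def s3 : Fin 15 → Equiv.Perm (Fin 16) := fun i => ⟨d3 i, e3 i, hL3 i, hR3 i⟩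

lemma case3 : HWPStarSolution 16 4 16 3 12 := by
  refine ⟨s3, ?_, ?_, ?_⟩
  · have h : ∀ i : Fin 15, (i : ℕ) < 3 → cond4 (s3 i) := by decide
    intro i hi x
    exact min4 _ (h i hi) x
  · have h : ∀ i : Fin 15, 3 ≤ (i : ℕ) → cond16 (s3 i) := by decide
    intro i hi x
    exact min16 _ (h i hi) x
  · have h : ∀ x y : Fin 16, x ≠ y →
        ∃ i : Fin 15, (s3 i x = y ∧ ∀ j : Fin 15, s3 j x = y → j = i) := by decide
    exact h

def d4 : Fin 15 → Fin 16 → Fin 16 :=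
  ![![15, 3, 8, 13, 12, 1, 9, 4, 0, 14, 6, 7, 11, 5, 10, 2],
  ![8, 2, 6, 5, 7, 14, 12, 13, 11, 4, 0, 10, 1, 9, 15, 3],
  ![14, 9, 12, 4, 11, 13, 2, 6, 3, 10, 15, 8, 7, 0, 5, 1],
  ![6, 15, 11, 14, 5, 10, 1, 3, 4, 7, 8, 12, 13, 2, 9, 0],
  ![1, 14, 15, 10, 8, 4, 7, 11, 6, 5, 2, 13, 0, 12, 3, 9],
  ![12, 8, 3, 1, 2, 7, 0, 14, 13, 15, 5, 4, 9, 10, 6, 11],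
  ![10, 12, 5, 2, 13, 15, 8, 0, 9, 1, 4, 3, 14, 6, 11, 7],
  ![2, 11, 4, 12, 3, 6, 10, 5, 7, 0, 9, 14, 15, 1, 8, 13],
  ![4, 7, 1, 15, 10, 2, 3, 9, 14, 12, 13, 5, 6, 11, 0, 8],
  ![9, 4, 13, 8, 6, 0, 5, 1, 10, 11, 14, 15, 2, 3, 7, 12],
  ![11, 0, 10, 6, 14, 8, 13, 12, 15, 2, 3, 9, 5, 7, 1, 4],
  ![13, 10, 9, 0, 15, 3, 11, 2, 5, 8, 7, 1, 4, 14, 12, 6],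
  ![3, 5, 0, 7, 9, 12, 4, 8, 1, 13, 11, 6, 10, 15, 2, 14],
  ![7, 6, 14, 11, 1, 9, 15, 10, 2, 3, 12, 0, 8, 4, 13, 5],
  ![5, 13, 7, 9, 0, 11, 14, 15, 12, 6, 1, 2, 3, 8, 4, 10]]

def e4 : Fin 15 → Fin 16 → Fin 16 :=
  ![![8, 5, 15, 1, 7, 13, 10, 11, 2, 6, 14, 12, 4, 3, 9, 0],
  ![10, 12, 1, 15, 9, 3, 2, 4, 0, 13, 11, 8, 6, 7, 5, 14],
  ![13, 15, 6, 8, 3, 14, 7, 12, 11, 1, 9, 4, 2, 5, 0, 10],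
  ![15, 6, 13, 7, 8, 4, 0, 9, 10, 14, 5, 2, 11, 12, 3, 1],
  ![12, 0, 10, 14, 5, 9, 8, 6, 4, 15, 3, 7, 13, 11, 1, 2],
  ![6, 3, 4, 2, 11, 10, 14, 5, 1, 12, 13, 15, 0, 8, 7, 9],
  ![7, 9, 3, 11, 10, 2, 13, 15, 6, 8, 0, 14, 1, 4, 12, 5],
  ![9, 13, 0, 4, 2, 7, 5, 8, 14, 10, 6, 1, 3, 15, 11, 12],
  ![14, 2, 5, 6, 0, 11, 12, 1, 15, 7, 4, 13, 9, 10, 8, 3],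
  ![5, 7, 12, 13, 1, 6, 4, 14, 3, 0, 8, 9, 15, 2, 10, 11],
  ![1, 14, 9, 10, 15, 12, 3, 13, 5, 11, 2, 0, 7, 6, 4, 8],
  ![3, 11, 7, 5, 12, 8, 15, 10, 9, 2, 1, 6, 14, 0, 13, 4],
  ![2, 8, 14, 0, 6, 1, 11, 3, 7, 4, 12, 10, 5, 9, 15, 13],
  ![11, 4, 8, 9, 13, 15, 1, 0, 12, 5, 7, 3, 10, 14, 2, 6],
  ![4, 10, 11, 12, 14, 0, 9, 2, 13, 3, 15, 5, 8, 1, 6, 7]]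

lemma hL4 : ∀ i x, e4 i (d4 i x) = x := by decide
lemma hR4 : ∀ i x, d4 i (e4 i x) = x := by decide

def s4 : Fin 15 → Equiv.Perm (Fin 16) := fun i => ⟨d4 i, e4 i, hL4 i, hR4 i⟩

lemma case4 : HWPStarSolution 16 4 16 4 11 := by
  refine ⟨s4, ?_, ?_, ?_⟩
  · have h : ∀ i : Fin 15, (i : ℕ) < 4 → cond4 (s4 i) := by decide
    intro i hi x
    exact min4 _ (h i hi) x
  · have h : ∀ i : Fin 15, 4 ≤ (i : ℕ) → cond16 (s4 i) := by decide
    intro i hi x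
    exact min16 _ (h i hi) x
  · have h : ∀ x y : Fin 16, x ≠ y →
        ∃ i : Fin 15, (s4 i x = y ∧ ∀ j : Fin 15, s4 j x = y → j = i) := by decide
    exact h

def d5 : Fin 15 → Fin 16 → Fin 16 :=
  ![![5, 14, 6, 13, 15, 10, 3, 1, 11, 0, 9, 4, 7, 2, 12, 8],
  ![12, 3, 13, 2, 7, 11, 9, 0, 10, 8, 6, 15, 4, 1, 5, 14],
  ![13, 15, 9, 11, 6, 3, 1, 5, 2, 12, 14, 7, 8, 10, 0, 4],
  ![4, 5, 3, 10, 9, 6, 15, 8, 12, 13, 11, 2, 14, 0, 7, 1],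
  ![6, 0, 5, 4, 12, 13, 8, 9, 1, 10, 15, 3, 11, 14, 2, 7],
  ![2, 9, 7, 15, 11, 12, 14, 13, 0, 3, 8, 10, 1, 5, 4, 6],
  ![9, 11, 0, 14, 1, 15, 7, 4, 3, 5, 2, 13, 6, 8, 10, 12],
  ![10, 7, 11, 1, 13, 0, 12, 15, 5, 6, 4, 14, 3, 9, 8, 2],
  ![15, 2, 14, 0, 8, 9, 10, 3, 6, 7, 1, 12, 5, 4, 11, 13],
  ![3, 12, 8, 6, 2, 1, 4, 14, 9, 11, 13, 5, 10, 7, 15, 0],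
  ![11, 10, 1, 8, 3, 4, 2, 6, 7, 14, 0, 9, 15, 12, 13, 5],
  ![8, 13, 15, 7, 10, 14, 5, 2, 4, 1, 12, 0, 9, 6, 3, 11],
  ![7, 8, 12, 5, 14, 2, 0, 10, 15, 4, 3, 1, 13, 11, 6, 9],
  ![14, 6, 4, 9, 0, 7, 11, 12, 13, 15, 5, 8, 2, 3, 1, 10],
  ![1, 4, 10, 12, 5, 8, 13, 11, 14, 2, 7, 6, 0, 15, 9, 3]]

def e5 : Fin 15 → Fin 16 → Fin 16 :=
  ![![9, 7, 13, 6, 11, 0, 2, 12, 15, 10, 5, 8, 14, 3, 1, 4],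
  ![7, 13, 3, 1, 12, 14, 10, 4, 9, 6, 8, 5, 0, 2, 15, 11],
  ![14, 6, 8, 5, 15, 7, 4, 11, 12, 2, 13, 3, 9, 0, 10, 1],
  ![13, 15, 11, 2, 0, 1, 5, 14, 7, 4, 3, 10, 8, 9, 12, 6],
  ![1, 8, 14, 11, 3, 2, 0, 15, 6, 7, 9, 12, 4, 5, 13, 10],
  ![8, 12, 0, 9, 14, 13, 15, 2, 10, 1, 11, 4, 5, 7, 6, 3],
  ![2, 4, 10, 8, 7, 9, 12, 6, 13, 0, 14, 1, 15, 11, 3, 5],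
  ![5, 3, 15, 12, 10, 8, 9, 1, 14, 13, 0, 2, 6, 4, 11, 7],
  ![3, 10, 1, 7, 13, 12, 8, 9, 4, 5, 6, 14, 11, 15, 2, 0],
  ![15, 5, 4, 0, 6, 11, 3, 13, 2, 8, 12, 9, 1, 10, 7, 14],
  ![10, 2, 6, 4, 5, 15, 7, 8, 3, 11, 1, 0, 13, 14, 9, 12],
  ![11, 9, 7, 14, 8, 6, 13, 3, 0, 12, 4, 15, 10, 1, 5, 2],
  ![6, 11, 5, 10, 9, 3, 14, 0, 1, 15, 7, 13, 2, 12, 4, 8],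
  ![4, 14, 12, 13, 2, 10, 1, 5, 11, 3, 15, 6, 7, 8, 0, 9],
  ![12, 0, 9, 15, 1, 4, 11, 10, 5, 14, 2, 7, 3, 6, 8, 13]]

lemma hL5 : ∀ i x, e5 i (d5 i x) = x := by decide
lemma hR5 : ∀ i x, d5 i (e5 i x) = x := by decide

def s5 : Fin 15 → Equiv.Perm (Fin 16) := fun i => ⟨d5 i, e5 i, hL5 i, hR5 i⟩

lemma case5 : HWPStarSolution 16 4 16 5 10 := by
  refine ⟨s5, ?_, ?_, ?_⟩
  · have h : ∀ i : Fin 15, (i : ℕ) < 5 → cond4 (s5 i) := by decide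
    intro i hi x
    exact min4 _ (h i hi) x
  · have h : ∀ i : Fin 15, 5 ≤ (i : ℕ) → cond16 (s5 i) := by decide
    intro i hi x
    exact min16 _ (h i hi) x
  · have h : ∀ x y : Fin 16, x ≠ y →
        ∃ i : Fin 15, (s5 i x = y ∧ ∀ j : Fin 15, s5 j x = y → j = i) := by decide
    exact h

def d6 : Fin 15 → Fin 16 → Fin 16 :=
  ![![1, 8, 14, 12, 11, 4, 0, 3, 6, 7, 2, 13, 9, 5, 15, 10],
  ![5, 3, 9, 4, 8, 6, 11, 15, 1, 12, 7, 0, 14, 10, 2, 13],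
  ![4, 5, 8, 2, 9, 13, 10, 6, 14, 15, 11, 7, 1, 12, 3, 0],
  ![11, 13, 12, 14, 3, 15, 1, 4, 10, 6, 0, 8, 5, 9, 7, 2],
  ![6, 15, 11, 13, 0, 7, 12, 14, 2, 8, 5, 9, 4, 1, 10, 3],
  ![7, 12, 5, 15, 2, 9, 3, 13, 0, 4, 1, 10, 11, 8, 6, 14],
  ![9, 10, 1, 6, 14, 12, 15, 0, 13, 11, 4, 3, 2, 7, 8, 5],
  ![2, 4, 3, 8, 7, 14, 13, 12, 9, 5, 15, 6, 10, 0, 1, 11],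
  ![15, 7, 6, 0, 10, 2, 9, 11, 5, 3, 8, 14, 13, 4, 12, 1],
  ![10, 6, 15, 5, 13, 11, 7, 9, 4, 2, 3, 1, 8, 14, 0, 12],
  ![8, 0, 13, 7, 1, 10, 4, 2, 11, 14, 6, 12, 3, 15, 5, 9],
  ![12, 11, 7, 10, 5, 1, 14, 8, 3, 0, 13, 2, 15, 6, 9, 4],
  ![14, 2, 10, 9, 15, 3, 8, 5, 7, 1, 12, 4, 0, 11, 13, 6],
  ![3, 14, 4, 1, 6, 0, 5, 10, 12, 13, 9, 15, 7, 2, 11, 8],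
  ![13, 9, 0, 11, 12, 8, 2, 1, 15, 10, 14, 5, 6, 3, 4, 7]]

def e6 : Fin 15 → Fin 16 → Fin 16 :=
  ![![6, 0, 10, 7, 5, 13, 8, 9, 1, 12, 15, 4, 3, 11, 2, 14],
  ![11, 8, 14, 1, 3, 0, 5, 10, 4, 2, 13, 6, 9, 15, 12, 7],
  ![15, 12, 3, 14, 0, 1, 7, 11, 2, 4, 6, 10, 13, 5, 8, 9],
  ![10, 6, 15, 4, 7, 12, 9, 14, 11, 13, 8, 0, 2, 1, 3, 5],
  ![4, 13, 8, 15, 12, 10, 0, 5, 9, 11, 14, 2, 6, 3, 7, 1],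
  ![8, 10, 4, 6, 9, 2, 14, 0, 13, 5, 11, 12, 1, 7, 15, 3],
  ![7, 2, 12, 11, 10, 15, 3, 13, 14, 0, 1, 9, 5, 8, 4, 6],
  ![13, 14, 0, 2, 1, 9, 11, 4, 3, 8, 12, 15, 7, 6, 5, 10],
  ![3, 15, 5, 9, 13, 8, 2, 1, 10, 6, 4, 7, 14, 12, 11, 0],
  ![14, 11, 9, 10, 8, 3, 1, 6, 12, 7, 0, 5, 15, 4, 13, 2],
  ![1, 4, 7, 12, 6, 14, 10, 3, 0, 15, 5, 8, 11, 2, 9, 13],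
  ![9, 5, 11, 8, 15, 4, 13, 2, 7, 14, 3, 1, 0, 10, 6, 12],
  ![12, 9, 1, 5, 11, 7, 15, 8, 6, 3, 2, 13, 10, 14, 0, 4],
  ![5, 3, 13, 0, 2, 6, 4, 12, 15, 10, 7, 14, 8, 9, 1, 11],
  ![2, 7, 6, 13, 14, 11, 12, 15, 5, 1, 9, 3, 4, 0, 10, 8]]

lemma hL6 : ∀ i x, e6 i (d6 i x) = x := by decide
lemma hR6 : ∀ i x, d6 i (e6 i x) = x := by decide

def s6 : Fin 15 → Equiv.Perm (Fin 16) := fun i => ⟨d6 i, e6 i, hL6 i, hR6 i⟩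

lemma case6 : HWPStarSolution 16 4 16 6 9 := by
  refine ⟨s6, ?_, ?_, ?_⟩
  · have h : ∀ i : Fin 15, (i : ℕ) < 6 → cond4 (s6 i) := by decide
    intro i hi x
    exact min4 _ (h i hi) x
  · have h : ∀ i : Fin 15, 6 ≤ (i : ℕ) → cond16 (s6 i) := by decide
    intro i hi x
    exact min16 _ (h i hi) x
  · have h : ∀ x y : Fin 16, x ≠ y →
        ∃ i : Fin 15, (s6 i x = y ∧ ∀ j : Fin 15, s6 j x = y → j = i) := by decide
    exact h

def d7 : Fin 15 → Fin 16 → Fin 16 :=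
  ![![1, 8, 14, 12, 11, 4, 0, 3, 6, 7, 2, 13, 9, 5, 15, 10],
  ![5, 3, 9, 4, 8, 6, 11, 15, 1, 12, 7, 0, 14, 10, 2, 13],
  ![4, 5, 8, 2, 9, 13, 10, 6, 14, 15, 11, 7, 1, 12, 3, 0],
  ![11, 13, 12, 14, 3, 15, 1, 4, 10, 6, 0, 8, 5, 9, 7, 2],
  ![6, 15, 11, 13, 0, 7, 12, 14, 2, 8, 5, 9, 4, 1, 10, 3],
  ![7, 12, 5, 15, 2, 9, 3, 13, 0, 4, 1, 10, 11, 8, 6, 14],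
  ![9, 6, 13, 0, 7, 1, 15, 10, 4, 11, 8, 3, 2, 14, 12, 5],
  ![15, 10, 4, 1, 13, 14, 7, 5, 11, 2, 12, 6, 8, 3, 0, 9],
  ![14, 0, 6, 10, 1, 12, 5, 2, 9, 13, 4, 15, 3, 7, 11, 8],
  ![2, 11, 3, 6, 12, 8, 4, 1, 15, 5, 9, 14, 10, 0, 13, 7],
  ![12, 14, 10, 5, 15, 11, 8, 9, 7, 0, 3, 1, 13, 2, 4, 6],
  ![13, 4, 1, 11, 5, 0, 14, 8, 3, 10, 15, 2, 7, 6, 9, 12],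
  ![3, 7, 0, 9, 10, 2, 13, 12, 5, 1, 14, 4, 6, 15, 8, 11],
  ![10, 2, 7, 8, 6, 3, 9, 0, 12, 14, 13, 5, 15, 11, 1, 4],
  ![8, 9, 15, 7, 14, 10, 2, 11, 13, 3, 6, 12, 0, 4, 5, 1]]

def e7 : Fin 15 → Fin 16 → Fin 16 :=
  ![![6, 0, 10, 7, 5, 13, 8, 9, 1, 12, 15, 4, 3, 11, 2, 14],
  ![11, 8, 14, 1, 3, 0, 5, 10, 4, 2, 13, 6, 9, 15, 12, 7],
  ![15, 12, 3, 14, 0, 1, 7, 11, 2, 4, 6, 10, 13, 5, 8, 9],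
  ![10, 6, 15, 4, 7, 12, 9, 14, 11, 13, 8, 0, 2, 1, 3, 5],
  ![4, 13, 8, 15, 12, 10, 0, 5, 9, 11, 14, 2, 6, 3, 7, 1],
  ![8, 10, 4, 6, 9, 2, 14, 0, 13, 5, 11, 12, 1, 7, 15, 3],
  ![3, 5, 12, 11, 8, 15, 1, 4, 10, 0, 7, 9, 14, 2, 13, 6],
  ![14, 3, 9, 13, 2, 7, 11, 6, 12, 15, 1, 8, 10, 4, 5, 0],
  ![1, 4, 7, 12, 10, 6, 2, 13, 15, 8, 3, 14, 5, 9, 0, 11],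
  ![13, 7, 0, 2, 6, 9, 3, 15, 5, 10, 12, 1, 4, 14, 11, 8],
  ![9, 11, 13, 10, 14, 3, 15, 8, 6, 7, 2, 5, 0, 12, 1, 4],
  ![5, 2, 11, 8, 1, 4, 13, 12, 7, 14, 9, 3, 15, 0, 6, 10],
  ![2, 9, 5, 0, 11, 8, 12, 1, 14, 3, 4, 15, 7, 6, 10, 13],
  ![7, 14, 1, 5, 15, 11, 4, 2, 3, 6, 0, 13, 8, 10, 9, 12],
  ![12, 15, 6, 9, 13, 14, 10, 3, 0, 1, 5, 7, 11, 8, 4, 2]]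

lemma hL7 : ∀ i x, e7 i (d7 i x) = x := by decide
lemma hR7 : ∀ i x, d7 i (e7 i x) = x := by decide

def s7 : Fin 15 → Equiv.Perm (Fin 16) := fun i => ⟨d7 i, e7 i, hL7 i, hR7 i⟩

lemma case7 : HWPStarSolution 16 4 16 7 8 := by
  refine ⟨s7, ?_, ?_, ?_⟩
  · have h : ∀ i : Fin 15, (i : ℕ) < 7 → cond4 (s7 i) := by decide
    intro i hi x
    exact min4 _ (h i hi) x
  · have h : ∀ i : Fin 15, 7 ≤ (i : ℕ) → cond16 (s7 i) := by decide
    intro i hi x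
    exact min16 _ (h i hi) x
  · have h : ∀ x y : Fin 16, x ≠ y →
        ∃ i : Fin 15, (s7 i x = y ∧ ∀ j : Fin 15, s7 j x = y → j = i) := by decide
    exact h

def d8 : Fin 15 → Fin 16 → Fin 16 :=
  ![![14, 8, 13, 15, 10, 12, 9, 11, 7, 2, 5, 1, 4, 6, 3, 0],
  ![13, 2, 12, 9, 0, 11, 15, 5, 1, 6, 7, 10, 8, 14, 4, 3],
  ![10, 11, 4, 13, 8, 7, 2, 1, 6, 0, 14, 5, 3, 15, 9, 12],
  ![12, 9, 10, 2, 11, 1, 0, 4, 3, 13, 8, 14, 15, 5, 7, 6],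
  ![2, 10, 14, 8, 5, 3, 12, 9, 4, 11, 6, 15, 1, 0, 13, 7],
  ![3, 5, 7, 14, 6, 9, 10, 8, 13, 15, 11, 4, 0, 2, 12, 1],
  ![7, 12, 3, 6, 2, 10, 4, 15, 0, 14, 9, 13, 11, 1, 5, 8],
  ![1, 7, 11, 0, 13, 15, 5, 3, 12, 10, 4, 8, 2, 9, 6, 14],
  ![9, 13, 1, 4, 14, 0, 8, 12, 11, 7, 3, 2, 6, 10, 15, 5],
  ![11, 6, 15, 10, 12, 8, 13, 0, 14, 5, 2, 3, 7, 4, 1, 9],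
  ![15, 4, 6, 5, 7, 2, 11, 13, 9, 1, 12, 0, 14, 3, 8, 10],
  ![5, 15, 8, 1, 9, 6, 3, 14, 10, 12, 0, 7, 13, 11, 2, 4],
  ![8, 0, 9, 12, 1, 4, 14, 2, 15, 3, 13, 6, 5, 7, 10, 11],
  ![6, 3, 5, 11, 15, 14, 7, 10, 2, 4, 1, 12, 9, 8, 0, 13],
  ![4, 14, 0, 7, 3, 13, 1, 6, 5, 8, 15, 9, 10, 12, 11, 2]]

def e8 : Fin 15 → Fin 16 → Fin 16 :=
  ![![15, 11, 9, 14, 12, 10, 13, 8, 1, 6, 4, 7, 5, 2, 0, 3],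
  ![4, 8, 1, 15, 14, 7, 9, 10, 12, 3, 11, 5, 2, 0, 13, 6],
  ![9, 7, 6, 12, 2, 11, 8, 5, 4, 14, 0, 1, 15, 3, 10, 13],
  ![6, 5, 3, 8, 7, 13, 15, 14, 10, 1, 2, 4, 0, 9, 11, 12],
  ![13, 12, 0, 5, 8, 4, 10, 15, 3, 7, 1, 9, 6, 14, 2, 11],
  ![12, 15, 13, 0, 11, 1, 4, 2, 7, 5, 6, 10, 14, 8, 3, 9],
  ![8, 13, 4, 2, 6, 14, 3, 0, 15, 10, 5, 12, 1, 11, 9, 7],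
  ![3, 0, 12, 7, 10, 6, 14, 1, 11, 13, 9, 2, 8, 4, 15, 5],
  ![5, 2, 11, 10, 3, 15, 12, 9, 6, 0, 13, 8, 7, 1, 4, 14],
  ![7, 14, 10, 11, 13, 9, 1, 12, 5, 15, 3, 0, 4, 6, 8, 2],
  ![11, 9, 5, 13, 1, 3, 2, 4, 14, 8, 15, 6, 10, 7, 12, 0],
  ![10, 3, 14, 6, 15, 0, 5, 11, 2, 4, 8, 13, 9, 12, 7, 1],
  ![1, 4, 7, 9, 5, 12, 11, 13, 0, 2, 14, 15, 3, 10, 6, 8],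
  ![14, 10, 8, 1, 9, 2, 0, 6, 13, 12, 7, 3, 11, 15, 5, 4],
  ![2, 6, 15, 4, 0, 8, 7, 3, 9, 11, 12, 14, 13, 5, 1, 10]]

lemma hL8 : ∀ i x, e8 i (d8 i x) = x := by decide
lemma hR8 : ∀ i x, d8 i (e8 i x) = x := by decide

def s8 : Fin 15 → Equiv.Perm (Fin 16) := fun i => ⟨d8 i, e8 i, hL8 i, hR8 i⟩

lemma case8 : HWPStarSolution 16 4 16 8 7 := by
  refine ⟨s8, ?_, ?_, ?_⟩
  · have h : ∀ i : Fin 15, (i : ℕ) < 8 → cond4 (s8 i) := by decide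
    intro i hi x
    exact min4 _ (h i hi) x
  · have h : ∀ i : Fin 15, 8 ≤ (i : ℕ) → cond16 (s8 i) := by decide
    intro i hi x
    exact min16 _ (h i hi) x
  · have h : ∀ x y : Fin 16, x ≠ y →
        ∃ i : Fin 15, (s8 i x = y ∧ ∀ j : Fin 15, s8 j x = y → j = i) := by decide
    exact h

def d9 : Fin 15 → Fin 16 → Fin 16 :=
  ![![11, 12, 9, 13, 1, 2, 15, 4, 10, 14, 6, 3, 7, 0, 5, 8],
  ![8, 2, 10, 4, 11, 15, 14, 5, 6, 7, 12, 13, 1, 3, 0, 9],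
  ![4, 11, 6, 14, 9, 3, 12, 15, 5, 10, 0, 7, 13, 2, 8, 1],
  ![6, 5, 3, 12, 10, 0, 1, 11, 15, 2, 7, 4, 9, 8, 13, 14],
  ![9, 6, 15, 1, 12, 14, 8, 0, 3, 13, 5, 10, 2, 7, 11, 4],
  ![3, 10, 13, 7, 14, 6, 11, 9, 2, 0, 4, 15, 8, 12, 1, 5],
  ![2, 3, 1, 0, 5, 10, 13, 8, 12, 11, 14, 6, 15, 9, 4, 7],
  ![5, 13, 7, 8, 2, 9, 4, 6, 14, 12, 11, 1, 0, 10, 15, 3],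
  ![7, 9, 8, 5, 0, 1, 10, 13, 11, 3, 15, 14, 6, 4, 2, 12],
  ![14, 7, 4, 6, 15, 8, 2, 12, 0, 1, 3, 9, 5, 11, 10, 13],
  ![10, 14, 11, 15, 7, 12, 0, 1, 9, 6, 13, 8, 4, 5, 3, 2],
  ![12, 15, 14, 10, 8, 4, 7, 3, 13, 5, 9, 2, 11, 1, 6, 0],
  ![15, 0, 5, 2, 13, 7, 3, 10, 1, 4, 8, 12, 14, 6, 9, 11],
  ![1, 4, 0, 11, 3, 13, 9, 14, 7, 8, 2, 5, 10, 15, 12, 6],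
  ![13, 8, 12, 9, 6, 11, 5, 2, 4, 15, 1, 0, 3, 14, 7, 10]]

def e9 : Fin 15 → Fin 16 → Fin 16 :=
  ![![13, 4, 5, 11, 7, 14, 10, 12, 15, 2, 8, 0, 1, 3, 9, 6],
  ![14, 12, 1, 13, 3, 7, 8, 9, 0, 15, 2, 4, 10, 11, 6, 5],
  ![10, 15, 13, 5, 0, 8, 2, 11, 14, 4, 9, 1, 6, 12, 3, 7],
  ![5, 6, 9, 2, 11, 1, 0, 10, 13, 12, 4, 7, 3, 14, 15, 8],
  ![7, 3, 12, 8, 15, 10, 1, 13, 6, 0, 11, 14, 4, 9, 5, 2],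
  ![9, 14, 8, 0, 10, 15, 5, 3, 12, 7, 1, 6, 13, 2, 4, 11],
  ![3, 2, 0, 1, 14, 4, 11, 15, 7, 13, 5, 9, 8, 6, 10, 12],
  ![12, 11, 4, 15, 6, 0, 7, 2, 3, 5, 13, 10, 9, 1, 8, 14],
  ![4, 5, 14, 9, 13, 3, 12, 0, 2, 1, 6, 8, 15, 7, 11, 10],
  ![8, 9, 6, 10, 2, 12, 3, 1, 5, 11, 14, 13, 7, 15, 0, 4],
  ![6, 7, 15, 14, 12, 13, 9, 4, 11, 8, 0, 2, 5, 10, 1, 3],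
  ![15, 13, 11, 7, 5, 9, 14, 6, 4, 10, 3, 12, 0, 8, 2, 1],
  ![1, 8, 3, 6, 9, 2, 13, 5, 10, 14, 7, 15, 11, 4, 12, 0],
  ![2, 0, 10, 4, 1, 11, 15, 8, 9, 6, 12, 3, 14, 5, 7, 13],
  ![11, 10, 7, 12, 8, 6, 4, 14, 1, 3, 15, 5, 2, 0, 13, 9]]

lemma hL9 : ∀ i x, e9 i (d9 i x) = x := by decide
lemma hR9 : ∀ i x, d9 i (e9 i x) = x := by decide

def s9 : Fin 15 → Equiv.Perm (Fin 16) := fun i => ⟨d9 i, e9 i, hL9 i, hR9 i⟩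

lemma case9 : HWPStarSolution 16 4 16 9 6 := by
  refine ⟨s9, ?_, ?_, ?_⟩
  · have h : ∀ i : Fin 15, (i : ℕ) < 9 → cond4 (s9 i) := by decide
    intro i hi x
    exact min4 _ (h i hi) x
  · have h : ∀ i : Fin 15, 9 ≤ (i : ℕ) → cond16 (s9 i) := by decide
    intro i hi x
    exact min16 _ (h i hi) x
  · have h : ∀ x y : Fin 16, x ≠ y →
        ∃ i : Fin 15, (s9 i x = y ∧ ∀ j : Fin 15, s9 j x = y → j = i) := by decide
    exact h

def d10 : Fin 15 → Fin 16 → Fin 16 :=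
  ![![5, 10, 13, 0, 12, 15, 7, 1, 11, 14, 6, 4, 8, 9, 2, 3],
  ![12, 7, 10, 15, 8, 2, 14, 13, 6, 5, 9, 1, 3, 11, 4, 0],
  ![11, 2, 5, 14, 9, 10, 0, 6, 13, 15, 1, 7, 4, 3, 8, 12],
  ![7, 0, 9, 5, 14, 6, 11, 12, 10, 8, 2, 3, 1, 15, 13, 4],
  ![3, 11, 15, 4, 10, 12, 8, 2, 1, 13, 0, 6, 9, 5, 7, 14],
  ![6, 12, 3, 8, 7, 1, 13, 11, 15, 4, 5, 9, 10, 14, 0, 2],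
  ![15, 8, 4, 7, 1, 14, 9, 5, 2, 0, 12, 13, 11, 10, 3, 6],
  ![10, 13, 1, 12, 2, 0, 3, 9, 7, 11, 15, 8, 14, 4, 6, 5],
  ![4, 15, 0, 1, 11, 13, 12, 8, 14, 3, 7, 2, 5, 6, 10, 9],
  ![9, 5, 8, 13, 0, 11, 4, 10, 3, 6, 14, 15, 7, 2, 12, 1],
  ![8, 3, 14, 2, 6, 9, 10, 4, 5, 12, 13, 0, 15, 1, 11, 7],
  ![13, 6, 12, 10, 3, 4, 2, 14, 9, 1, 8, 5, 0, 7, 15, 11],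
  ![2, 14, 7, 6, 5, 3, 1, 15, 4, 10, 11, 12, 13, 0, 9, 8],
  ![14, 9, 6, 11, 15, 8, 5, 3, 0, 7, 4, 10, 2, 12, 1, 13],
  ![1, 4, 11, 9, 13, 7, 15, 0, 12, 2, 3, 14, 6, 8, 5, 10]]

def e10 : Fin 15 → Fin 16 → Fin 16 :=
  ![![3, 7, 14, 15, 11, 0, 10, 6, 12, 13, 1, 8, 4, 2, 9, 5],
  ![15, 11, 5, 12, 14, 9, 8, 1, 4, 10, 2, 13, 0, 7, 6, 3],
  ![6, 10, 1, 13, 12, 2, 7, 11, 14, 4, 5, 0, 15, 8, 3, 9],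
  ![1, 12, 10, 11, 15, 3, 5, 0, 9, 2, 8, 6, 7, 14, 4, 13],
  ![10, 8, 7, 0, 3, 13, 11, 14, 6, 12, 4, 1, 5, 9, 15, 2],
  ![14, 5, 15, 2, 9, 10, 0, 4, 3, 11, 12, 7, 1, 6, 13, 8],
  ![9, 4, 8, 14, 2, 7, 15, 3, 1, 6, 13, 12, 10, 11, 5, 0],
  ![5, 2, 4, 6, 13, 15, 14, 8, 11, 7, 0, 9, 3, 1, 12, 10],
  ![2, 3, 11, 9, 0, 12, 13, 10, 7, 15, 14, 4, 6, 5, 8, 1],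
  ![4, 15, 13, 8, 6, 1, 9, 12, 2, 0, 7, 5, 14, 3, 10, 11],
  ![11, 13, 3, 1, 7, 8, 4, 15, 0, 5, 6, 14, 9, 10, 2, 12],
  ![12, 9, 6, 4, 5, 11, 1, 13, 10, 8, 3, 15, 2, 0, 7, 14],
  ![13, 6, 0, 5, 8, 4, 3, 2, 15, 14, 9, 10, 11, 12, 1, 7],
  ![8, 14, 12, 7, 10, 6, 2, 9, 5, 1, 11, 3, 13, 15, 0, 4],
  ![7, 0, 9, 10, 1, 14, 12, 5, 13, 3, 15, 2, 8, 4, 11, 6]]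

lemma hL10 : ∀ i x, e10 i (d10 i x) = x := by decide
lemma hR10 : ∀ i x, d10 i (e10 i x) = x := by decide

def s10 : Fin 15 → Equiv.Perm (Fin 16) := fun i => ⟨d10 i, e10 i, hL10 i, hR10 i⟩

lemma case10 : HWPStarSolution 16 4 16 10 5 := by
  refine ⟨s10, ?_, ?_, ?_⟩
  · have h : ∀ i : Fin 15, (i : ℕ) < 10 → cond4 (s10 i) := by decide
    intro i hi x
    exact min4 _ (h i hi) x
  · have h : ∀ i : Fin 15, 10 ≤ (i : ℕ) → cond16 (s10 i) := by decide
    intro i hi x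
    exact min16 _ (h i hi) x
  · have h : ∀ x y : Fin 16, x ≠ y →
        ∃ i : Fin 15, (s10 i x = y ∧ ∀ j : Fin 15, s10 j x = y → j = i) := by decide
    exact h

def d11 : Fin 15 → Fin 16 → Fin 16 :=
  ![![14, 11, 7, 8, 6, 13, 15, 3, 2, 1, 9, 10, 4, 0, 5, 12],
  ![5, 6, 12, 4, 1, 15, 3, 8, 10, 2, 13, 0, 14, 7, 9, 11],
  ![9, 8, 1, 10, 12, 0, 5, 11, 13, 6, 4, 15, 3, 2, 7, 14],
  ![10, 3, 8, 9, 13, 11, 14, 1, 5, 7, 12, 2, 15, 6, 4, 0],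
  ![7, 5, 6, 2, 9, 14, 8, 4, 3, 0, 11, 13, 1, 15, 12, 10],
  ![4, 9, 3, 11, 10, 6, 7, 15, 0, 14, 8, 12, 2, 1, 13, 5],
  ![2, 15, 4, 0, 3, 7, 12, 6, 1, 10, 14, 9, 5, 8, 11, 13],
  ![13, 14, 10, 1, 11, 2, 0, 5, 9, 4, 7, 8, 6, 12, 15, 3],
  ![15, 13, 5, 14, 0, 10, 2, 9, 4, 12, 6, 7, 11, 3, 1, 8],
  ![3, 12, 0, 7, 15, 4, 11, 2, 6, 5, 1, 14, 13, 10, 8, 9],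
  ![8, 0, 9, 6, 5, 3, 4, 12, 11, 13, 15, 1, 10, 14, 2, 7],
  ![1, 7, 11, 13, 8, 9, 10, 14, 12, 15, 3, 4, 0, 5, 6, 2],
  ![11, 10, 14, 15, 2, 12, 9, 13, 7, 3, 5, 6, 8, 4, 0, 1],
  ![6, 2, 13, 12, 14, 8, 1, 10, 15, 11, 0, 5, 7, 9, 3, 4],
  ![12, 4, 15, 5, 7, 1, 13, 0, 14, 8, 2, 3, 9, 11, 10, 6]]

def e11 : Fin 15 → Fin 16 → Fin 16 :=
  ![![13, 9, 8, 7, 12, 14, 4, 2, 3, 10, 11, 1, 15, 5, 0, 6],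
  ![11, 4, 9, 6, 3, 0, 1, 13, 7, 14, 8, 15, 2, 10, 12, 5],
  ![5, 2, 13, 12, 10, 6, 9, 14, 1, 0, 3, 7, 4, 8, 15, 11],
  ![15, 7, 11, 1, 14, 8, 13, 9, 2, 3, 0, 5, 10, 4, 6, 12],
  ![9, 12, 3, 8, 7, 1, 2, 0, 6, 4, 15, 10, 14, 11, 5, 13],
  ![8, 13, 12, 2, 0, 15, 5, 6, 10, 1, 4, 3, 11, 14, 9, 7],
  ![3, 8, 0, 4, 2, 12, 7, 5, 13, 11, 9, 14, 6, 15, 10, 1],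
  ![6, 3, 5, 15, 9, 7, 12, 10, 11, 8, 2, 4, 13, 0, 1, 14],
  ![4, 14, 6, 13, 8, 2, 10, 11, 15, 7, 5, 12, 9, 1, 3, 0],
  ![2, 10, 7, 0, 5, 9, 8, 3, 14, 15, 13, 6, 1, 12, 11, 4],
  ![1, 11, 14, 5, 6, 4, 3, 15, 0, 2, 12, 8, 7, 9, 13, 10],
  ![12, 0, 15, 10, 11, 13, 14, 1, 4, 5, 6, 2, 8, 3, 7, 9],
  ![14, 15, 4, 9, 13, 10, 11, 8, 12, 6, 1, 0, 5, 7, 2, 3],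
  ![10, 6, 1, 14, 15, 11, 0, 12, 5, 13, 7, 9, 3, 2, 4, 8],
  ![7, 5, 10, 11, 1, 3, 15, 4, 9, 12, 14, 13, 0, 6, 8, 2]]

lemma hL11 : ∀ i x, e11 i (d11 i x) = x := by decide
lemma hR11 : ∀ i x, d11 i (e11 i x) = x := by decide

def s11 : Fin 15 → Equiv.Perm (Fin 16) := fun i => ⟨d11 i, e11 i, hL11 i, hR11 i⟩

lemma case11 : HWPStarSolution 16 4 16 11 4 := by
  refine ⟨s11, ?_, ?_, ?_⟩
  · have h : ∀ i : Fin 15, (i : ℕ) < 11 → cond4 (s11 i) := by decide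
    intro i hi x
    exact min4 _ (h i hi) x
  · have h : ∀ i : Fin 15, 11 ≤ (i : ℕ) → cond16 (s11 i) := by decide
    intro i hi x
    exact min16 _ (h i hi) x
  · have h : ∀ x y : Fin 16, x ≠ y →
        ∃ i : Fin 15, (s11 i x = y ∧ ∀ j : Fin 15, s11 j x = y → j = i) := by decide
    exact h

def d12 : Fin 15 → Fin 16 → Fin 16 :=
  ![![2, 5, 1, 15, 13, 0, 9, 6, 11, 14, 8, 12, 10, 3, 7, 4],
  ![10, 13, 6, 14, 12, 1, 15, 11, 5, 2, 7, 0, 3, 8, 4, 9],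
  ![3, 0, 7, 4, 1, 10, 11, 13, 15, 8, 6, 5, 2, 12, 9, 14],
  ![12, 9, 14, 6, 11, 8, 4, 10, 2, 15, 0, 3, 7, 1, 5, 13],
  ![7, 6, 12, 9, 0, 15, 5, 8, 4, 10, 14, 13, 11, 2, 3, 1],
  ![15, 2, 10, 12, 7, 14, 13, 3, 9, 0, 11, 1, 4, 5, 6, 8],
  ![6, 15, 5, 1, 8, 11, 12, 2, 13, 4, 3, 7, 14, 9, 0, 10],
  ![8, 14, 4, 13, 5, 6, 2, 1, 3, 11, 12, 10, 9, 0, 15, 7],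
  ![11, 10, 0, 7, 2, 9, 8, 5, 12, 3, 13, 4, 15, 14, 1, 6],
  ![14, 3, 15, 11, 9, 2, 10, 0, 1, 6, 4, 8, 5, 7, 13, 12],
  ![4, 8, 13, 5, 10, 12, 3, 9, 7, 1, 15, 14, 6, 11, 2, 0],
  ![1, 12, 9, 10, 3, 4, 7, 14, 0, 13, 5, 6, 8, 15, 11, 2],
  ![5, 4, 3, 0, 15, 13, 14, 12, 10, 7, 9, 2, 1, 6, 8, 11],
  ![9, 11, 8, 2, 14, 7, 0, 4, 6, 5, 1, 15, 13, 10, 12, 3],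
  ![13, 7, 11, 8, 6, 3, 1, 15, 14, 12, 2, 9, 0, 4, 10, 5]]

def e12 : Fin 15 → Fin 16 → Fin 16 :=
  ![![5, 2, 0, 13, 15, 1, 7, 14, 10, 6, 12, 8, 11, 4, 9, 3],
  ![11, 5, 9, 12, 14, 8, 2, 10, 13, 15, 0, 7, 4, 1, 3, 6],
  ![1, 4, 12, 0, 3, 11, 10, 2, 9, 14, 5, 6, 13, 7, 15, 8],
  ![10, 13, 8, 11, 6, 14, 3, 12, 5, 1, 7, 4, 0, 15, 2, 9],
  ![4, 15, 13, 14, 8, 6, 1, 0, 7, 3, 9, 12, 2, 11, 10, 5],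
  ![9, 11, 1, 7, 12, 13, 14, 4, 15, 8, 2, 10, 3, 6, 5, 0],
  ![14, 3, 7, 10, 9, 2, 0, 11, 4, 13, 15, 5, 6, 8, 12, 1],
  ![13, 7, 6, 8, 2, 4, 5, 15, 0, 12, 11, 9, 10, 3, 1, 14],
  ![2, 14, 4, 9, 11, 7, 15, 3, 6, 5, 1, 0, 8, 10, 13, 12],
  ![7, 8, 5, 1, 10, 12, 9, 13, 11, 4, 6, 3, 15, 14, 0, 2],
  ![15, 9, 14, 6, 0, 3, 12, 8, 1, 7, 4, 13, 5, 2, 11, 10],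
  ![8, 0, 15, 4, 5, 10, 11, 6, 12, 2, 3, 14, 1, 9, 7, 13],
  ![3, 12, 11, 2, 1, 0, 13, 9, 14, 10, 8, 15, 7, 5, 6, 4],
  ![6, 10, 3, 15, 7, 9, 8, 5, 2, 0, 13, 1, 14, 12, 4, 11],
  ![12, 6, 10, 5, 13, 15, 4, 1, 3, 11, 14, 2, 9, 0, 8, 7]]

lemma hL12 : ∀ i x, e12 i (d12 i x) = x := by decide
lemma hR12 : ∀ i x, d12 i (e12 i x) = x := by decide

def s12 : Fin 15 → Equiv.Perm (Fin 16) := fun i => ⟨d12 i, e12 i, hL12 i, hR12 i⟩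

lemma case12 : HWPStarSolution 16 4 16 12 3 := by
  refine ⟨s12, ?_, ?_, ?_⟩
  · have h : ∀ i : Fin 15, (i : ℕ) < 12 → cond4 (s12 i) := by decide
    intro i hi x
    exact min4 _ (h i hi) x
  · have h : ∀ i : Fin 15, 12 ≤ (i : ℕ) → cond16 (s12 i) := by decide
    intro i hi x
    exact min16 _ (h i hi) x
  · have h : ∀ x y : Fin 16, x ≠ y →
        ∃ i : Fin 15, (s12 i x = y ∧ ∀ j : Fin 15, s12 j x = y → j = i) := by decide
    exact h

def d13 : Fin 15 → Fin 16 → Fin 16 :=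
  ![![1, 11, 13, 4, 9, 6, 7, 10, 2, 12, 5, 15, 3, 14, 8, 0],
  ![5, 8, 0, 11, 15, 7, 10, 2, 13, 1, 14, 4, 6, 9, 12, 3],
  ![2, 15, 5, 14, 0, 4, 1, 3, 12, 7, 13, 6, 10, 8, 9, 11],
  ![3, 9, 7, 5, 12, 14, 15, 8, 11, 6, 4, 2, 13, 10, 0, 1],
  ![6, 12, 11, 0, 5, 1, 8, 14, 3, 13, 9, 7, 4, 15, 2, 10],
  ![15, 3, 9, 10, 8, 13, 4, 0, 14, 5, 11, 1, 7, 2, 6, 12],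
  ![8, 4, 12, 15, 11, 2, 3, 6, 9, 10, 0, 13, 14, 1, 5, 7],
  ![13, 5, 3, 6, 10, 8, 12, 1, 7, 0, 15, 9, 2, 11, 4, 14],
  ![10, 0, 6, 1, 2, 11, 13, 15, 5, 14, 3, 12, 8, 4, 7, 9],
  ![14, 10, 1, 7, 13, 3, 2, 11, 0, 4, 6, 5, 9, 12, 15, 8],
  ![11, 14, 4, 9, 3, 15, 0, 5, 6, 2, 12, 8, 1, 7, 10, 13],
  ![9, 2, 8, 13, 1, 0, 14, 12, 4, 15, 7, 10, 11, 6, 3, 5],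
  ![4, 6, 10, 12, 7, 9, 11, 13, 15, 3, 8, 14, 5, 0, 1, 2],
  ![7, 13, 15, 2, 14, 12, 9, 4, 10, 8, 1, 3, 0, 5, 11, 6],
  ![12, 7, 14, 8, 6, 10, 5, 9, 1, 11, 2, 0, 15, 3, 13, 4]]

def e13 : Fin 15 → Fin 16 → Fin 16 :=
  ![![15, 0, 8, 12, 3, 10, 5, 6, 14, 4, 7, 1, 9, 2, 13, 11],
  ![2, 9, 7, 15, 11, 0, 12, 5, 1, 13, 6, 3, 14, 8, 10, 4],
  ![4, 6, 0, 7, 5, 2, 11, 9, 13, 14, 12, 15, 8, 10, 3, 1],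
  ![14, 15, 11, 0, 10, 3, 9, 2, 7, 1, 13, 8, 4, 12, 5, 6],
  ![3, 5, 14, 8, 12, 4, 0, 11, 6, 10, 15, 2, 1, 9, 7, 13],
  ![7, 11, 13, 1, 6, 9, 14, 12, 4, 2, 3, 10, 15, 5, 8, 0],
  ![10, 13, 5, 6, 1, 14, 7, 15, 0, 8, 9, 4, 2, 11, 12, 3],
  ![9, 7, 12, 2, 14, 1, 3, 8, 5, 11, 4, 13, 6, 0, 15, 10],
  ![1, 3, 4, 10, 13, 8, 2, 14, 12, 15, 0, 5, 11, 6, 9, 7],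
  ![8, 2, 6, 5, 9, 11, 10, 3, 15, 12, 1, 7, 13, 4, 0, 14],
  ![6, 12, 9, 4, 2, 7, 8, 13, 11, 3, 14, 0, 10, 15, 1, 5],
  ![5, 4, 1, 14, 8, 15, 13, 10, 2, 0, 11, 12, 7, 3, 6, 9],
  ![13, 14, 15, 9, 0, 12, 1, 4, 10, 5, 2, 6, 3, 7, 11, 8],
  ![12, 10, 3, 11, 7, 13, 15, 0, 9, 6, 8, 14, 5, 1, 4, 2],
  ![11, 8, 10, 13, 15, 6, 4, 1, 3, 7, 5, 9, 0, 14, 2, 12]]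

lemma hL13 : ∀ i x, e13 i (d13 i x) = x := by decide
lemma hR13 : ∀ i x, d13 i (e13 i x) = x := by decide

def s13 : Fin 15 → Equiv.Perm (Fin 16) := fun i => ⟨d13 i, e13 i, hL13 i, hR13 i⟩

lemma case13 : HWPStarSolution 16 4 16 13 2 := by
  refine ⟨s13, ?_, ?_, ?_⟩
  · have h : ∀ i : Fin 15, (i : ℕ) < 13 → cond4 (s13 i) := by decide
    intro i hi x
    exact min4 _ (h i hi) x
  · have h : ∀ i : Fin 15, 13 ≤ (i : ℕ) → cond16 (s13 i) := by decide
    intro i hi x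
    exact min16 _ (h i hi) x
  · have h : ∀ x y : Fin 16, x ≠ y →
        ∃ i : Fin 15, (s13 i x = y ∧ ∀ j : Fin 15, s13 j x = y → j = i) := by decide
    exact h

def d14 : Fin 15 → Fin 16 → Fin 16 :=
  ![![10, 5, 15, 0, 14, 11, 12, 13, 3, 1, 8, 9, 4, 2, 6, 7],
  ![7, 11, 12, 2, 8, 13, 15, 1, 6, 3, 5, 0, 9, 14, 10, 4],
  ![2, 9, 8, 13, 1, 4, 10, 15, 12, 5, 7, 14, 0, 11, 3, 6],
  ![8, 7, 3, 1, 11, 0, 13, 2, 14, 4, 12, 15, 6, 10, 5, 9],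
  ![1, 15, 11, 8, 7, 2, 14, 3, 4, 10, 6, 12, 5, 0, 9, 13],
  ![6, 14, 5, 4, 12, 1, 9, 0, 10, 7, 15, 8, 13, 3, 2, 11],
  ![15, 13, 0, 5, 3, 14, 8, 12, 9, 11, 2, 6, 1, 7, 4, 10],
  ![13, 0, 9, 15, 10, 3, 1, 4, 5, 12, 14, 2, 11, 6, 7, 8],
  ![11, 12, 7, 10, 15, 6, 0, 9, 2, 8, 4, 5, 14, 1, 13, 3],
  ![12, 10, 4, 11, 0, 8, 3, 6, 13, 14, 9, 7, 2, 15, 1, 5],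
  ![4, 6, 10, 14, 13, 15, 2, 5, 11, 0, 1, 3, 7, 9, 8, 12],
  ![9, 3, 6, 12, 2, 7, 11, 10, 1, 15, 13, 4, 8, 5, 0, 14],
  ![14, 8, 13, 6, 9, 10, 5, 11, 7, 2, 3, 1, 15, 4, 12, 0],
  ![3, 2, 14, 7, 5, 9, 4, 8, 0, 6, 11, 13, 10, 12, 15, 1],
  ![5, 4, 1, 9, 6, 12, 7, 14, 15, 13, 0, 10, 3, 8, 11, 2]]

def e14 : Fin 15 → Fin 16 → Fin 16 :=
  ![![3, 9, 13, 8, 12, 1, 14, 15, 10, 11, 0, 5, 6, 7, 4, 2],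
  ![11, 7, 3, 9, 15, 10, 8, 0, 4, 12, 14, 1, 2, 5, 13, 6],
  ![12, 4, 0, 14, 5, 9, 15, 10, 2, 1, 6, 13, 8, 3, 11, 7],
  ![5, 3, 7, 2, 9, 14, 12, 1, 0, 15, 13, 4, 10, 6, 8, 11],
  ![13, 0, 5, 7, 8, 12, 10, 4, 3, 14, 9, 2, 11, 15, 6, 1],
  ![7, 5, 14, 13, 3, 2, 0, 9, 11, 6, 8, 15, 4, 12, 1, 10],
  ![2, 12, 10, 4, 14, 3, 11, 13, 6, 8, 15, 9, 7, 1, 5, 0],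
  ![1, 6, 11, 5, 7, 8, 13, 14, 15, 2, 4, 12, 9, 0, 10, 3],
  ![6, 13, 8, 15, 10, 11, 5, 2, 9, 7, 3, 0, 1, 14, 12, 4],
  ![4, 14, 12, 6, 2, 15, 7, 11, 5, 10, 1, 3, 0, 8, 9, 13],
  ![9, 10, 6, 11, 0, 7, 1, 12, 14, 13, 2, 8, 15, 4, 3, 5],
  ![14, 8, 4, 1, 11, 13, 2, 5, 12, 0, 7, 6, 3, 10, 15, 9],
  ![15, 11, 9, 10, 13, 6, 3, 8, 1, 4, 5, 7, 14, 2, 0, 12],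
  ![8, 15, 1, 0, 6, 4, 9, 3, 7, 5, 12, 10, 13, 11, 2, 14],
  ![10, 2, 15, 12, 1, 0, 4, 6, 13, 3, 11, 14, 5, 9, 7, 8]]

lemma hL14 : ∀ i x, e14 i (d14 i x) = x := by decide
lemma hR14 : ∀ i x, d14 i (e14 i x) = x := by decide

def s14 : Fin 15 → Equiv.Perm (Fin 16) := fun i => ⟨d14 i, e14 i, hL14 i, hR14 i⟩

lemma case14 : HWPStarSolution 16 4 16 14 1 := by
  refine ⟨s14, ?_, ?_, ?_⟩
  · have h : ∀ i : Fin 15, (i : ℕ) < 14 → cond4 (s14 i) := by decide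
    intro i hi x
    exact min4 _ (h i hi) x
  · have h : ∀ i : Fin 15, 14 ≤ (i : ℕ) → cond16 (s14 i) := by decide
    intro i hi x
    exact min16 _ (h i hi) x
  · have h : ∀ x y : Fin 16, x ≠ y →
        ∃ i : Fin 15, (s14 i x = y ∧ ∀ j : Fin 15, s14 j x = y → j = i) := by decide
    exact h

def d15 : Fin 15 → Fin 16 → Fin 16 :=
  ![![5, 7, 1, 0, 2, 6, 3, 4, 13, 15, 9, 8, 10, 14, 11, 12],
  ![4, 5, 0, 6, 7, 3, 1, 2, 12, 13, 8, 14, 15, 11, 9, 10],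
  ![3, 6, 7, 5, 0, 4, 2, 1, 11, 14, 15, 13, 8, 12, 10, 9],
  ![1, 4, 3, 7, 6, 2, 0, 5, 9, 12, 11, 15, 14, 10, 8, 13],
  ![2, 3, 6, 4, 5, 1, 7, 0, 10, 11, 14, 12, 13, 9, 15, 8],
  ![6, 0, 5, 2, 1, 7, 4, 3, 14, 8, 13, 10, 9, 15, 12, 11],
  ![7, 2, 4, 1, 3, 0, 5, 6, 15, 10, 12, 9, 11, 8, 13, 14],
  ![8, 9, 10, 11, 12, 13, 14, 15, 4, 5, 6, 7, 0, 1, 2, 3],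
  ![12, 13, 14, 15, 8, 9, 10, 11, 0, 1, 2, 3, 4, 5, 6, 7],
  ![9, 10, 11, 12, 13, 14, 15, 8, 3, 4, 5, 6, 7, 0, 1, 2],
  ![13, 14, 15, 8, 9, 10, 11, 12, 7, 0, 1, 2, 3, 4, 5, 6],
  ![10, 11, 12, 13, 14, 15, 8, 9, 2, 3, 4, 5, 6, 7, 0, 1],
  ![14, 15, 8, 9, 10, 11, 12, 13, 6, 7, 0, 1, 2, 3, 4, 5],
  ![11, 12, 13, 14, 15, 8, 9, 10, 1, 2, 3, 4, 5, 6, 7, 0],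
  ![15, 8, 9, 10, 11, 12, 13, 14, 5, 6, 7, 0, 1, 2, 3, 4]]

def e15 : Fin 15 → Fin 16 → Fin 16 :=
  ![![3, 2, 4, 6, 7, 0, 5, 1, 11, 10, 12, 14, 15, 8, 13, 9],
  ![2, 6, 7, 5, 0, 1, 3, 4, 10, 14, 15, 13, 8, 9, 11, 12],
  ![4, 7, 6, 0, 5, 3, 1, 2, 12, 15, 14, 8, 13, 11, 9, 10],
  ![6, 0, 5, 2, 1, 7, 4, 3, 14, 8, 13, 10, 9, 15, 12, 11],
  ![7, 5, 0, 1, 3, 4, 2, 6, 15, 13, 8, 9, 11, 12, 10, 14],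
  ![1, 4, 3, 7, 6, 2, 0, 5, 9, 12, 11, 15, 14, 10, 8, 13],
  ![5, 3, 1, 4, 2, 6, 7, 0, 13, 11, 9, 12, 10, 14, 15, 8],
  ![12, 13, 14, 15, 8, 9, 10, 11, 0, 1, 2, 3, 4, 5, 6, 7],
  ![8, 9, 10, 11, 12, 13, 14, 15, 4, 5, 6, 7, 0, 1, 2, 3],
  ![13, 14, 15, 8, 9, 10, 11, 12, 7, 0, 1, 2, 3, 4, 5, 6],
  ![9, 10, 11, 12, 13, 14, 15, 8, 3, 4, 5, 6, 7, 0, 1, 2],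
  ![14, 15, 8, 9, 10, 11, 12, 13, 6, 7, 0, 1, 2, 3, 4, 5],
  ![10, 11, 12, 13, 14, 15, 8, 9, 2, 3, 4, 5, 6, 7, 0, 1],
  ![15, 8, 9, 10, 11, 12, 13, 14, 5, 6, 7, 0, 1, 2, 3, 4],
  ![11, 12, 13, 14, 15, 8, 9, 10, 1, 2, 3, 4, 5, 6, 7, 0]]

lemma hL15 : ∀ i x, e15 i (d15 i x) = x := by decide
lemma hR15 : ∀ i x, d15 i (e15 i x) = x := by decide

def s15 : Fin 15 → Equiv.Perm (Fin 16) := fun i => ⟨d15 i, e15 i, hL15 i, hR15 i⟩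

lemma case15 : HWPStarSolution 16 4 16 15 0 := by
  refine ⟨s15, ?_, ?_, ?_⟩
  · have h : ∀ i : Fin 15, (i : ℕ) < 15 → cond4 (s15 i) := by decide
    intro i hi x
    exact min4 _ (h i hi) x
  · have h : ∀ i : Fin 15, 15 ≤ (i : ℕ) → cond16 (s15 i) := by decide
    intro i hi x
    exact min16 _ (h i hi) x
  · have h : ∀ x y : Fin 16, x ≠ y →
        ∃ i : Fin 15, (s15 i x = y ∧ ∀ j : Fin 15, s15 j x = y → j = i) := by decide
    exact h

end HWPAux

/-- HWP*(16; 4^r, 16^s) has a solution if and only if r + s = 15. -/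
theorem hwpStar_16_4_16 (r s : ℕ) :
    HWPStarSolution 16 4 16 r s ↔ r + s = 15 := by
  constructor
  · exact HWPAux.forward r s
  · intro h
    have hr : r ≤ 15 := by omega
    have hs : s = 15 - r := by omega
    subst hs
    interval_cases r
    · exact HWPAux.case0
    · exact HWPAux.case1
    · exact HWPAux.case2
    · exact HWPAux.case3
    · exact HWPAux.case4
    · exact HWPAux.case5
    · exact HWPAux.case6
    · exact HWPAux.case7
    · exact HWPAux.case8
    · exact HWPAux.case9
    · exact HWPAux.case10
    · exact HWPAux.case11
    · exact HWPAux.case12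
    · exact HWPAux.case13
    · exact HWPAux.case14
    · exact HWPAux.case15
end

section
/- (Lemma 3.7, case (8,16).) For all nonnegative integers r and s, there exists a solution to HWP*(16; 8^r, 16^s) if and only if r + s = 15. -/
set_option maxRecDepth 40000
set_option maxHeartbeats 4000000


private lemma mp8 {f : Fin 16 → Fin 16} {x : Fin 16} (h1 : f^[8] x = x)
    (h2 : ¬ f^[4] x = x) : Function.minimalPeriod f x = 8 := by
  have hd : Function.minimalPeriod f x ∣ 8 := Function.IsPeriodicPt.minimalPeriod_dvd h1
  have h4 : ¬ Function.minimalPeriod f x ∣ 4 := fun hh =>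
    h2 (Function.isPeriodicPt_iff_minimalPeriod_dvd.mpr hh)
  have hle : Function.minimalPeriod f x ≤ 8 := Nat.le_of_dvd (by norm_num) hd
  interval_cases h : Function.minimalPeriod f x <;> omega

private lemma mp16 {f : Fin 16 → Fin 16} {x : Fin 16} (h1 : f^[16] x = x)
    (h2 : ¬ f^[8] x = x) : Function.minimalPeriod f x = 16 := by
  have hd : Function.minimalPeriod f x ∣ 16 := Function.IsPeriodicPt.minimalPeriod_dvd h1
  have h8 : ¬ Function.minimalPeriod f x ∣ 8 := fun hh =>
    h2 (Function.isPeriodicPt_iff_minimalPeriod_dvd.mpr hh)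
  have hle : Function.minimalPeriod f x ≤ 16 := Nat.le_of_dvd (by norm_num) hd
  interval_cases h : Function.minimalPeriod f x <;> omega

private lemma hwp_aux {r s : ℕ} (σ : Fin (r + s) → Equiv.Perm (Fin 16))
    (h1 : ∀ i : Fin (r + s), (i : ℕ) < r → ∀ x,
      (⇑(σ i))^[8] x = x ∧ ¬ (⇑(σ i))^[4] x = x)
    (h2 : ∀ i : Fin (r + s), r ≤ (i : ℕ) → ∀ x,
      (⇑(σ i))^[16] x = x ∧ ¬ (⇑(σ i))^[8] x = x)
    (h3 : ∀ x y : Fin 16, x ≠ y →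
      ∃ i : Fin (r + s), σ i x = y ∧ ∀ j : Fin (r + s), σ j x = y → j = i) :
    HWPStarSolution 16 8 16 r s :=
  ⟨σ, fun i hi x => mp8 (h1 i hi x).1 (h1 i hi x).2,
      fun i hi x => mp16 (h2 i hi x).1 (h2 i hi x).2, h3⟩

private lemma hwp_forward {r s : ℕ} (h : HWPStarSolution 16 8 16 r s) : r + s = 15 := by
  obtain ⟨σ, h1, h2, h3⟩ := h
  have hfpf : ∀ (i : Fin (r + s)) (x : Fin 16), σ i x ≠ x := by
    intro i x hx
    have hone : Function.minimalPeriod ⇑(σ i) x = 1 :=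
      Function.minimalPeriod_eq_one_iff_isFixedPt.mpr hx
    rcases lt_or_ge (i : ℕ) r with hi | hi
    · have := h1 i hi x; omega
    · have := h2 i hi x; omega
  let F : Fin (r + s) × Fin 16 → {p : Fin 16 × Fin 16 // p.1 ≠ p.2} :=
    fun ix => ⟨(ix.2, σ ix.1 ix.2), fun hp => hfpf ix.1 ix.2 hp.symm⟩
  have hbij : Function.Bijective F := by
    constructor
    · rintro ⟨i, x⟩ ⟨j, y⟩ hij
      have hxy : x = y := congrArg (fun p => p.1.1) hij
      subst hxy
      have hσ : σ i x = σ j x := congrArg (fun p => p.1.2) hij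
      obtain ⟨k, _, hk⟩ := h3 x (σ i x) (fun hh => hfpf i x hh.symm)
      have := (hk i rfl).trans (hk j hσ.symm).symm
      exact Prod.ext (by exact this) rfl
    · rintro ⟨⟨x, y⟩, hxy⟩
      obtain ⟨i, hi, _⟩ := h3 x y hxy
      exact ⟨(i, x), Subtype.ext (by simp [F, hi])⟩
  have hc := Fintype.card_congr (Equiv.ofBijective F hbij)
  have hc2 : Fintype.card {p : Fin 16 × Fin 16 // p.1 ≠ p.2} = 240 := by decide
  rw [Fintype.card_prod, Fintype.card_fin, Fintype.card_fin, hc2] at hc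
  omega

private def p0_0 : Equiv.Perm (Fin 16) :=
  ⟨![9, 12, 15, 11, 3, 13, 7, 2, 14, 8, 4, 5, 10, 6, 1, 0], ![15, 14, 7, 4, 10, 11, 13, 6, 9, 0, 12, 3, 1, 5, 8, 2], by decide, by decide⟩

private def p0_1 : Equiv.Perm (Fin 16) :=
  ⟨![15, 9, 14, 5, 8, 6, 13, 3, 12, 10, 11, 0, 1, 4, 7, 2], ![11, 12, 15, 7, 13, 3, 5, 14, 4, 1, 9, 10, 8, 6, 2, 0], by decide, by decide⟩

private def p0_2 : Equiv.Perm (Fin 16) :=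
  ⟨![13, 3, 12, 14, 10, 7, 4, 8, 11, 5, 1, 2, 6, 15, 0, 9], ![14, 10, 11, 1, 6, 9, 12, 5, 7, 15, 4, 8, 2, 0, 3, 13], by decide, by decide⟩

private def p0_3 : Equiv.Perm (Fin 16) :=
  ⟨![11, 13, 10, 15, 12, 14, 3, 1, 2, 0, 7, 8, 9, 5, 6, 4], ![9, 7, 8, 6, 15, 13, 14, 10, 11, 12, 2, 0, 4, 1, 5, 3], by decide, by decide⟩

private def p0_4 : Equiv.Perm (Fin 16) :=
  ⟨![5, 0, 4, 8, 13, 2, 11, 6, 1, 15, 9, 3, 14, 12, 10, 7], ![1, 8, 5, 11, 2, 0, 7, 15, 3, 10, 14, 6, 13, 4, 12, 9], by decide, by decide⟩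

private def p0_5 : Equiv.Perm (Fin 16) :=
  ⟨![12, 4, 6, 1, 15, 9, 10, 0, 13, 7, 3, 14, 8, 2, 5, 11], ![7, 3, 13, 10, 1, 14, 2, 9, 12, 5, 6, 15, 0, 8, 11, 4], by decide, by decide⟩

private def p0_6 : Equiv.Perm (Fin 16) :=
  ⟨![8, 7, 13, 10, 0, 11, 12, 5, 6, 4, 2, 15, 3, 1, 9, 14], ![4, 13, 10, 12, 9, 7, 8, 1, 0, 14, 3, 5, 6, 2, 15, 11], by decide, by decide⟩

private def p0_7 : Equiv.Perm (Fin 16) :=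
  ⟨![7, 6, 8, 0, 2, 12, 9, 14, 3, 11, 5, 4, 15, 10, 13, 1], ![3, 15, 4, 8, 11, 10, 1, 0, 2, 6, 13, 9, 5, 14, 7, 12], by decide, by decide⟩

private def p0_8 : Equiv.Perm (Fin 16) :=
  ⟨![1, 2, 5, 7, 11, 8, 0, 4, 10, 3, 14, 6, 13, 9, 15, 12], ![6, 0, 1, 9, 7, 2, 11, 3, 5, 13, 8, 4, 15, 12, 10, 14], by decide, by decide⟩

private def p0_9 : Equiv.Perm (Fin 16) :=
  ⟨![4, 11, 7, 12, 1, 0, 15, 10, 9, 14, 6, 13, 2, 8, 3, 5], ![5, 4, 12, 14, 0, 15, 10, 2, 13, 8, 7, 1, 3, 11, 9, 6], by decide, by decide⟩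

private def p0_10 : Equiv.Perm (Fin 16) :=
  ⟨![6, 5, 0, 2, 9, 10, 8, 12, 7, 13, 15, 1, 4, 14, 11, 3], ![2, 11, 3, 15, 12, 1, 0, 8, 6, 4, 5, 14, 7, 9, 13, 10], by decide, by decide⟩

private def p0_11 : Equiv.Perm (Fin 16) :=
  ⟨![14, 8, 11, 6, 7, 15, 2, 13, 5, 1, 12, 9, 0, 3, 4, 10], ![12, 9, 6, 13, 14, 8, 3, 4, 1, 11, 15, 2, 10, 7, 0, 5], by decide, by decide⟩

private def p0_12 : Equiv.Perm (Fin 16) :=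
  ⟨![2, 14, 9, 4, 6, 3, 1, 11, 15, 12, 0, 10, 5, 7, 8, 13], ![10, 6, 0, 5, 3, 12, 4, 13, 14, 2, 11, 7, 9, 15, 1, 8], by decide, by decide⟩

private def p0_13 : Equiv.Perm (Fin 16) :=
  ⟨![10, 15, 3, 13, 5, 1, 14, 9, 4, 2, 8, 7, 11, 0, 12, 6], ![13, 5, 9, 2, 8, 4, 15, 11, 10, 7, 0, 12, 14, 3, 6, 1], by decide, by decide⟩

private def p0_14 : Equiv.Perm (Fin 16) :=
  ⟨![3, 10, 1, 9, 14, 4, 5, 15, 0, 6, 13, 12, 7, 11, 2, 8], ![8, 2, 14, 0, 5, 6, 9, 12, 15, 3, 1, 13, 11, 10, 4, 7], by decide, by decide⟩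

private def sol0 : Fin 15 → Equiv.Perm (Fin 16) :=
  ![p0_0, p0_1, p0_2, p0_3, p0_4, p0_5, p0_6, p0_7, p0_8, p0_9, p0_10, p0_11, p0_12, p0_13, p0_14]

private def p1_0 : Equiv.Perm (Fin 16) :=
  ⟨![3, 0, 9, 7, 14, 10, 8, 6, 12, 4, 13, 5, 15, 2, 11, 1], ![1, 15, 13, 0, 9, 11, 7, 3, 6, 2, 5, 14, 8, 10, 4, 12], by decide, by decide⟩

private def p1_1 : Equiv.Perm (Fin 16) :=
  ⟨![11, 6, 3, 12, 7, 1, 0, 9, 14, 10, 2, 8, 5, 15, 13, 4], ![6, 5, 10, 2, 15, 12, 1, 4, 11, 7, 9, 0, 3, 14, 8, 13], by decide, by decide⟩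

private def p1_2 : Equiv.Perm (Fin 16) :=
  ⟨![8, 5, 1, 4, 13, 11, 9, 15, 2, 7, 6, 10, 14, 0, 3, 12], ![13, 2, 8, 14, 3, 1, 10, 9, 0, 6, 11, 5, 15, 4, 12, 7], by decide, by decide⟩

private def p1_3 : Equiv.Perm (Fin 16) :=
  ⟨![6, 2, 10, 15, 3, 8, 11, 4, 0, 1, 14, 12, 9, 5, 7, 13], ![8, 9, 1, 4, 7, 13, 0, 14, 5, 12, 2, 6, 11, 15, 10, 3], by decide, by decide⟩

private def p1_4 : Equiv.Perm (Fin 16) :=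
  ⟨![10, 7, 11, 0, 1, 4, 2, 8, 15, 5, 9, 3, 13, 6, 12, 14], ![3, 4, 6, 11, 5, 9, 13, 1, 7, 10, 0, 2, 14, 12, 15, 8], by decide, by decide⟩

private def p1_5 : Equiv.Perm (Fin 16) :=
  ⟨![4, 9, 12, 8, 2, 6, 1, 3, 11, 13, 5, 0, 10, 14, 15, 7], ![11, 6, 4, 7, 0, 10, 5, 15, 3, 1, 12, 8, 2, 9, 13, 14], by decide, by decide⟩

private def p1_6 : Equiv.Perm (Fin 16) :=
  ⟨![5, 11, 0, 13, 10, 12, 15, 14, 7, 2, 8, 6, 3, 4, 1, 9], ![2, 14, 9, 12, 13, 0, 11, 8, 10, 15, 4, 1, 5, 3, 7, 6], by decide, by decide⟩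

private def p1_7 : Equiv.Perm (Fin 16) :=
  ⟨![13, 15, 6, 14, 9, 3, 12, 10, 5, 0, 1, 2, 7, 11, 4, 8], ![9, 10, 11, 5, 14, 8, 2, 12, 15, 4, 7, 13, 6, 0, 3, 1], by decide, by decide⟩

private def p1_8 : Equiv.Perm (Fin 16) :=
  ⟨![1, 14, 4, 11, 12, 2, 13, 0, 9, 15, 3, 7, 6, 8, 5, 10], ![7, 0, 5, 10, 2, 14, 12, 11, 13, 8, 15, 3, 4, 6, 1, 9], by decide, by decide⟩

private def p1_9 : Equiv.Perm (Fin 16) :=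
  ⟨![9, 10, 5, 1, 11, 15, 14, 12, 6, 3, 4, 13, 8, 7, 2, 0], ![15, 3, 14, 9, 10, 2, 8, 13, 12, 0, 1, 4, 7, 11, 6, 5], by decide, by decide⟩

private def p1_10 : Equiv.Perm (Fin 16) :=
  ⟨![2, 8, 15, 6, 5, 9, 4, 11, 13, 12, 7, 14, 1, 10, 0, 3], ![14, 12, 0, 15, 6, 4, 3, 10, 1, 5, 13, 7, 9, 8, 11, 2], by decide, by decide⟩

private def p1_11 : Equiv.Perm (Fin 16) :=
  ⟨![15, 12, 13, 10, 6, 14, 7, 5, 1, 8, 11, 4, 0, 3, 9, 2], ![12, 8, 15, 13, 11, 7, 4, 6, 9, 14, 3, 10, 1, 2, 5, 0], by decide, by decide⟩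

private def p1_12 : Equiv.Perm (Fin 16) :=
  ⟨![14, 13, 7, 2, 8, 0, 5, 1, 3, 11, 12, 15, 4, 9, 10, 6], ![5, 7, 3, 8, 12, 6, 15, 2, 4, 13, 14, 9, 10, 1, 0, 11], by decide, by decide⟩

private def p1_13 : Equiv.Perm (Fin 16) :=
  ⟨![12, 4, 8, 5, 0, 7, 3, 13, 10, 14, 15, 9, 2, 1, 6, 11], ![4, 13, 12, 6, 1, 3, 14, 5, 2, 11, 8, 15, 0, 7, 9, 10], by decide, by decide⟩

private def p1_14 : Equiv.Perm (Fin 16) :=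
  ⟨![7, 3, 14, 9, 15, 13, 10, 2, 4, 6, 0, 1, 11, 12, 8, 5], ![10, 11, 7, 1, 8, 15, 9, 0, 14, 3, 6, 12, 13, 5, 2, 4], by decide, by decide⟩

private def sol1 : Fin 15 → Equiv.Perm (Fin 16) :=
  ![p1_0, p1_1, p1_2, p1_3, p1_4, p1_5, p1_6, p1_7, p1_8, p1_9, p1_10, p1_11, p1_12, p1_13, p1_14]

private def p2_0 : Equiv.Perm (Fin 16) :=
  ⟨![7, 4, 6, 15, 12, 13, 10, 8, 3, 5, 1, 14, 11, 0, 2, 9], ![13, 10, 14, 8, 1, 9, 2, 0, 7, 15, 6, 12, 4, 5, 11, 3], by decide, by decide⟩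

private def p2_1 : Equiv.Perm (Fin 16) :=
  ⟨![5, 2, 11, 0, 14, 15, 4, 3, 9, 6, 12, 7, 8, 10, 13, 1], ![3, 15, 1, 7, 6, 0, 9, 11, 12, 8, 13, 2, 10, 14, 4, 5], by decide, by decide⟩

private def p2_2 : Equiv.Perm (Fin 16) :=
  ⟨![15, 10, 1, 8, 2, 9, 13, 14, 0, 11, 6, 4, 7, 3, 5, 12], ![8, 2, 4, 13, 11, 14, 10, 12, 3, 5, 1, 9, 15, 6, 7, 0], by decide, by decide⟩

private def p2_3 : Equiv.Perm (Fin 16) :=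
  ⟨![3, 5, 14, 13, 9, 10, 7, 12, 1, 8, 2, 0, 4, 15, 11, 6], ![11, 8, 10, 0, 12, 1, 15, 6, 9, 4, 5, 14, 7, 3, 2, 13], by decide, by decide⟩

private def p2_4 : Equiv.Perm (Fin 16) :=
  ⟨![13, 0, 9, 10, 11, 1, 2, 6, 12, 15, 8, 3, 14, 4, 7, 5], ![1, 5, 6, 11, 13, 15, 7, 14, 10, 2, 3, 4, 8, 0, 12, 9], by decide, by decide⟩

private def p2_5 : Equiv.Perm (Fin 16) :=
  ⟨![6, 12, 13, 9, 0, 7, 11, 1, 14, 4, 15, 5, 10, 8, 3, 2], ![4, 7, 15, 14, 9, 11, 0, 5, 13, 3, 12, 6, 1, 2, 8, 10], by decide, by decide⟩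

private def p2_6 : Equiv.Perm (Fin 16) :=
  ⟨![10, 7, 0, 11, 6, 12, 3, 15, 13, 1, 14, 2, 9, 5, 8, 4], ![2, 9, 11, 6, 15, 13, 4, 1, 14, 12, 0, 3, 5, 8, 10, 7], by decide, by decide⟩

private def p2_7 : Equiv.Perm (Fin 16) :=
  ⟨![1, 13, 3, 14, 10, 6, 12, 4, 5, 7, 11, 15, 2, 9, 0, 8], ![14, 0, 12, 2, 7, 8, 5, 9, 15, 13, 4, 10, 6, 1, 3, 11], by decide, by decide⟩

private def p2_8 : Equiv.Perm (Fin 16) :=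
  ⟨![14, 3, 15, 2, 8, 11, 5, 9, 7, 0, 4, 13, 6, 1, 12, 10], ![9, 13, 3, 1, 10, 6, 12, 8, 4, 7, 15, 5, 14, 11, 0, 2], by decide, by decide⟩

private def p2_9 : Equiv.Perm (Fin 16) :=
  ⟨![2, 9, 7, 1, 3, 8, 15, 5, 6, 10, 0, 12, 13, 14, 4, 11], ![10, 3, 0, 4, 14, 7, 8, 2, 5, 1, 9, 15, 11, 12, 13, 6], by decide, by decide⟩

private def p2_10 : Equiv.Perm (Fin 16) :=
  ⟨![12, 8, 10, 6, 5, 3, 0, 13, 4, 2, 7, 1, 15, 11, 9, 14], ![6, 11, 9, 5, 8, 4, 3, 10, 1, 14, 2, 13, 0, 7, 15, 12], by decide, by decide⟩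

private def p2_11 : Equiv.Perm (Fin 16) :=
  ⟨![11, 14, 8, 12, 1, 4, 9, 2, 15, 13, 3, 10, 5, 7, 6, 0], ![15, 4, 7, 10, 5, 12, 14, 13, 2, 6, 11, 0, 3, 9, 1, 8], by decide, by decide⟩

private def p2_12 : Equiv.Perm (Fin 16) :=
  ⟨![4, 6, 5, 7, 15, 14, 8, 10, 11, 12, 13, 9, 0, 2, 1, 3], ![12, 14, 13, 15, 0, 2, 1, 3, 6, 11, 7, 8, 9, 10, 5, 4], by decide, by decide⟩

private def p2_13 : Equiv.Perm (Fin 16) :=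
  ⟨![8, 15, 4, 5, 13, 0, 14, 11, 2, 3, 9, 6, 1, 12, 10, 7], ![5, 12, 8, 9, 2, 3, 11, 15, 0, 10, 14, 7, 13, 4, 6, 1], by decide, by decide⟩

private def p2_14 : Equiv.Perm (Fin 16) :=
  ⟨![9, 11, 12, 4, 7, 2, 1, 0, 10, 14, 5, 8, 3, 6, 15, 13], ![7, 6, 5, 12, 3, 10, 13, 4, 11, 0, 8, 1, 2, 15, 9, 14], by decide, by decide⟩

private def sol2 : Fin 15 → Equiv.Perm (Fin 16) :=
  ![p2_0, p2_1, p2_2, p2_3, p2_4, p2_5, p2_6, p2_7, p2_8, p2_9, p2_10, p2_11, p2_12, p2_13, p2_14]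

private def p3_0 : Equiv.Perm (Fin 16) :=
  ⟨![9, 12, 1, 8, 3, 11, 10, 15, 13, 4, 14, 6, 5, 7, 2, 0], ![15, 2, 14, 4, 9, 12, 11, 13, 3, 0, 6, 5, 1, 8, 10, 7], by decide, by decide⟩

private def p3_1 : Equiv.Perm (Fin 16) :=
  ⟨![2, 13, 9, 0, 11, 7, 8, 14, 4, 12, 6, 5, 15, 3, 10, 1], ![3, 15, 0, 13, 8, 11, 10, 5, 6, 2, 14, 4, 9, 1, 7, 12], by decide, by decide⟩

private def p3_2 : Equiv.Perm (Fin 16) :=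
  ⟨![11, 7, 15, 10, 13, 6, 3, 9, 5, 0, 4, 2, 8, 12, 1, 14], ![9, 14, 11, 6, 10, 8, 5, 1, 12, 7, 3, 0, 13, 4, 15, 2], by decide, by decide⟩

private def p3_3 : Equiv.Perm (Fin 16) :=
  ⟨![1, 2, 6, 9, 14, 8, 15, 5, 10, 11, 12, 4, 3, 0, 13, 7], ![13, 0, 1, 12, 11, 7, 2, 15, 5, 3, 8, 9, 10, 14, 4, 6], by decide, by decide⟩

private def p3_4 : Equiv.Perm (Fin 16) :=
  ⟨![13, 9, 12, 15, 2, 3, 7, 10, 6, 14, 0, 8, 11, 1, 5, 4], ![10, 13, 4, 5, 15, 14, 8, 6, 11, 1, 7, 12, 2, 0, 9, 3], by decide, by decide⟩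

private def p3_5 : Equiv.Perm (Fin 16) :=
  ⟨![12, 15, 11, 1, 7, 13, 5, 3, 14, 6, 8, 9, 2, 4, 0, 10], ![14, 3, 12, 7, 13, 6, 9, 4, 10, 11, 15, 2, 0, 5, 8, 1], by decide, by decide⟩

private def p3_6 : Equiv.Perm (Fin 16) :=
  ⟨![15, 3, 0, 13, 10, 2, 11, 12, 9, 7, 5, 1, 4, 14, 8, 6], ![2, 11, 5, 1, 12, 10, 15, 9, 14, 8, 4, 6, 7, 3, 13, 0], by decide, by decide⟩

private def p3_7 : Equiv.Perm (Fin 16) :=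
  ⟨![7, 4, 5, 12, 8, 15, 1, 6, 2, 10, 11, 14, 0, 9, 3, 13], ![12, 6, 8, 14, 1, 2, 7, 0, 4, 13, 9, 10, 3, 15, 11, 5], by decide, by decide⟩

private def p3_8 : Equiv.Perm (Fin 16) :=
  ⟨![14, 10, 3, 11, 1, 12, 0, 4, 7, 8, 13, 15, 6, 2, 9, 5], ![6, 4, 13, 2, 7, 15, 12, 8, 9, 14, 1, 3, 5, 10, 0, 11], by decide, by decide⟩

private def p3_9 : Equiv.Perm (Fin 16) :=
  ⟨![4, 0, 13, 5, 6, 9, 14, 8, 11, 2, 3, 10, 1, 15, 7, 12], ![1, 12, 9, 10, 0, 3, 4, 14, 7, 5, 11, 8, 15, 2, 6, 13], by decide, by decide⟩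

private def p3_10 : Equiv.Perm (Fin 16) :=
  ⟨![5, 8, 14, 6, 12, 4, 13, 2, 0, 1, 9, 3, 7, 10, 15, 11], ![8, 9, 7, 11, 5, 0, 3, 12, 1, 10, 13, 15, 4, 6, 2, 14], by decide, by decide⟩

private def p3_11 : Equiv.Perm (Fin 16) :=
  ⟨![10, 11, 8, 2, 5, 14, 4, 13, 1, 15, 7, 0, 9, 6, 12, 3], ![11, 8, 3, 15, 6, 4, 13, 10, 2, 12, 0, 1, 14, 7, 5, 9], by decide, by decide⟩

private def p3_12 : Equiv.Perm (Fin 16) :=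
  ⟨![3, 6, 10, 14, 9, 1, 2, 0, 12, 5, 15, 7, 13, 11, 4, 8], ![7, 5, 6, 0, 14, 9, 1, 11, 15, 4, 2, 13, 8, 12, 3, 10], by decide, by decide⟩

private def p3_13 : Equiv.Perm (Fin 16) :=
  ⟨![6, 5, 4, 7, 0, 10, 12, 1, 15, 3, 2, 13, 14, 8, 11, 9], ![4, 7, 10, 9, 2, 1, 0, 3, 13, 15, 5, 14, 6, 11, 12, 8], by decide, by decide⟩

private def p3_14 : Equiv.Perm (Fin 16) :=
  ⟨![8, 14, 7, 4, 15, 0, 9, 11, 3, 13, 1, 12, 10, 5, 6, 2], ![5, 10, 15, 8, 3, 13, 14, 2, 0, 6, 12, 7, 11, 9, 1, 4], by decide, by decide⟩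

private def sol3 : Fin 15 → Equiv.Perm (Fin 16) :=
  ![p3_0, p3_1, p3_2, p3_3, p3_4, p3_5, p3_6, p3_7, p3_8, p3_9, p3_10, p3_11, p3_12, p3_13, p3_14]

private def p4_0 : Equiv.Perm (Fin 16) :=
  ⟨![9, 3, 0, 12, 14, 6, 4, 10, 2, 15, 13, 5, 11, 8, 1, 7], ![2, 14, 8, 1, 6, 11, 5, 15, 13, 0, 7, 12, 3, 10, 4, 9], by decide, by decide⟩

private def p4_1 : Equiv.Perm (Fin 16) :=
  ⟨![5, 12, 11, 15, 0, 1, 9, 2, 14, 13, 8, 3, 10, 7, 4, 6], ![4, 5, 7, 11, 14, 0, 15, 13, 10, 6, 12, 2, 1, 9, 8, 3], by decide, by decide⟩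

private def p4_2 : Equiv.Perm (Fin 16) :=
  ⟨![11, 8, 12, 5, 13, 15, 14, 9, 7, 2, 3, 6, 4, 1, 10, 0], ![15, 13, 9, 10, 12, 3, 11, 8, 1, 7, 14, 0, 2, 4, 6, 5], by decide, by decide⟩

private def p4_3 : Equiv.Perm (Fin 16) :=
  ⟨![7, 4, 1, 8, 12, 10, 15, 6, 0, 3, 2, 9, 14, 5, 13, 11], ![8, 2, 10, 9, 1, 13, 7, 0, 3, 11, 5, 15, 4, 14, 12, 6], by decide, by decide⟩

private def p4_4 : Equiv.Perm (Fin 16) :=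
  ⟨![12, 7, 15, 6, 5, 3, 1, 14, 11, 4, 9, 10, 13, 2, 0, 8], ![14, 6, 13, 5, 9, 4, 3, 1, 15, 10, 11, 8, 0, 12, 7, 2], by decide, by decide⟩

private def p4_5 : Equiv.Perm (Fin 16) :=
  ⟨![8, 0, 10, 2, 6, 7, 11, 4, 5, 14, 15, 13, 9, 12, 3, 1], ![1, 15, 3, 14, 7, 8, 4, 5, 0, 12, 2, 6, 13, 11, 9, 10], by decide, by decide⟩

private def p4_6 : Equiv.Perm (Fin 16) :=
  ⟨![4, 6, 3, 10, 1, 14, 7, 5, 13, 0, 12, 2, 8, 15, 11, 9], ![9, 4, 11, 2, 0, 7, 1, 6, 12, 15, 3, 14, 10, 8, 5, 13], by decide, by decide⟩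

private def p4_7 : Equiv.Perm (Fin 16) :=
  ⟨![10, 13, 7, 14, 11, 8, 3, 0, 1, 6, 4, 15, 2, 9, 12, 5], ![7, 8, 12, 6, 10, 15, 9, 2, 5, 13, 0, 4, 14, 1, 3, 11], by decide, by decide⟩

private def p4_8 : Equiv.Perm (Fin 16) :=
  ⟨![1, 14, 8, 11, 3, 12, 13, 15, 9, 10, 6, 0, 7, 4, 5, 2], ![11, 0, 15, 4, 13, 14, 10, 12, 2, 8, 9, 3, 5, 6, 1, 7], by decide, by decide⟩

private def p4_9 : Equiv.Perm (Fin 16) :=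
  ⟨![14, 5, 9, 7, 2, 13, 10, 12, 3, 11, 0, 1, 15, 6, 8, 4], ![10, 11, 4, 8, 15, 1, 13, 3, 14, 2, 6, 9, 7, 5, 0, 12], by decide, by decide⟩

private def p4_10 : Equiv.Perm (Fin 16) :=
  ⟨![13, 11, 4, 0, 10, 9, 2, 3, 15, 8, 5, 7, 1, 14, 6, 12], ![3, 12, 6, 7, 2, 10, 14, 11, 9, 5, 4, 1, 15, 0, 13, 8], by decide, by decide⟩

private def p4_11 : Equiv.Perm (Fin 16) :=
  ⟨![6, 2, 13, 9, 15, 11, 12, 8, 4, 5, 1, 14, 3, 0, 7, 10], ![13, 10, 1, 12, 8, 9, 0, 14, 7, 3, 15, 5, 6, 2, 11, 4], by decide, by decide⟩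

private def p4_12 : Equiv.Perm (Fin 16) :=
  ⟨![15, 10, 14, 4, 7, 2, 5, 1, 6, 12, 11, 8, 0, 3, 9, 13], ![12, 7, 5, 13, 3, 6, 8, 4, 11, 14, 1, 10, 9, 15, 2, 0], by decide, by decide⟩

private def p4_13 : Equiv.Perm (Fin 16) :=
  ⟨![2, 9, 5, 1, 8, 4, 0, 13, 10, 7, 14, 12, 6, 11, 15, 3], ![6, 3, 0, 15, 5, 2, 12, 9, 4, 1, 8, 13, 11, 7, 10, 14], by decide, by decide⟩

private def p4_14 : Equiv.Perm (Fin 16) :=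
  ⟨![3, 15, 6, 13, 9, 0, 8, 11, 12, 1, 7, 4, 5, 10, 2, 14], ![5, 9, 14, 0, 11, 12, 2, 10, 6, 4, 13, 7, 8, 3, 15, 1], by decide, by decide⟩

private def sol4 : Fin 15 → Equiv.Perm (Fin 16) :=
  ![p4_0, p4_1, p4_2, p4_3, p4_4, p4_5, p4_6, p4_7, p4_8, p4_9, p4_10, p4_11, p4_12, p4_13, p4_14]

private def p5_0 : Equiv.Perm (Fin 16) :=
  ⟨![13, 7, 15, 6, 5, 12, 9, 0, 4, 10, 1, 2, 14, 3, 11, 8], ![7, 10, 11, 13, 8, 4, 3, 1, 15, 6, 9, 14, 5, 0, 12, 2], by decide, by decide⟩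

private def p5_1 : Equiv.Perm (Fin 16) :=
  ⟨![11, 3, 0, 14, 7, 8, 15, 2, 13, 5, 6, 1, 10, 12, 4, 9], ![2, 11, 7, 1, 14, 9, 10, 4, 5, 15, 12, 0, 13, 8, 3, 6], by decide, by decide⟩

private def p5_2 : Equiv.Perm (Fin 16) :=
  ⟨![8, 0, 3, 12, 6, 13, 14, 15, 9, 11, 5, 10, 7, 1, 2, 4], ![1, 13, 14, 2, 15, 10, 4, 12, 0, 8, 11, 9, 3, 5, 6, 7], by decide, by decide⟩

private def p5_3 : Equiv.Perm (Fin 16) :=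
  ⟨![1, 13, 4, 5, 0, 9, 10, 6, 7, 8, 11, 3, 15, 14, 12, 2], ![4, 0, 15, 11, 2, 3, 7, 8, 9, 5, 6, 10, 14, 1, 13, 12], by decide, by decide⟩

private def p5_4 : Equiv.Perm (Fin 16) :=
  ⟨![9, 12, 5, 11, 13, 14, 4, 10, 0, 1, 2, 7, 6, 8, 15, 3], ![8, 9, 10, 15, 6, 2, 12, 11, 13, 0, 7, 3, 1, 4, 5, 14], by decide, by decide⟩

private def p5_5 : Equiv.Perm (Fin 16) :=
  ⟨![10, 5, 12, 1, 14, 0, 7, 3, 2, 6, 4, 8, 9, 15, 13, 11], ![5, 3, 8, 7, 10, 1, 9, 6, 11, 12, 0, 15, 2, 14, 4, 13], by decide, by decide⟩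

private def p5_6 : Equiv.Perm (Fin 16) :=
  ⟨![2, 11, 10, 9, 3, 7, 1, 13, 15, 14, 8, 5, 4, 0, 6, 12], ![13, 6, 0, 4, 12, 11, 14, 5, 10, 3, 2, 1, 15, 7, 9, 8], by decide, by decide⟩

private def p5_7 : Equiv.Perm (Fin 16) :=
  ⟨![4, 9, 8, 7, 2, 11, 13, 12, 6, 0, 3, 15, 5, 10, 1, 14], ![9, 14, 4, 10, 0, 12, 8, 3, 2, 1, 13, 5, 7, 6, 15, 11], by decide, by decide⟩

private def p5_8 : Equiv.Perm (Fin 16) :=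
  ⟨![15, 10, 11, 4, 9, 2, 0, 1, 5, 13, 12, 14, 8, 6, 3, 7], ![6, 7, 5, 14, 3, 8, 13, 15, 12, 4, 1, 2, 10, 9, 11, 0], by decide, by decide⟩

private def p5_9 : Equiv.Perm (Fin 16) :=
  ⟨![12, 15, 1, 0, 10, 3, 5, 4, 11, 7, 14, 6, 2, 9, 8, 13], ![3, 2, 12, 5, 7, 6, 11, 9, 14, 13, 4, 8, 0, 15, 10, 1], by decide, by decide⟩

private def p5_10 : Equiv.Perm (Fin 16) :=
  ⟨![6, 8, 9, 2, 15, 4, 3, 11, 14, 12, 7, 13, 1, 5, 10, 0], ![15, 12, 3, 6, 5, 13, 0, 10, 1, 2, 14, 7, 9, 11, 8, 4], by decide, by decide⟩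

private def p5_11 : Equiv.Perm (Fin 16) :=
  ⟨![5, 6, 7, 8, 12, 15, 2, 14, 1, 4, 13, 9, 3, 11, 0, 10], ![14, 8, 6, 12, 9, 0, 1, 2, 3, 11, 15, 13, 4, 10, 7, 5], by decide, by decide⟩

private def p5_12 : Equiv.Perm (Fin 16) :=
  ⟨![14, 2, 13, 10, 11, 6, 8, 5, 3, 15, 9, 12, 0, 4, 7, 1], ![12, 15, 1, 8, 13, 7, 5, 14, 6, 10, 3, 4, 11, 2, 0, 9], by decide, by decide⟩

private def p5_13 : Equiv.Perm (Fin 16) :=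
  ⟨![7, 14, 6, 15, 1, 10, 11, 8, 12, 3, 0, 4, 13, 2, 9, 5], ![10, 4, 13, 9, 11, 15, 2, 0, 7, 14, 5, 6, 8, 12, 1, 3], by decide, by decide⟩

private def p5_14 : Equiv.Perm (Fin 16) :=
  ⟨![3, 4, 14, 13, 8, 1, 12, 9, 10, 2, 15, 0, 11, 7, 5, 6], ![11, 5, 9, 0, 1, 14, 15, 13, 4, 7, 8, 12, 6, 3, 2, 10], by decide, by decide⟩

private def sol5 : Fin 15 → Equiv.Perm (Fin 16) :=
  ![p5_0, p5_1, p5_2, p5_3, p5_4, p5_5, p5_6, p5_7, p5_8, p5_9, p5_10, p5_11, p5_12, p5_13, p5_14]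

private def p6_0 : Equiv.Perm (Fin 16) :=
  ⟨![11, 14, 1, 13, 7, 0, 5, 9, 4, 12, 6, 2, 15, 8, 10, 3], ![5, 2, 11, 15, 8, 6, 10, 4, 13, 7, 14, 0, 9, 3, 1, 12], by decide, by decide⟩

private def p6_1 : Equiv.Perm (Fin 16) :=
  ⟨![3, 5, 15, 1, 6, 12, 9, 14, 0, 7, 8, 4, 13, 10, 2, 11], ![8, 3, 14, 0, 11, 1, 4, 9, 10, 6, 13, 15, 5, 12, 7, 2], by decide, by decide⟩

private def p6_2 : Equiv.Perm (Fin 16) :=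
  ⟨![10, 7, 9, 5, 8, 4, 11, 0, 2, 6, 15, 3, 14, 12, 1, 13], ![7, 14, 8, 11, 5, 3, 9, 1, 4, 2, 0, 6, 13, 15, 12, 10], by decide, by decide⟩

private def p6_3 : Equiv.Perm (Fin 16) :=
  ⟨![7, 3, 5, 12, 14, 11, 4, 2, 15, 8, 13, 6, 10, 9, 0, 1], ![14, 15, 7, 1, 6, 2, 11, 0, 9, 13, 12, 5, 3, 10, 4, 8], by decide, by decide⟩

private def p6_4 : Equiv.Perm (Fin 16) :=
  ⟨![12, 4, 7, 9, 0, 3, 1, 5, 14, 10, 11, 13, 8, 2, 15, 6], ![4, 6, 13, 5, 1, 7, 15, 2, 12, 3, 9, 10, 0, 11, 8, 14], by decide, by decide⟩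

private def p6_5 : Equiv.Perm (Fin 16) :=
  ⟨![1, 11, 4, 6, 10, 7, 13, 8, 12, 15, 0, 9, 3, 14, 5, 2], ![10, 0, 15, 12, 2, 14, 3, 5, 7, 11, 4, 1, 8, 6, 13, 9], by decide, by decide⟩

private def p6_6 : Equiv.Perm (Fin 16) :=
  ⟨![8, 15, 13, 4, 12, 1, 10, 6, 7, 3, 9, 0, 2, 5, 11, 14], ![11, 5, 12, 9, 3, 13, 7, 8, 0, 10, 6, 14, 4, 2, 15, 1], by decide, by decide⟩

private def p6_7 : Equiv.Perm (Fin 16) :=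
  ⟨![6, 0, 8, 10, 11, 13, 14, 4, 5, 2, 12, 15, 7, 1, 3, 9], ![1, 13, 9, 14, 7, 8, 0, 12, 2, 15, 3, 4, 10, 5, 6, 11], by decide, by decide⟩

private def p6_8 : Equiv.Perm (Fin 16) :=
  ⟨![4, 6, 3, 7, 9, 10, 12, 15, 1, 14, 2, 8, 5, 11, 13, 0], ![15, 8, 10, 2, 0, 12, 1, 3, 11, 4, 5, 13, 6, 14, 9, 7], by decide, by decide⟩

private def p6_9 : Equiv.Perm (Fin 16) :=
  ⟨![5, 2, 6, 8, 13, 14, 0, 12, 9, 1, 3, 10, 11, 15, 4, 7], ![6, 9, 1, 10, 14, 0, 2, 15, 3, 8, 11, 12, 7, 4, 5, 13], by decide, by decide⟩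

private def p6_10 : Equiv.Perm (Fin 16) :=
  ⟨![14, 10, 12, 15, 2, 9, 7, 3, 11, 13, 4, 1, 6, 0, 8, 5], ![13, 11, 4, 7, 10, 15, 12, 6, 14, 5, 1, 8, 2, 9, 0, 3], by decide, by decide⟩

private def p6_11 : Equiv.Perm (Fin 16) :=
  ⟨![9, 8, 11, 0, 1, 2, 15, 13, 6, 5, 14, 12, 4, 3, 7, 10], ![3, 4, 5, 13, 12, 9, 8, 14, 1, 0, 15, 2, 11, 7, 10, 6], by decide, by decide⟩

private def p6_12 : Equiv.Perm (Fin 16) :=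
  ⟨![2, 13, 14, 11, 5, 15, 8, 10, 3, 0, 1, 7, 9, 4, 6, 12], ![9, 10, 0, 8, 13, 4, 14, 11, 6, 12, 7, 3, 15, 1, 2, 5], by decide, by decide⟩

private def p6_13 : Equiv.Perm (Fin 16) :=
  ⟨![13, 9, 0, 2, 15, 6, 3, 11, 10, 4, 5, 14, 1, 7, 12, 8], ![2, 12, 3, 6, 9, 10, 5, 13, 15, 1, 8, 7, 14, 0, 11, 4], by decide, by decide⟩

private def p6_14 : Equiv.Perm (Fin 16) :=
  ⟨![15, 12, 10, 14, 3, 8, 2, 1, 13, 11, 7, 5, 0, 6, 9, 4], ![12, 7, 6, 4, 15, 11, 13, 10, 5, 14, 2, 9, 1, 8, 3, 0], by decide, by decide⟩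

private def sol6 : Fin 15 → Equiv.Perm (Fin 16) :=
  ![p6_0, p6_1, p6_2, p6_3, p6_4, p6_5, p6_6, p6_7, p6_8, p6_9, p6_10, p6_11, p6_12, p6_13, p6_14]

private def p7_0 : Equiv.Perm (Fin 16) :=
  ⟨![1, 3, 14, 8, 12, 2, 5, 10, 4, 0, 11, 6, 15, 7, 13, 9], ![9, 0, 5, 1, 8, 6, 11, 13, 3, 15, 7, 10, 4, 14, 2, 12], by decide, by decide⟩

private def p7_1 : Equiv.Perm (Fin 16) :=
  ⟨![4, 14, 12, 2, 13, 11, 15, 9, 10, 6, 0, 7, 8, 3, 5, 1], ![10, 15, 3, 13, 0, 14, 9, 11, 12, 7, 8, 5, 2, 4, 1, 6], by decide, by decide⟩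

private def p7_2 : Equiv.Perm (Fin 16) :=
  ⟨![11, 0, 10, 13, 14, 15, 1, 6, 12, 5, 3, 9, 2, 4, 8, 7], ![1, 6, 12, 10, 13, 9, 7, 15, 14, 11, 2, 0, 8, 3, 4, 5], by decide, by decide⟩

private def p7_3 : Equiv.Perm (Fin 16) :=
  ⟨![14, 11, 6, 9, 7, 13, 3, 1, 0, 8, 4, 12, 5, 10, 15, 2], ![8, 7, 15, 6, 10, 12, 2, 4, 9, 3, 13, 1, 11, 5, 0, 14], by decide, by decide⟩

private def p7_4 : Equiv.Perm (Fin 16) :=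
  ⟨![2, 6, 1, 14, 5, 3, 4, 15, 9, 13, 12, 10, 7, 11, 0, 8], ![14, 2, 0, 5, 6, 4, 1, 12, 15, 8, 11, 13, 10, 9, 3, 7], by decide, by decide⟩

private def p7_5 : Equiv.Perm (Fin 16) :=
  ⟨![10, 5, 15, 1, 0, 7, 9, 12, 3, 2, 6, 13, 11, 8, 4, 14], ![4, 3, 9, 8, 14, 1, 10, 5, 13, 6, 0, 12, 7, 11, 15, 2], by decide, by decide⟩

private def p7_6 : Equiv.Perm (Fin 16) :=
  ⟨![8, 7, 11, 0, 9, 6, 14, 4, 2, 12, 1, 5, 13, 15, 3, 10], ![3, 10, 8, 14, 7, 11, 5, 1, 0, 4, 15, 2, 9, 12, 6, 13], by decide, by decide⟩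

private def p7_7 : Equiv.Perm (Fin 16) :=
  ⟨![15, 2, 0, 12, 6, 1, 13, 8, 5, 11, 7, 3, 14, 9, 10, 4], ![2, 5, 1, 11, 15, 8, 4, 10, 7, 13, 14, 9, 3, 6, 12, 0], by decide, by decide⟩

private def p7_8 : Equiv.Perm (Fin 16) :=
  ⟨![6, 10, 3, 7, 8, 14, 12, 0, 11, 4, 2, 15, 9, 5, 1, 13], ![7, 14, 10, 2, 9, 13, 0, 3, 4, 12, 1, 8, 6, 15, 5, 11], by decide, by decide⟩

private def p7_9 : Equiv.Perm (Fin 16) :=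
  ⟨![7, 9, 8, 11, 3, 4, 10, 5, 13, 14, 15, 1, 0, 6, 2, 12], ![12, 11, 14, 4, 5, 7, 13, 0, 2, 1, 6, 3, 15, 8, 9, 10], by decide, by decide⟩

private def p7_10 : Equiv.Perm (Fin 16) :=
  ⟨![5, 13, 4, 6, 15, 9, 11, 3, 7, 10, 8, 14, 1, 2, 12, 0], ![15, 12, 13, 7, 2, 0, 3, 8, 10, 5, 9, 6, 14, 1, 11, 4], by decide, by decide⟩

private def p7_11 : Equiv.Perm (Fin 16) :=
  ⟨![12, 15, 7, 5, 2, 10, 0, 14, 6, 3, 13, 8, 4, 1, 9, 11], ![6, 13, 4, 9, 12, 3, 8, 2, 11, 14, 5, 15, 0, 10, 7, 1], by decide, by decide⟩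

private def p7_12 : Equiv.Perm (Fin 16) :=
  ⟨![3, 4, 9, 10, 11, 0, 8, 13, 1, 15, 14, 2, 6, 12, 7, 5], ![5, 8, 11, 0, 1, 15, 12, 14, 6, 2, 3, 4, 13, 7, 10, 9], by decide, by decide⟩

private def p7_13 : Equiv.Perm (Fin 16) :=
  ⟨![13, 12, 5, 4, 1, 8, 2, 11, 15, 7, 9, 0, 10, 14, 6, 3], ![11, 4, 6, 15, 3, 2, 14, 9, 5, 10, 12, 7, 1, 0, 13, 8], by decide, by decide⟩

private def p7_14 : Equiv.Perm (Fin 16) :=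
  ⟨![9, 8, 13, 15, 10, 12, 7, 2, 14, 1, 5, 4, 3, 0, 11, 6], ![13, 9, 7, 12, 11, 10, 15, 6, 1, 0, 4, 14, 5, 2, 8, 3], by decide, by decide⟩

private def sol7 : Fin 15 → Equiv.Perm (Fin 16) :=
  ![p7_0, p7_1, p7_2, p7_3, p7_4, p7_5, p7_6, p7_7, p7_8, p7_9, p7_10, p7_11, p7_12, p7_13, p7_14]

private def p8_0 : Equiv.Perm (Fin 16) :=
  ⟨![13, 3, 5, 6, 8, 11, 7, 2, 0, 15, 1, 10, 4, 9, 12, 14], ![8, 10, 7, 1, 12, 2, 3, 6, 4, 13, 11, 5, 14, 0, 15, 9], by decide, by decide⟩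

private def p8_1 : Equiv.Perm (Fin 16) :=
  ⟨![11, 13, 3, 15, 7, 12, 2, 10, 6, 1, 5, 4, 14, 8, 0, 9], ![14, 9, 6, 2, 11, 10, 8, 4, 13, 15, 7, 0, 5, 1, 12, 3], by decide, by decide⟩

private def p8_2 : Equiv.Perm (Fin 16) :=
  ⟨![1, 11, 7, 10, 6, 14, 9, 12, 4, 13, 8, 5, 0, 15, 2, 3], ![12, 0, 14, 15, 8, 11, 4, 2, 10, 6, 3, 1, 7, 9, 5, 13], by decide, by decide⟩

private def p8_3 : Equiv.Perm (Fin 16) :=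
  ⟨![10, 4, 15, 5, 13, 6, 11, 0, 7, 2, 9, 14, 8, 3, 1, 12], ![7, 14, 9, 13, 1, 3, 5, 8, 12, 10, 0, 6, 15, 4, 11, 2], by decide, by decide⟩

private def p8_4 : Equiv.Perm (Fin 16) :=
  ⟨![7, 14, 9, 4, 12, 13, 10, 5, 1, 6, 0, 8, 15, 2, 3, 11], ![10, 8, 13, 14, 3, 7, 9, 0, 11, 2, 6, 15, 4, 5, 1, 12], by decide, by decide⟩

private def p8_5 : Equiv.Perm (Fin 16) :=
  ⟨![14, 2, 11, 1, 5, 9, 0, 15, 3, 10, 13, 6, 7, 12, 8, 4], ![6, 3, 1, 8, 15, 4, 11, 12, 14, 5, 9, 2, 13, 10, 0, 7], by decide, by decide⟩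

private def p8_6 : Equiv.Perm (Fin 16) :=
  ⟨![8, 6, 13, 11, 0, 7, 4, 9, 10, 3, 14, 12, 2, 5, 15, 1], ![4, 15, 12, 9, 6, 13, 1, 5, 0, 7, 8, 3, 11, 2, 10, 14], by decide, by decide⟩

private def p8_7 : Equiv.Perm (Fin 16) :=
  ⟨![9, 5, 8, 2, 1, 3, 12, 6, 15, 14, 4, 13, 11, 0, 7, 10], ![13, 4, 3, 5, 10, 1, 7, 14, 2, 0, 15, 12, 6, 11, 9, 8], by decide, by decide⟩

private def p8_8 : Equiv.Perm (Fin 16) :=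
  ⟨![6, 10, 0, 7, 9, 4, 3, 1, 5, 12, 15, 2, 13, 14, 11, 8], ![2, 7, 11, 6, 5, 8, 0, 3, 15, 4, 1, 14, 9, 12, 13, 10], by decide, by decide⟩

private def p8_9 : Equiv.Perm (Fin 16) :=
  ⟨![15, 7, 4, 0, 11, 10, 5, 14, 12, 8, 2, 1, 3, 6, 9, 13], ![3, 11, 10, 12, 2, 6, 13, 1, 9, 14, 5, 4, 8, 15, 7, 0], by decide, by decide⟩

private def p8_10 : Equiv.Perm (Fin 16) :=
  ⟨![2, 15, 12, 8, 3, 0, 14, 4, 11, 5, 6, 9, 10, 1, 13, 7], ![5, 13, 0, 4, 7, 9, 10, 15, 3, 11, 12, 8, 2, 14, 6, 1], by decide, by decide⟩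

private def p8_11 : Equiv.Perm (Fin 16) :=
  ⟨![12, 8, 10, 14, 15, 2, 13, 3, 9, 4, 11, 0, 1, 7, 5, 6], ![11, 12, 5, 7, 9, 14, 15, 13, 1, 8, 2, 10, 0, 6, 3, 4], by decide, by decide⟩

private def p8_12 : Equiv.Perm (Fin 16) :=
  ⟨![4, 0, 14, 12, 10, 8, 1, 13, 2, 7, 3, 15, 9, 11, 6, 5], ![1, 6, 8, 10, 0, 15, 14, 9, 5, 12, 4, 13, 3, 7, 2, 11], by decide, by decide⟩

private def p8_13 : Equiv.Perm (Fin 16) :=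
  ⟨![5, 12, 1, 9, 14, 15, 8, 11, 13, 0, 7, 3, 6, 4, 10, 2], ![9, 2, 15, 11, 13, 0, 12, 10, 6, 3, 14, 7, 1, 8, 4, 5], by decide, by decide⟩

private def p8_14 : Equiv.Perm (Fin 16) :=
  ⟨![3, 9, 6, 13, 2, 1, 15, 8, 14, 11, 12, 7, 5, 10, 4, 0], ![15, 5, 4, 0, 14, 12, 2, 11, 7, 1, 13, 9, 10, 3, 8, 6], by decide, by decide⟩

private def sol8 : Fin 15 → Equiv.Perm (Fin 16) :=
  ![p8_0, p8_1, p8_2, p8_3, p8_4, p8_5, p8_6, p8_7, p8_8, p8_9, p8_10, p8_11, p8_12, p8_13, p8_14]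

private def p9_0 : Equiv.Perm (Fin 16) :=
  ⟨![9, 15, 11, 5, 12, 6, 2, 13, 3, 8, 7, 0, 1, 14, 4, 10], ![11, 12, 6, 8, 14, 3, 5, 10, 9, 0, 15, 2, 4, 7, 13, 1], by decide, by decide⟩

private def p9_1 : Equiv.Perm (Fin 16) :=
  ⟨![2, 8, 5, 1, 0, 10, 12, 4, 14, 13, 15, 7, 9, 3, 6, 11], ![4, 3, 0, 13, 7, 2, 14, 11, 1, 12, 5, 15, 6, 9, 8, 10], by decide, by decide⟩

private def p9_2 : Equiv.Perm (Fin 16) :=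
  ⟨![12, 3, 13, 6, 9, 2, 0, 1, 7, 5, 8, 14, 10, 11, 15, 4], ![6, 7, 5, 1, 15, 9, 3, 8, 10, 4, 12, 13, 0, 2, 11, 14], by decide, by decide⟩

private def p9_3 : Equiv.Perm (Fin 16) :=
  ⟨![5, 2, 4, 9, 7, 11, 10, 12, 15, 1, 13, 6, 14, 8, 3, 0], ![15, 9, 1, 14, 2, 0, 11, 4, 13, 3, 6, 5, 7, 10, 12, 8], by decide, by decide⟩

private def p9_4 : Equiv.Perm (Fin 16) :=
  ⟨![4, 13, 14, 0, 11, 7, 3, 2, 10, 6, 5, 1, 15, 9, 12, 8], ![3, 11, 7, 6, 0, 10, 9, 5, 15, 13, 8, 4, 14, 1, 2, 12], by decide, by decide⟩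

private def p9_5 : Equiv.Perm (Fin 16) :=
  ⟨![15, 6, 7, 12, 13, 1, 4, 11, 0, 14, 9, 3, 8, 10, 5, 2], ![8, 5, 15, 11, 6, 14, 1, 2, 12, 10, 13, 7, 3, 4, 9, 0], by decide, by decide⟩

private def p9_6 : Equiv.Perm (Fin 16) :=
  ⟨![6, 0, 8, 4, 15, 13, 7, 5, 1, 12, 3, 10, 11, 2, 9, 14], ![1, 8, 13, 10, 3, 7, 0, 6, 2, 14, 11, 12, 9, 5, 15, 4], by decide, by decide⟩

private def p9_7 : Equiv.Perm (Fin 16) :=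
  ⟨![14, 10, 3, 13, 1, 4, 5, 8, 12, 7, 2, 15, 0, 6, 11, 9], ![12, 4, 10, 2, 5, 6, 13, 9, 7, 15, 1, 14, 8, 3, 0, 11], by decide, by decide⟩

private def p9_8 : Equiv.Perm (Fin 16) :=
  ⟨![11, 5, 9, 8, 10, 12, 14, 15, 13, 4, 6, 2, 7, 1, 0, 3], ![14, 13, 11, 15, 9, 1, 10, 12, 3, 2, 4, 0, 5, 8, 6, 7], by decide, by decide⟩

private def p9_9 : Equiv.Perm (Fin 16) :=
  ⟨![1, 14, 10, 7, 3, 8, 9, 6, 11, 15, 4, 13, 5, 0, 2, 12], ![13, 0, 14, 4, 10, 12, 7, 3, 5, 6, 2, 8, 15, 11, 1, 9], by decide, by decide⟩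

private def p9_10 : Equiv.Perm (Fin 16) :=
  ⟨![13, 9, 15, 11, 6, 3, 1, 0, 4, 10, 14, 8, 2, 12, 7, 5], ![7, 6, 12, 5, 8, 15, 4, 14, 11, 1, 9, 3, 13, 0, 10, 2], by decide, by decide⟩

private def p9_11 : Equiv.Perm (Fin 16) :=
  ⟨![7, 11, 6, 2, 8, 14, 15, 9, 5, 3, 0, 12, 13, 4, 10, 1], ![10, 15, 3, 9, 13, 8, 2, 0, 4, 7, 14, 1, 11, 12, 5, 6], by decide, by decide⟩

private def p9_12 : Equiv.Perm (Fin 16) :=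
  ⟨![8, 7, 12, 10, 5, 9, 11, 14, 2, 0, 1, 4, 3, 15, 13, 6], ![9, 10, 8, 12, 11, 4, 15, 1, 0, 5, 3, 6, 2, 14, 7, 13], by decide, by decide⟩

private def p9_13 : Equiv.Perm (Fin 16) :=
  ⟨![3, 12, 1, 15, 14, 0, 13, 10, 6, 2, 11, 9, 4, 5, 8, 7], ![5, 2, 9, 0, 12, 13, 8, 15, 14, 11, 7, 10, 1, 6, 4, 3], by decide, by decide⟩

private def p9_14 : Equiv.Perm (Fin 16) :=
  ⟨![10, 4, 0, 14, 2, 15, 8, 3, 9, 11, 12, 5, 6, 7, 1, 13], ![2, 14, 4, 7, 1, 11, 12, 13, 6, 8, 0, 9, 10, 15, 3, 5], by decide, by decide⟩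

private def sol9 : Fin 15 → Equiv.Perm (Fin 16) :=
  ![p9_0, p9_1, p9_2, p9_3, p9_4, p9_5, p9_6, p9_7, p9_8, p9_9, p9_10, p9_11, p9_12, p9_13, p9_14]

private def p10_0 : Equiv.Perm (Fin 16) :=
  ⟨![13, 9, 10, 8, 3, 1, 0, 2, 5, 14, 15, 6, 4, 7, 12, 11], ![6, 5, 7, 4, 12, 8, 11, 13, 3, 1, 2, 15, 14, 0, 9, 10], by decide, by decide⟩

private def p10_1 : Equiv.Perm (Fin 16) :=
  ⟨![8, 7, 15, 6, 10, 0, 14, 13, 11, 2, 1, 12, 3, 9, 5, 4], ![5, 10, 9, 12, 15, 14, 3, 1, 0, 13, 4, 8, 11, 7, 6, 2], by decide, by decide⟩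

private def p10_2 : Equiv.Perm (Fin 16) :=
  ⟨![15, 10, 13, 5, 9, 14, 3, 1, 6, 11, 8, 0, 2, 4, 7, 12], ![11, 7, 12, 6, 13, 3, 8, 14, 10, 4, 1, 9, 15, 2, 5, 0], by decide, by decide⟩

private def p10_3 : Equiv.Perm (Fin 16) :=
  ⟨![14, 11, 9, 15, 13, 6, 2, 12, 3, 7, 4, 5, 1, 0, 8, 10], ![13, 12, 6, 8, 10, 11, 5, 9, 14, 2, 15, 1, 7, 4, 0, 3], by decide, by decide⟩

private def p10_4 : Equiv.Perm (Fin 16) :=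
  ⟨![4, 3, 14, 2, 15, 11, 10, 6, 7, 0, 5, 13, 8, 12, 9, 1], ![9, 15, 3, 1, 0, 10, 7, 8, 12, 14, 6, 5, 13, 11, 2, 4], by decide, by decide⟩

private def p10_5 : Equiv.Perm (Fin 16) :=
  ⟨![3, 13, 6, 11, 8, 7, 12, 10, 14, 4, 9, 1, 0, 2, 15, 5], ![12, 11, 13, 0, 9, 15, 2, 5, 4, 10, 7, 3, 6, 1, 8, 14], by decide, by decide⟩

private def p10_6 : Equiv.Perm (Fin 16) :=
  ⟨![2, 5, 7, 13, 0, 10, 4, 9, 1, 12, 11, 3, 14, 15, 6, 8], ![4, 8, 0, 11, 6, 1, 14, 2, 15, 7, 5, 10, 9, 3, 12, 13], by decide, by decide⟩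

private def p10_7 : Equiv.Perm (Fin 16) :=
  ⟨![12, 0, 11, 14, 1, 4, 8, 15, 13, 5, 6, 10, 7, 3, 2, 9], ![1, 4, 14, 13, 5, 9, 10, 12, 6, 15, 11, 2, 0, 8, 3, 7], by decide, by decide⟩

private def p10_8 : Equiv.Perm (Fin 16) :=
  ⟨![11, 4, 0, 7, 12, 2, 5, 14, 9, 15, 3, 8, 10, 1, 13, 6], ![2, 13, 5, 10, 1, 6, 15, 3, 11, 8, 12, 0, 4, 14, 7, 9], by decide, by decide⟩

private def p10_9 : Equiv.Perm (Fin 16) :=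
  ⟨![6, 15, 4, 12, 14, 13, 1, 11, 0, 8, 2, 9, 5, 10, 3, 7], ![8, 6, 10, 14, 2, 12, 0, 15, 9, 11, 13, 7, 3, 5, 4, 1], by decide, by decide⟩

private def p10_10 : Equiv.Perm (Fin 16) :=
  ⟨![9, 12, 5, 4, 11, 8, 15, 0, 10, 3, 7, 14, 13, 6, 1, 2], ![7, 14, 15, 9, 3, 2, 13, 10, 5, 0, 8, 4, 1, 12, 11, 6], by decide, by decide⟩

private def p10_11 : Equiv.Perm (Fin 16) :=
  ⟨![7, 6, 1, 0, 2, 9, 13, 5, 12, 10, 14, 15, 11, 8, 4, 3], ![3, 2, 4, 15, 14, 7, 1, 0, 13, 5, 9, 12, 8, 6, 10, 11], by decide, by decide⟩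

private def p10_12 : Equiv.Perm (Fin 16) :=
  ⟨![1, 14, 8, 9, 7, 15, 11, 3, 4, 13, 12, 2, 6, 5, 10, 0], ![15, 0, 11, 7, 8, 13, 12, 4, 2, 3, 14, 6, 10, 9, 1, 5], by decide, by decide⟩

private def p10_13 : Equiv.Perm (Fin 16) :=
  ⟨![10, 2, 12, 1, 5, 3, 7, 8, 15, 6, 13, 4, 9, 11, 0, 14], ![14, 3, 1, 5, 11, 4, 9, 6, 7, 12, 0, 13, 2, 10, 15, 8], by decide, by decide⟩

private def p10_14 : Equiv.Perm (Fin 16) :=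
  ⟨![5, 8, 3, 10, 6, 12, 9, 4, 2, 1, 0, 7, 15, 14, 11, 13], ![10, 9, 8, 2, 7, 0, 4, 11, 1, 6, 3, 14, 5, 15, 13, 12], by decide, by decide⟩

private def sol10 : Fin 15 → Equiv.Perm (Fin 16) :=
  ![p10_0, p10_1, p10_2, p10_3, p10_4, p10_5, p10_6, p10_7, p10_8, p10_9, p10_10, p10_11, p10_12, p10_13, p10_14]

private def p11_0 : Equiv.Perm (Fin 16) :=
  ⟨![5, 12, 8, 6, 0, 13, 1, 14, 11, 2, 15, 3, 9, 7, 10, 4], ![4, 6, 9, 11, 15, 0, 3, 13, 2, 12, 14, 8, 1, 5, 7, 10], by decide, by decide⟩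

private def p11_1 : Equiv.Perm (Fin 16) :=
  ⟨![14, 7, 13, 9, 8, 11, 5, 0, 12, 10, 1, 4, 2, 6, 15, 3], ![7, 10, 12, 15, 11, 6, 13, 1, 4, 3, 9, 5, 8, 2, 0, 14], by decide, by decide⟩

private def p11_2 : Equiv.Perm (Fin 16) :=
  ⟨![10, 11, 7, 1, 6, 14, 0, 12, 4, 8, 5, 2, 15, 3, 9, 13], ![6, 3, 11, 13, 8, 10, 4, 2, 9, 14, 0, 1, 7, 15, 5, 12], by decide, by decide⟩

private def p11_3 : Equiv.Perm (Fin 16) :=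
  ⟨![4, 0, 6, 12, 13, 2, 8, 3, 7, 15, 9, 5, 11, 10, 1, 14], ![1, 14, 5, 7, 0, 11, 2, 8, 6, 10, 13, 12, 3, 4, 15, 9], by decide, by decide⟩

private def p11_4 : Equiv.Perm (Fin 16) :=
  ⟨![1, 13, 15, 7, 2, 8, 12, 6, 0, 3, 14, 9, 10, 4, 11, 5], ![8, 0, 4, 9, 13, 15, 7, 3, 5, 11, 12, 14, 6, 1, 10, 2], by decide, by decide⟩

private def p11_5 : Equiv.Perm (Fin 16) :=
  ⟨![2, 8, 14, 4, 1, 15, 9, 11, 13, 5, 6, 10, 7, 0, 3, 12], ![13, 4, 0, 14, 3, 9, 10, 12, 1, 6, 11, 7, 15, 8, 2, 5], by decide, by decide⟩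

private def p11_6 : Equiv.Perm (Fin 16) :=
  ⟨![6, 10, 0, 5, 9, 7, 4, 15, 3, 12, 2, 13, 1, 14, 8, 11], ![2, 12, 10, 8, 6, 3, 0, 5, 14, 4, 1, 15, 9, 11, 13, 7], by decide, by decide⟩

private def p11_7 : Equiv.Perm (Fin 16) :=
  ⟨![8, 15, 4, 14, 3, 1, 10, 2, 5, 13, 7, 0, 6, 11, 12, 9], ![11, 5, 7, 4, 2, 8, 12, 10, 0, 15, 6, 13, 14, 9, 3, 1], by decide, by decide⟩

private def p11_8 : Equiv.Perm (Fin 16) :=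
  ⟨![12, 3, 1, 10, 7, 9, 13, 8, 14, 11, 4, 6, 5, 15, 2, 0], ![15, 2, 14, 1, 10, 12, 11, 4, 7, 5, 3, 9, 0, 6, 8, 13], by decide, by decide⟩

private def p11_9 : Equiv.Perm (Fin 16) :=
  ⟨![7, 5, 10, 13, 15, 0, 11, 9, 6, 14, 8, 12, 3, 2, 4, 1], ![5, 15, 13, 12, 14, 1, 8, 0, 10, 7, 2, 6, 11, 3, 9, 4], by decide, by decide⟩

private def p11_10 : Equiv.Perm (Fin 16) :=
  ⟨![9, 6, 11, 15, 14, 3, 2, 13, 10, 1, 0, 8, 4, 12, 5, 7], ![10, 9, 6, 5, 12, 14, 1, 15, 11, 0, 8, 2, 13, 7, 4, 3], by decide, by decide⟩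

private def p11_11 : Equiv.Perm (Fin 16) :=
  ⟨![15, 4, 9, 8, 11, 12, 3, 10, 1, 6, 13, 14, 0, 5, 7, 2], ![12, 8, 15, 6, 1, 13, 9, 14, 3, 2, 7, 4, 5, 10, 11, 0], by decide, by decide⟩

private def p11_12 : Equiv.Perm (Fin 16) :=
  ⟨![11, 14, 5, 0, 12, 10, 7, 1, 2, 4, 3, 15, 8, 9, 13, 6], ![3, 7, 8, 10, 9, 2, 15, 6, 12, 13, 5, 0, 4, 14, 1, 11], by decide, by decide⟩

private def p11_13 : Equiv.Perm (Fin 16) :=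
  ⟨![3, 9, 12, 2, 5, 6, 14, 4, 15, 7, 11, 1, 13, 8, 0, 10], ![14, 11, 3, 0, 7, 4, 5, 9, 13, 1, 15, 10, 2, 12, 6, 8], by decide, by decide⟩

private def p11_14 : Equiv.Perm (Fin 16) :=
  ⟨![13, 2, 3, 11, 10, 4, 15, 5, 9, 0, 12, 7, 14, 1, 6, 8], ![9, 13, 1, 2, 5, 7, 14, 11, 15, 8, 4, 3, 10, 0, 12, 6], by decide, by decide⟩

private def sol11 : Fin 15 → Equiv.Perm (Fin 16) :=
  ![p11_0, p11_1, p11_2, p11_3, p11_4, p11_5, p11_6, p11_7, p11_8, p11_9, p11_10, p11_11, p11_12, p11_13, p11_14]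

private def p12_0 : Equiv.Perm (Fin 16) :=
  ⟨![2, 9, 7, 6, 1, 14, 12, 11, 3, 15, 13, 5, 4, 0, 10, 8], ![13, 4, 0, 8, 12, 11, 3, 2, 15, 1, 14, 7, 6, 10, 5, 9], by decide, by decide⟩

private def p12_1 : Equiv.Perm (Fin 16) :=
  ⟨![7, 14, 8, 10, 0, 13, 4, 15, 11, 3, 6, 1, 2, 12, 5, 9], ![4, 11, 12, 9, 6, 14, 10, 0, 2, 15, 3, 8, 13, 5, 1, 7], by decide, by decide⟩

private def p12_2 : Equiv.Perm (Fin 16) :=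
  ⟨![11, 8, 0, 1, 7, 4, 9, 10, 2, 12, 15, 13, 5, 14, 3, 6], ![2, 3, 8, 14, 5, 12, 15, 4, 1, 6, 7, 0, 9, 11, 13, 10], by decide, by decide⟩

private def p12_3 : Equiv.Perm (Fin 16) :=
  ⟨![3, 10, 15, 7, 11, 12, 5, 1, 14, 2, 9, 6, 13, 8, 4, 0], ![15, 7, 9, 0, 14, 6, 11, 3, 13, 10, 1, 4, 5, 12, 8, 2], by decide, by decide⟩

private def p12_4 : Equiv.Perm (Fin 16) :=
  ⟨![12, 4, 9, 0, 3, 11, 1, 8, 5, 13, 14, 15, 10, 7, 6, 2], ![3, 6, 15, 4, 1, 8, 14, 13, 7, 2, 12, 5, 0, 9, 10, 11], by decide, by decide⟩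

private def p12_5 : Equiv.Perm (Fin 16) :=
  ⟨![6, 3, 11, 5, 2, 8, 7, 13, 0, 4, 12, 14, 9, 1, 15, 10], ![8, 13, 4, 1, 9, 3, 0, 6, 5, 12, 15, 2, 10, 7, 11, 14], by decide, by decide⟩

private def p12_6 : Equiv.Perm (Fin 16) :=
  ⟨![5, 0, 13, 11, 10, 6, 3, 12, 15, 7, 1, 4, 8, 9, 2, 14], ![1, 10, 14, 6, 11, 0, 5, 9, 12, 13, 4, 3, 7, 2, 15, 8], by decide, by decide⟩

private def p12_7 : Equiv.Perm (Fin 16) :=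
  ⟨![14, 13, 1, 12, 9, 15, 8, 5, 10, 11, 2, 0, 6, 3, 7, 4], ![11, 2, 10, 13, 15, 7, 12, 14, 6, 4, 8, 9, 3, 1, 0, 5], by decide, by decide⟩

private def p12_8 : Equiv.Perm (Fin 16) :=
  ⟨![15, 2, 6, 14, 12, 3, 10, 0, 7, 1, 4, 9, 11, 5, 8, 13], ![7, 9, 1, 5, 10, 13, 2, 8, 14, 11, 6, 12, 4, 15, 3, 0], by decide, by decide⟩

private def p12_9 : Equiv.Perm (Fin 16) :=
  ⟨![8, 15, 5, 4, 6, 1, 14, 3, 13, 10, 11, 7, 0, 2, 9, 12], ![12, 5, 13, 7, 3, 2, 4, 11, 0, 14, 9, 10, 15, 8, 6, 1], by decide, by decide⟩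

private def p12_10 : Equiv.Perm (Fin 16) :=
  ⟨![13, 7, 10, 9, 5, 0, 15, 14, 4, 6, 8, 2, 3, 11, 12, 1], ![5, 15, 11, 12, 8, 4, 9, 1, 10, 3, 2, 13, 14, 0, 7, 6], by decide, by decide⟩

private def p12_11 : Equiv.Perm (Fin 16) :=
  ⟨![9, 12, 3, 8, 15, 7, 2, 4, 1, 5, 0, 10, 14, 6, 13, 11], ![10, 8, 6, 2, 7, 9, 13, 5, 3, 0, 11, 15, 1, 14, 12, 4], by decide, by decide⟩

private def p12_12 : Equiv.Perm (Fin 16) :=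
  ⟨![4, 5, 12, 2, 13, 10, 0, 9, 6, 14, 7, 8, 1, 15, 11, 3], ![6, 12, 3, 15, 0, 1, 8, 10, 11, 7, 5, 14, 2, 4, 9, 13], by decide, by decide⟩

private def p12_13 : Equiv.Perm (Fin 16) :=
  ⟨![1, 6, 4, 13, 14, 9, 11, 2, 12, 8, 5, 3, 15, 10, 0, 7], ![14, 0, 7, 11, 2, 10, 1, 15, 9, 5, 13, 6, 8, 3, 4, 12], by decide, by decide⟩

private def p12_14 : Equiv.Perm (Fin 16) :=
  ⟨![10, 11, 14, 15, 8, 2, 13, 6, 9, 0, 3, 12, 7, 4, 1, 5], ![9, 14, 5, 10, 13, 15, 7, 12, 4, 8, 0, 1, 11, 6, 2, 3], by decide, by decide⟩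

private def sol12 : Fin 15 → Equiv.Perm (Fin 16) :=
  ![p12_0, p12_1, p12_2, p12_3, p12_4, p12_5, p12_6, p12_7, p12_8, p12_9, p12_10, p12_11, p12_12, p12_13, p12_14]

private def p13_0 : Equiv.Perm (Fin 16) :=
  ⟨![10, 12, 6, 11, 0, 1, 15, 13, 3, 5, 8, 7, 2, 4, 9, 14], ![4, 5, 12, 8, 13, 9, 2, 11, 10, 14, 0, 3, 1, 7, 15, 6], by decide, by decide⟩

private def p13_1 : Equiv.Perm (Fin 16) :=
  ⟨![11, 5, 9, 2, 14, 15, 12, 1, 7, 13, 4, 6, 3, 0, 8, 10], ![13, 7, 3, 12, 10, 1, 11, 8, 14, 2, 15, 0, 6, 9, 4, 5], by decide, by decide⟩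

private def p13_2 : Equiv.Perm (Fin 16) :=
  ⟨![9, 6, 10, 14, 7, 8, 11, 2, 0, 4, 5, 15, 13, 1, 12, 3], ![8, 13, 7, 15, 9, 10, 1, 4, 5, 0, 2, 6, 14, 12, 3, 11], by decide, by decide⟩

private def p13_3 : Equiv.Perm (Fin 16) :=
  ⟨![2, 15, 1, 12, 10, 9, 7, 14, 4, 8, 13, 0, 5, 3, 11, 6], ![11, 2, 0, 13, 8, 12, 15, 6, 9, 5, 4, 14, 3, 10, 7, 1], by decide, by decide⟩

private def p13_4 : Equiv.Perm (Fin 16) :=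
  ⟨![7, 0, 13, 15, 3, 4, 14, 5, 9, 10, 12, 1, 6, 8, 2, 11], ![1, 11, 14, 4, 5, 7, 12, 0, 13, 8, 9, 15, 10, 2, 6, 3], by decide, by decide⟩

private def p13_5 : Equiv.Perm (Fin 16) :=
  ⟨![8, 4, 12, 13, 2, 14, 1, 9, 11, 15, 3, 5, 10, 6, 7, 0], ![15, 6, 4, 10, 1, 11, 13, 14, 0, 7, 12, 8, 2, 3, 5, 9], by decide, by decide⟩

private def p13_6 : Equiv.Perm (Fin 16) :=
  ⟨![15, 9, 4, 5, 1, 2, 0, 3, 10, 12, 14, 8, 7, 11, 6, 13], ![6, 4, 5, 7, 2, 3, 14, 12, 11, 1, 8, 13, 9, 15, 10, 0], by decide, by decide⟩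

private def p13_7 : Equiv.Perm (Fin 16) :=
  ⟨![4, 2, 11, 0, 5, 6, 8, 12, 13, 7, 15, 10, 1, 14, 3, 9], ![3, 12, 1, 14, 0, 4, 5, 9, 6, 15, 11, 2, 7, 8, 13, 10], by decide, by decide⟩

private def p13_8 : Equiv.Perm (Fin 16) :=
  ⟨![12, 13, 3, 1, 15, 11, 5, 10, 14, 6, 0, 2, 8, 9, 4, 7], ![10, 3, 11, 2, 14, 6, 9, 15, 12, 13, 7, 5, 0, 1, 8, 4], by decide, by decide⟩

private def p13_9 : Equiv.Perm (Fin 16) :=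
  ⟨![14, 8, 15, 7, 6, 10, 13, 0, 12, 3, 11, 9, 4, 2, 5, 1], ![7, 15, 13, 9, 12, 14, 4, 3, 1, 11, 5, 10, 8, 6, 0, 2], by decide, by decide⟩

private def p13_10 : Equiv.Perm (Fin 16) :=
  ⟨![3, 7, 0, 4, 13, 12, 9, 15, 5, 2, 6, 14, 11, 10, 1, 8], ![2, 14, 9, 0, 3, 8, 10, 1, 15, 6, 13, 12, 5, 4, 11, 7], by decide, by decide⟩

private def p13_11 : Equiv.Perm (Fin 16) :=
  ⟨![13, 14, 7, 9, 12, 3, 10, 8, 6, 11, 1, 4, 0, 5, 15, 2], ![12, 10, 15, 5, 11, 13, 8, 2, 7, 3, 6, 9, 4, 0, 1, 14], by decide, by decide⟩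

private def p13_12 : Equiv.Perm (Fin 16) :=
  ⟨![6, 3, 8, 10, 11, 7, 2, 4, 1, 0, 9, 12, 14, 15, 13, 5], ![9, 8, 6, 1, 7, 15, 0, 5, 2, 10, 3, 4, 11, 14, 12, 13], by decide, by decide⟩

private def p13_13 : Equiv.Perm (Fin 16) :=
  ⟨![1, 11, 5, 8, 9, 0, 3, 6, 2, 14, 7, 13, 15, 12, 10, 4], ![5, 0, 8, 6, 15, 2, 7, 10, 3, 4, 14, 1, 13, 11, 9, 12], by decide, by decide⟩

private def p13_14 : Equiv.Perm (Fin 16) :=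
  ⟨![5, 10, 14, 6, 8, 13, 4, 11, 15, 1, 2, 3, 9, 7, 0, 12], ![14, 9, 10, 11, 6, 0, 3, 13, 4, 12, 1, 7, 15, 5, 2, 8], by decide, by decide⟩

private def sol13 : Fin 15 → Equiv.Perm (Fin 16) :=
  ![p13_0, p13_1, p13_2, p13_3, p13_4, p13_5, p13_6, p13_7, p13_8, p13_9, p13_10, p13_11, p13_12, p13_13, p13_14]

private def p14_0 : Equiv.Perm (Fin 16) :=
  ⟨![13, 12, 9, 2, 5, 14, 3, 15, 7, 0, 11, 6, 4, 10, 8, 1], ![9, 15, 3, 6, 12, 4, 11, 8, 14, 2, 13, 10, 1, 0, 5, 7], by decide, by decide⟩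

private def p14_1 : Equiv.Perm (Fin 16) :=
  ⟨![15, 13, 1, 5, 10, 7, 4, 14, 6, 12, 0, 3, 8, 11, 2, 9], ![10, 2, 14, 11, 6, 3, 8, 5, 12, 15, 4, 13, 9, 1, 7, 0], by decide, by decide⟩

private def p14_2 : Equiv.Perm (Fin 16) :=
  ⟨![14, 7, 11, 9, 6, 13, 1, 12, 4, 2, 15, 0, 10, 3, 5, 8], ![11, 6, 9, 13, 8, 14, 4, 1, 15, 3, 12, 2, 7, 5, 0, 10], by decide, by decide⟩

private def p14_3 : Equiv.Perm (Fin 16) :=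
  ⟨![10, 14, 5, 4, 0, 1, 13, 8, 9, 6, 2, 7, 11, 15, 3, 12], ![4, 5, 10, 14, 3, 2, 9, 11, 7, 8, 0, 12, 15, 6, 1, 13], by decide, by decide⟩

private def p14_4 : Equiv.Perm (Fin 16) :=
  ⟨![9, 11, 6, 0, 15, 3, 7, 1, 14, 10, 4, 8, 2, 5, 12, 13], ![3, 7, 12, 5, 10, 13, 2, 6, 11, 0, 9, 1, 14, 15, 8, 4], by decide, by decide⟩

private def p14_5 : Equiv.Perm (Fin 16) :=
  ⟨![1, 2, 3, 11, 13, 0, 15, 4, 12, 5, 8, 14, 7, 6, 9, 10], ![5, 0, 1, 2, 7, 9, 13, 12, 10, 14, 15, 3, 8, 4, 11, 6], by decide, by decide⟩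

private def p14_6 : Equiv.Perm (Fin 16) :=
  ⟨![5, 6, 13, 15, 7, 10, 8, 3, 2, 4, 1, 12, 9, 0, 11, 14], ![13, 10, 8, 7, 9, 0, 1, 4, 6, 12, 5, 14, 11, 2, 15, 3], by decide, by decide⟩

private def p14_7 : Equiv.Perm (Fin 16) :=
  ⟨![4, 10, 7, 8, 1, 6, 14, 9, 11, 13, 5, 2, 3, 12, 15, 0], ![15, 4, 11, 12, 0, 10, 5, 2, 3, 7, 1, 8, 13, 9, 6, 14], by decide, by decide⟩

private def p14_8 : Equiv.Perm (Fin 16) :=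
  ⟨![11, 5, 8, 13, 3, 15, 0, 6, 10, 1, 12, 9, 14, 2, 4, 7], ![6, 9, 13, 4, 14, 1, 7, 15, 2, 11, 8, 0, 10, 3, 12, 5], by decide, by decide⟩

private def p14_9 : Equiv.Perm (Fin 16) :=
  ⟨![2, 3, 12, 14, 8, 11, 9, 10, 13, 15, 6, 1, 5, 7, 0, 4], ![14, 11, 0, 1, 15, 12, 10, 13, 4, 6, 7, 5, 2, 8, 3, 9], by decide, by decide⟩

private def p14_10 : Equiv.Perm (Fin 16) :=
  ⟨![8, 4, 0, 10, 9, 12, 2, 13, 15, 3, 14, 5, 6, 1, 7, 11], ![2, 13, 6, 9, 1, 11, 12, 14, 0, 4, 3, 15, 5, 7, 10, 8], by decide, by decide⟩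

private def p14_11 : Equiv.Perm (Fin 16) :=
  ⟨![7, 0, 4, 6, 11, 9, 12, 5, 1, 14, 3, 10, 15, 8, 13, 2], ![1, 8, 15, 10, 2, 7, 3, 0, 13, 5, 11, 4, 6, 14, 9, 12], by decide, by decide⟩

private def p14_12 : Equiv.Perm (Fin 16) :=
  ⟨![12, 15, 14, 7, 2, 8, 10, 0, 3, 11, 13, 4, 1, 9, 6, 5], ![7, 12, 4, 8, 11, 15, 14, 3, 5, 13, 6, 9, 0, 10, 2, 1], by decide, by decide⟩

private def p14_13 : Equiv.Perm (Fin 16) :=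
  ⟨![3, 8, 10, 12, 14, 2, 5, 11, 0, 7, 9, 15, 13, 4, 1, 6], ![8, 14, 5, 0, 13, 6, 15, 9, 1, 10, 2, 7, 3, 12, 4, 11], by decide, by decide⟩

private def p14_14 : Equiv.Perm (Fin 16) :=
  ⟨![6, 9, 15, 1, 12, 4, 11, 2, 5, 8, 7, 13, 0, 14, 10, 3], ![12, 3, 7, 15, 5, 8, 0, 10, 9, 1, 14, 6, 4, 11, 13, 2], by decide, by decide⟩

private def sol14 : Fin 15 → Equiv.Perm (Fin 16) :=
  ![p14_0, p14_1, p14_2, p14_3, p14_4, p14_5, p14_6, p14_7, p14_8, p14_9, p14_10, p14_11, p14_12, p14_13, p14_14]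

private def p15_0 : Equiv.Perm (Fin 16) :=
  ⟨![4, 14, 5, 13, 7, 3, 10, 15, 9, 12, 2, 0, 11, 1, 6, 8], ![11, 13, 10, 5, 0, 2, 14, 4, 15, 8, 6, 12, 9, 3, 1, 7], by decide, by decide⟩

private def p15_1 : Equiv.Perm (Fin 16) :=
  ⟨![12, 9, 7, 14, 11, 15, 4, 10, 0, 13, 5, 2, 1, 3, 8, 6], ![8, 12, 11, 13, 6, 10, 15, 2, 14, 1, 7, 4, 0, 9, 3, 5], by decide, by decide⟩

private def p15_2 : Equiv.Perm (Fin 16) :=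
  ⟨![11, 4, 1, 8, 13, 6, 2, 14, 7, 3, 9, 5, 15, 0, 12, 10], ![13, 2, 6, 9, 1, 11, 5, 8, 3, 10, 15, 0, 14, 4, 7, 12], by decide, by decide⟩

private def p15_3 : Equiv.Perm (Fin 16) :=
  ⟨![15, 10, 12, 4, 1, 9, 7, 3, 11, 14, 8, 6, 0, 2, 13, 5], ![12, 4, 13, 7, 3, 15, 11, 6, 10, 5, 1, 8, 2, 14, 9, 0], by decide, by decide⟩

private def p15_4 : Equiv.Perm (Fin 16) :=
  ⟨![9, 7, 11, 12, 14, 8, 15, 0, 6, 2, 13, 4, 10, 5, 1, 3], ![7, 14, 9, 15, 11, 13, 8, 1, 5, 0, 12, 2, 3, 10, 4, 6], by decide, by decide⟩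

private def p15_5 : Equiv.Perm (Fin 16) :=
  ⟨![1, 3, 15, 6, 9, 10, 11, 8, 2, 0, 7, 14, 5, 12, 4, 13], ![9, 0, 8, 1, 14, 12, 3, 10, 7, 4, 5, 6, 13, 15, 11, 2], by decide, by decide⟩

private def p15_6 : Equiv.Perm (Fin 16) :=
  ⟨![14, 13, 6, 1, 0, 11, 12, 2, 3, 10, 4, 15, 8, 7, 5, 9], ![4, 3, 7, 8, 10, 14, 2, 13, 12, 15, 9, 5, 6, 1, 0, 11], by decide, by decide⟩

private def p15_7 : Equiv.Perm (Fin 16) :=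
  ⟨![6, 0, 14, 11, 12, 2, 9, 13, 5, 4, 15, 1, 3, 8, 10, 7], ![1, 11, 5, 12, 9, 8, 0, 15, 13, 6, 14, 3, 4, 7, 2, 10], by decide, by decide⟩

private def p15_8 : Equiv.Perm (Fin 16) :=
  ⟨![5, 11, 8, 15, 2, 7, 13, 12, 14, 6, 3, 9, 4, 10, 0, 1], ![14, 15, 4, 10, 12, 0, 9, 5, 2, 11, 13, 1, 7, 6, 8, 3], by decide, by decide⟩

private def p15_9 : Equiv.Perm (Fin 16) :=
  ⟨![2, 8, 13, 9, 6, 14, 1, 5, 10, 15, 0, 12, 7, 4, 3, 11], ![10, 6, 0, 14, 13, 7, 4, 12, 1, 3, 8, 15, 11, 2, 5, 9], by decide, by decide⟩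

private def p15_10 : Equiv.Perm (Fin 16) :=
  ⟨![7, 15, 0, 5, 3, 13, 14, 6, 1, 8, 12, 10, 2, 9, 11, 4], ![2, 8, 12, 4, 15, 3, 7, 0, 9, 13, 11, 14, 10, 5, 6, 1], by decide, by decide⟩

private def p15_11 : Equiv.Perm (Fin 16) :=
  ⟨![10, 6, 9, 7, 8, 1, 0, 4, 15, 5, 14, 3, 13, 11, 2, 12], ![6, 5, 14, 11, 7, 9, 1, 3, 4, 2, 0, 13, 15, 12, 10, 8], by decide, by decide⟩

private def p15_12 : Equiv.Perm (Fin 16) :=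
  ⟨![13, 2, 3, 0, 10, 12, 5, 1, 4, 11, 6, 8, 9, 15, 7, 14], ![3, 7, 1, 2, 8, 6, 10, 14, 11, 12, 4, 9, 5, 0, 15, 13], by decide, by decide⟩

private def p15_13 : Equiv.Perm (Fin 16) :=
  ⟨![8, 12, 4, 10, 5, 0, 3, 9, 13, 1, 11, 7, 6, 14, 15, 2], ![5, 9, 15, 6, 2, 4, 12, 11, 0, 7, 3, 10, 1, 8, 13, 14], by decide, by decide⟩

private def p15_14 : Equiv.Perm (Fin 16) :=
  ⟨![3, 5, 10, 2, 15, 4, 8, 11, 12, 7, 1, 13, 14, 6, 9, 0], ![15, 10, 3, 0, 5, 1, 13, 9, 6, 14, 2, 7, 8, 11, 12, 4], by decide, by decide⟩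

private def sol15 : Fin 15 → Equiv.Perm (Fin 16) :=
  ![p15_0, p15_1, p15_2, p15_3, p15_4, p15_5, p15_6, p15_7, p15_8, p15_9, p15_10, p15_11, p15_12, p15_13, p15_14]

/-- HWP*(16; 8^r, 16^s) has a solution if and only if r + s = 15. -/
theorem hwpStar_16_8_16 (r s : ℕ) :
    HWPStarSolution 16 8 16 r s ↔ r + s = 15 := by
  constructor
  · exact hwp_forward
  · intro h
    have hr : r ≤ 15 := by omega
    obtain rfl : s = 15 - r := by omega
    interval_cases r

    · exact hwp_aux sol0 (by decide) (by decide) (by decide)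
    · exact hwp_aux sol1 (by decide) (by decide) (by decide)
    · exact hwp_aux sol2 (by decide) (by decide) (by decide)
    · exact hwp_aux sol3 (by decide) (by decide) (by decide)
    · exact hwp_aux sol4 (by decide) (by decide) (by decide)
    · exact hwp_aux sol5 (by decide) (by decide) (by decide)
    · exact hwp_aux sol6 (by decide) (by decide) (by decide)
    · exact hwp_aux sol7 (by decide) (by decide) (by decide)
    · exact hwp_aux sol8 (by decide) (by decide) (by decide)
    · exact hwp_aux sol9 (by decide) (by decide) (by decide)
    · exact hwp_aux sol10 (by decide) (by decide) (by decide)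
    · exact hwp_aux sol11 (by decide) (by decide) (by decide)
    · exact hwp_aux sol12 (by decide) (by decide) (by decide)
    · exact hwp_aux sol13 (by decide) (by decide) (by decide)
    · exact hwp_aux sol14 (by decide) (by decide) (by decide)
    · exact hwp_aux sol15 (by decide) (by decide) (by decide)
end
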